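/- arXiv:2001.07201 — 7 statements merged into one kernel-verified Lean document; each statement's English description precedes it below -/
import Mathlib

section
/- Let v₁, v₂, v₃, v₄ ∈ ℝ³ be nonzero vectors such that every three of them are linearly independent, and let W ⊆ ℝ³ be a 2-dimensional linear subspace containing none of v₁, v₂, v₃, v₄. Then there exists a linear automorphism g : W ≃ W such that g is not a scalar multiple of the identity, g ∘ g is a scalar multiple of the identity, and for every quadratic form Q on ℝ³ with Q(v₁) = Q(v₂) = Q(v₃) = Q(v₄) = 0 and every w ∈ W with Q(w) = 0, one also has Q(g(w)) = 0. -/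
private lemma real_pair (x y : ℂ) (hxy : ¬(x = 0 ∧ y = 0)) (u1 v1 u2 v2 : ℝ)
    (h1 : x * (u1 : ℂ) + y * (v1 : ℂ) = 0) (h2 : x * (u2 : ℂ) + y * (v2 : ℂ) = 0) :
    ∃ s t : ℝ, ¬(s = 0 ∧ t = 0) ∧ s * u1 + t * v1 = 0 ∧ s * u2 + t * v2 = 0 := by
  have e1r : x.re * u1 + y.re * v1 = 0 := by
    have h := congrArg Complex.re h1
    simpa [Complex.add_re, Complex.mul_re] using h
  have e2r : x.re * u2 + y.re * v2 = 0 := by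
    have h := congrArg Complex.re h2
    simpa [Complex.add_re, Complex.mul_re] using h
  have e1i : x.im * u1 + y.im * v1 = 0 := by
    have h := congrArg Complex.im h1
    simpa [Complex.add_im, Complex.mul_im] using h
  have e2i : x.im * u2 + y.im * v2 = 0 := by
    have h := congrArg Complex.im h2
    simpa [Complex.add_im, Complex.mul_im] using h
  by_cases hre : x.re = 0 ∧ y.re = 0
  · refine ⟨x.im, y.im, ?_, e1i, e2i⟩
    rintro ⟨hxi, hyi⟩
    exact hxy ⟨Complex.ext hre.1 hxi, Complex.ext hre.2 hyi⟩
  · exact ⟨x.re, y.re, hre, e1r, e2r⟩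

private lemma common_root_aux (a0 a1 a2 c0 c1 c2 : ℝ) (ha : a0 ≠ 0)
    (hδ : (a0*c2 - a2*c0)^2 - (a0*c1 - a1*c0)*(a1*c2 - a2*c1) = 0) :
    ∃ x y : ℂ, ¬(x = 0 ∧ y = 0) ∧
      (a0 : ℂ) * x^2 + (a1 : ℂ) * (x*y) + (a2 : ℂ) * y^2 = 0 ∧
      (c0 : ℂ) * x^2 + (c1 : ℂ) * (x*y) + (c2 : ℂ) * y^2 = 0 := by
  obtain ⟨d, hd⟩ := Complex.isAlgClosed.exists_pow_nat_eq ((a1 : ℂ)^2 - 4*(a0:ℂ)*(a2:ℂ)) two_pos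
  have hδ' : ((a0:ℂ)*c2 - a2*c0)^2 - ((a0:ℂ)*c1 - a1*c0)*((a1:ℂ)*c2 - a2*c1) = 0 := by
    have := congrArg (fun r : ℝ => (r : ℂ)) hδ
    push_cast at this
    linear_combination this
  have h2a : (2*(a0:ℂ)) ≠ 0 := by
    simp [Complex.ofReal_ne_zero, ha]
  have hfac : ((c0:ℂ)*(-a1+d)^2 + 2*a0*c1*(-a1+d) + 4*a0^2*c2)
      * ((c0:ℂ)*(-(a1:ℂ)-d)^2 + 2*a0*c1*(-(a1:ℂ)-d) + 4*a0^2*c2)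
      = 16*(a0:ℂ)^2*(((a0:ℂ)*c2 - a2*c0)^2 - ((a0:ℂ)*c1 - a1*c0)*((a1:ℂ)*c2 - a2*c1)) := by
    linear_combination ((c0:ℂ)^2*d^2 - (a1:ℂ)^2*c0^2 - 4*(a0:ℂ)*a2*c0^2 + 4*(a0:ℂ)*a1*c0*c1
      - 4*(a0:ℂ)^2*c1^2 + 8*(a0:ℂ)^2*c0*c2) * hd
  rw [hδ', mul_zero] at hfac
  rcases mul_eq_zero.mp hfac with h | h
  · exact ⟨-(a1:ℂ)+d, 2*(a0:ℂ), fun hc => h2a hc.2,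
      by linear_combination (a0:ℂ)*hd, by linear_combination h⟩
  · exact ⟨-(a1:ℂ)-d, 2*(a0:ℂ), fun hc => h2a hc.2,
      by linear_combination (a0:ℂ)*hd, by linear_combination h⟩

private lemma common_root_of_delta_eq_zero (a0 a1 a2 c0 c1 c2 : ℝ)
    (hδ : (a0*c2 - a2*c0)^2 - (a0*c1 - a1*c0)*(a1*c2 - a2*c1) = 0) :
    ∃ x y : ℂ, ¬(x = 0 ∧ y = 0) ∧
      (a0 : ℂ) * x^2 + (a1 : ℂ) * (x*y) + (a2 : ℂ) * y^2 = 0 ∧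
      (c0 : ℂ) * x^2 + (c1 : ℂ) * (x*y) + (c2 : ℂ) * y^2 = 0 := by
  by_cases ha : a0 = 0
  · by_cases hc : c0 = 0
    · refine ⟨1, 0, by simp, ?_, ?_⟩ <;> simp [ha, hc]
    · obtain ⟨x, y, hxy, hC, hA⟩ := common_root_aux c0 c1 c2 a0 a1 a2 hc (by linear_combination hδ)
      exact ⟨x, y, hxy, hA, hC⟩
  · exact common_root_aux a0 a1 a2 c0 c1 c2 ha hδ

private lemma desargues_root_swap (a0 a1 a2 c0 c1 c2 P R x y : ℝ)
    (h : (P*a0+R*c0)*x^2 + (P*a1+R*c1)*(x*y) + (P*a2+R*c2)*y^2 = 0) :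
    (P*a0+R*c0)*(-(a0*c2-a2*c0)*x - (a1*c2-a2*c1)*y)^2
      + (P*a1+R*c1)*((-(a0*c2-a2*c0)*x - (a1*c2-a2*c1)*y)*((a0*c1-a1*c0)*x + (a0*c2-a2*c0)*y))
      + (P*a2+R*c2)*((a0*c1-a1*c0)*x + (a0*c2-a2*c0)*y)^2 = 0 := by
  linear_combination ((a0*c2-a2*c0)^2 - (a0*c1-a1*c0)*(a1*c2-a2*c1)) * h

set_option maxHeartbeats 2000000 in
/-- **Desargues' involution theorem, real projective plane version.**
Given four base points `[v₁], [v₂], [v₃], [v₄]` in general position in the real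
projective plane and a line (2-dimensional subspace `W`) avoiding them, there is
an involution of the line (a linear automorphism `g` of `W`, not a scalar multiple
of the identity, whose square is a scalar multiple of the identity) such that every
conic through the four base points meets the line in a pair of points conjugate
under the involution: if `Q` vanishes at the base points and at `w ∈ W`, then `Q`
also vanishes at `g w`. -/
theorem desargues_involution_real
    (v₁ v₂ v₃ v₄ : Fin 3 → ℝ)
    (hv₁ : v₁ ≠ 0) (hv₂ : v₂ ≠ 0) (hv₃ : v₃ ≠ 0) (hv₄ : v₄ ≠ 0)
    (h123 : LinearIndependent ℝ ![v₁, v₂, v₃])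
    (h124 : LinearIndependent ℝ ![v₁, v₂, v₄])
    (h134 : LinearIndependent ℝ ![v₁, v₃, v₄])
    (h234 : LinearIndependent ℝ ![v₂, v₃, v₄])
    (W : Submodule ℝ (Fin 3 → ℝ)) (hW : Module.finrank ℝ W = 2)
    (hWv₁ : v₁ ∉ W) (hWv₂ : v₂ ∉ W) (hWv₃ : v₃ ∉ W) (hWv₄ : v₄ ∉ W) :
    ∃ g : W ≃ₗ[ℝ] W,
      (¬ ∃ c : ℝ, ∀ w : W, g w = c • w) ∧
      (∃ c : ℝ, ∀ w : W, g (g w) = c • w) ∧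
      (∀ Q : QuadraticForm ℝ (Fin 3 → ℝ),
        Q v₁ = 0 → Q v₂ = 0 → Q v₃ = 0 → Q v₄ = 0 →
        ∀ w : W, Q (w : Fin 3 → ℝ) = 0 → Q ((g w : W) : Fin 3 → ℝ) = 0) := by
  classical
  have hcard : Fintype.card (Fin 3) = Module.finrank ℝ (Fin 3 → ℝ) := by simp
  let bV : Module.Basis (Fin 3) ℝ (Fin 3 → ℝ) := basisOfLinearIndependentOfCardEqFinrank h123 hcard
  have hbV : ⇑bV = ![v₁, v₂, v₃] := coe_basisOfLinearIndependentOfCardEqFinrank _ _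
  set a : ℝ := bV.repr v₄ 0 with had
  set b : ℝ := bV.repr v₄ 1 with hbd
  set c : ℝ := bV.repr v₄ 2 with hcd
  have hv4 : a • v₁ + b • v₂ + c • v₃ = v₄ := by
    have h := bV.sum_repr v₄
    rw [Fin.sum_univ_three, hbV] at h
    simpa using h
  have dep : ∀ (x y z : Fin 3 → ℝ) (s t : ℝ), LinearIndependent ℝ ![x, y, z] →
      s • x + t • y = z → False := by
    intro x y z s t hli heq
    have h := Fintype.linearIndependent_iff.mp hli ![s, t, -1] ?_ 2
    · norm_num [Matrix.cons_val_two, Matrix.tail_cons, Matrix.head_cons] at h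
    · rw [Fin.sum_univ_three]
      simp only [Matrix.cons_val_zero, Matrix.cons_val_one, Matrix.head_cons,
        Matrix.cons_val_two, Matrix.tail_cons, neg_one_smul]
      rw [← heq]
      abel
  have ha0 : a ≠ 0 := by
    intro h0
    exact dep v₂ v₃ v₄ b c h234 (by rw [← hv4, h0, zero_smul, zero_add])
  have hb0 : b ≠ 0 := by
    intro h0
    exact dep v₁ v₃ v₄ a c h134 (by rw [← hv4, h0, zero_smul, add_zero])
  have hc0 : c ≠ 0 := by
    intro h0
    exact dep v₁ v₂ v₄ a b h124 (by rw [← hv4, h0, zero_smul, add_zero])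
  set u₁ : Fin 3 → ℝ := a • v₁ with hu1d
  set u₂ : Fin 3 → ℝ := b • v₂ with hu2d
  set u₃ : Fin 3 → ℝ := c • v₃ with hu3d
  have hv4' : u₁ + (u₂ + u₃) = v₄ := by rw [← add_assoc]; exact hv4
  have hu_li : LinearIndependent ℝ ![u₁, u₂, u₃] := by
    rw [Fintype.linearIndependent_iff]
    intro g hg
    rw [Fin.sum_univ_three] at hg
    simp only [Matrix.cons_val_zero, Matrix.cons_val_one, Matrix.head_cons,
      Matrix.cons_val_two, Matrix.tail_cons] at hg
    have hg' : (g 0 * a) • v₁ + (g 1 * b) • v₂ + (g 2 * c) • v₃ = 0 := by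
      simpa [hu1d, hu2d, hu3d, mul_smul] using hg
    have h := Fintype.linearIndependent_iff.mp h123 ![g 0 * a, g 1 * b, g 2 * c] ?_
    · intro i
      fin_cases i
      · have := h 0; simp only [Matrix.cons_val_zero] at this
        exact (mul_eq_zero.mp this).resolve_right ha0
      · have := h 1; simp only [Matrix.cons_val_one, Matrix.head_cons] at this
        exact (mul_eq_zero.mp this).resolve_right hb0
      · have := h 2
        simp only [Matrix.cons_val_two, Matrix.tail_cons, Matrix.head_cons] at this
        exact (mul_eq_zero.mp this).resolve_right hc0
    · rw [Fin.sum_univ_three]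
      simpa using hg'
  let Bu : Module.Basis (Fin 3) ℝ (Fin 3 → ℝ) := basisOfLinearIndependentOfCardEqFinrank hu_li hcard
  have hbu : ⇑Bu = ![u₁, u₂, u₃] := coe_basisOfLinearIndependentOfCardEqFinrank _ _
  set F : Fin 3 → (Fin 3 → ℝ) → ℝ := fun i v => Bu.repr v i with hF
  have hFlin : ∀ (i : Fin 3) (s t : ℝ) (v w : Fin 3 → ℝ),
      F i (s • v + t • w) = s * F i v + t * F i w := by
    intro i s t v w
    simp [hF]
  have hrec : ∀ v : Fin 3 → ℝ, F 0 v • u₁ + (F 1 v • u₂ + F 2 v • u₃) = v := by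
    intro v
    have h := Bu.sum_repr v
    rw [Fin.sum_univ_three, hbu] at h
    simp only [Matrix.cons_val_zero, Matrix.cons_val_one, Matrix.head_cons,
      Matrix.cons_val_two, Matrix.tail_cons] at h
    rw [← add_assoc]
    exact h
  haveI : FiniteDimensional ℝ W := inferInstance
  let bW : Module.Basis (Fin 2) ℝ W := Module.finBasisOfFinrankEq ℝ W hW
  set p : Fin 3 → ℝ := ((bW 0 : W) : Fin 3 → ℝ) with hpd
  set q : Fin 3 → ℝ := ((bW 1 : W) : Fin 3 → ℝ) with hqd
  have hpW : p ∈ W := (bW 0).2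
  have hqW : q ∈ W := (bW 1).2
  have hbWcoef : ∀ s t : ℝ, s • bW 0 + t • bW 1 = 0 → s = 0 ∧ t = 0 := by
    intro s t h
    have h2 := Fintype.linearIndependent_iff.mp bW.linearIndependent ![s, t] ?_
    · exact ⟨by simpa using h2 0, by simpa using h2 1⟩
    · rw [Fin.sum_univ_two]; simpa using h
  have hbWrep : ∀ w : W, w = bW.repr w 0 • bW 0 + bW.repr w 1 • bW 1 := by
    intro w
    have h := bW.sum_repr w
    rw [Fin.sum_univ_two] at h
    exact h.symm
  have hcoe : ∀ (s t : ℝ), ((s • bW 0 + t • bW 1 : W) : Fin 3 → ℝ) = s • p + t • q := by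
    intro s t
    push_cast
    rw [hpd, hqd]
  set xp : ℝ := F 0 p with hxpd
  set yp : ℝ := F 1 p with hypd
  set zp : ℝ := F 2 p with hzpd
  set xq : ℝ := F 0 q with hxqd
  set yq : ℝ := F 1 q with hyqd
  set zq : ℝ := F 2 q with hzqd
  set a0 : ℝ := xp*yp - xp*zp with ha0d
  set a1 : ℝ := xp*yq + xq*yp - (xp*zq + xq*zp) with ha1d
  set a2 : ℝ := xq*yq - xq*zq with ha2d
  set c0 : ℝ := yp*zp - xp*zp with hc0d
  set c1 : ℝ := yp*zq + yq*zp - (xp*zq + xq*zp) with hc1d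
  set c2 : ℝ := yq*zq - xq*zq with hc2d
  -- helper : a nonzero combination of p and q giving a multiple of a forbidden point
  have hne : ∀ s t : ℝ, ¬(s = 0 ∧ t = 0) → s • p + t • q ≠ 0 := by
    intro s t hst h0
    apply hst
    apply hbWcoef s t
    have h1 : ((s • bW 0 + t • bW 1 : W) : Fin 3 → ℝ) = 0 := by rw [hcoe]; exact h0
    rwa [ZeroMemClass.coe_eq_zero] at h1
  have main_contra : ∀ v : Fin 3 → ℝ, v ∉ W → ∀ k s t : ℝ, ¬(s = 0 ∧ t = 0) →
      s • p + t • q = k • v → False := by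
    intro v hv k s t hst heq
    have hwmem : s • p + t • q ∈ W := W.add_mem (W.smul_mem s hpW) (W.smul_mem t hqW)
    have hk : k ≠ 0 := by
      rintro rfl
      exact hne s t hst (by rw [heq, zero_smul])
    rw [heq] at hwmem
    have hvW : v ∈ W := by
      have h2 := W.smul_mem k⁻¹ hwmem
      rwa [smul_smul, inv_mul_cancel₀ hk, one_smul] at h2
    exact hv hvW
  -- the key nondegeneracy
  have hδ0 : (a0*c2 - a2*c0)^2 - (a0*c1 - a1*c0)*(a1*c2 - a2*c1) ≠ 0 := by
    intro h0
    obtain ⟨x, y, hxy, hA, hC⟩ := common_root_of_delta_eq_zero a0 a1 a2 c0 c1 c2 h0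
    have ca0 : (a0:ℂ) = (xp:ℂ)*(yp:ℂ) - (xp:ℂ)*(zp:ℂ) := by rw [ha0d]; push_cast; ring
    have ca1 : (a1:ℂ) = (xp:ℂ)*(yq:ℂ) + (xq:ℂ)*(yp:ℂ) - ((xp:ℂ)*(zq:ℂ) + (xq:ℂ)*(zp:ℂ)) := by
      rw [ha1d]; push_cast; ring
    have ca2 : (a2:ℂ) = (xq:ℂ)*(yq:ℂ) - (xq:ℂ)*(zq:ℂ) := by rw [ha2d]; push_cast; ring
    have cc0 : (c0:ℂ) = (yp:ℂ)*(zp:ℂ) - (xp:ℂ)*(zp:ℂ) := by rw [hc0d]; push_cast; ring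
    have cc1 : (c1:ℂ) = (yp:ℂ)*(zq:ℂ) + (yq:ℂ)*(zp:ℂ) - ((xp:ℂ)*(zq:ℂ) + (xq:ℂ)*(zp:ℂ)) := by
      rw [hc1d]; push_cast; ring
    have cc2 : (c2:ℂ) = (yq:ℂ)*(zq:ℂ) - (xq:ℂ)*(zq:ℂ) := by rw [hc2d]; push_cast; ring
    have hA' : (x*(xp:ℂ) + y*(xq:ℂ)) * ((x*(yp:ℂ) + y*(yq:ℂ)) - (x*(zp:ℂ) + y*(zq:ℂ))) = 0 := by
      linear_combination hA - x^2*ca0 - x*y*ca1 - y^2*ca2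
    have hC' : (x*(zp:ℂ) + y*(zq:ℂ)) * ((x*(yp:ℂ) + y*(yq:ℂ)) - (x*(xp:ℂ) + y*(xq:ℂ))) = 0 := by
      linear_combination hC - x^2*cc0 - x*y*cc1 - y^2*cc2
    rcases mul_eq_zero.mp hA' with h1 | h1 <;> rcases mul_eq_zero.mp hC' with h2 | h2
    · -- X0 = 0, Z0 = 0 : direction u₂, i.e. v₂
      obtain ⟨s, t, hst, hr1, hr2⟩ := real_pair x y hxy xp xq zp zq h1 h2
      have hF0 : F 0 (s • p + t • q) = 0 := by
        rw [hFlin, ← hxpd, ← hxqd]; exact hr1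
      have hF2 : F 2 (s • p + t • q) = 0 := by
        rw [hFlin, ← hzpd, ← hzqd]; exact hr2
      refine main_contra v₂ hWv₂ (F 1 (s • p + t • q) * b) s t hst ?_
      conv_lhs => rw [← hrec (s • p + t • q)]
      rw [hF0, hF2]
      simp only [zero_smul, zero_add, add_zero]
      rw [hu2d, smul_smul]
    · -- X0 = 0, Y0 - X0 = 0 : direction u₃, i.e. v₃
      have h2' : x*(yp:ℂ) + y*(yq:ℂ) = 0 := by linear_combination h2 + h1
      obtain ⟨s, t, hst, hr1, hr2⟩ := real_pair x y hxy xp xq yp yq h1 h2'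
      have hF0 : F 0 (s • p + t • q) = 0 := by
        rw [hFlin, ← hxpd, ← hxqd]; exact hr1
      have hF1 : F 1 (s • p + t • q) = 0 := by
        rw [hFlin, ← hypd, ← hyqd]; exact hr2
      refine main_contra v₃ hWv₃ (F 2 (s • p + t • q) * c) s t hst ?_
      conv_lhs => rw [← hrec (s • p + t • q)]
      rw [hF0, hF1]
      simp only [zero_smul, zero_add, add_zero]
      rw [hu3d, smul_smul]
    · -- Y0 - Z0 = 0, Z0 = 0 : direction u₁, i.e. v₁
      have h1' : x*(yp:ℂ) + y*(yq:ℂ) = 0 := by linear_combination h1 + h2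
      obtain ⟨s, t, hst, hr1, hr2⟩ := real_pair x y hxy yp yq zp zq h1' h2
      have hF1 : F 1 (s • p + t • q) = 0 := by
        rw [hFlin, ← hypd, ← hyqd]; exact hr1
      have hF2 : F 2 (s • p + t • q) = 0 := by
        rw [hFlin, ← hzpd, ← hzqd]; exact hr2
      refine main_contra v₁ hWv₁ (F 0 (s • p + t • q) * a) s t hst ?_
      conv_lhs => rw [← hrec (s • p + t • q)]
      rw [hF1, hF2]
      simp only [zero_smul, zero_add, add_zero]
      rw [hu1d, smul_smul]
    · -- Y0 = Z0 = X0 : direction v₄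
      have h1' : x*((yp - zp : ℝ):ℂ) + y*((yq - zq : ℝ):ℂ) = 0 := by
        push_cast; linear_combination h1
      have h2' : x*((yp - xp : ℝ):ℂ) + y*((yq - xq : ℝ):ℂ) = 0 := by
        push_cast; linear_combination h2
      obtain ⟨s, t, hst, hr1, hr2⟩ := real_pair x y hxy (yp - zp) (yq - zq) (yp - xp) (yq - xq) h1' h2'
      have e10 : F 1 (s • p + t • q) = F 0 (s • p + t • q) := by
        rw [hFlin, hFlin, ← hxpd, ← hxqd, ← hypd, ← hyqd]
        linear_combination hr2
      have e12 : F 1 (s • p + t • q) = F 2 (s • p + t • q) := by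
        rw [hFlin, hFlin, ← hzpd, ← hzqd, ← hypd, ← hyqd]
        linear_combination hr1
      refine main_contra v₄ hWv₄ (F 0 (s • p + t • q)) s t hst ?_
      conv_lhs => rw [← hrec (s • p + t • q)]
      rw [← e12, e10, ← smul_add, ← smul_add, hv4']
  -- the involution
  set al : ℝ := a0*c1 - a1*c0 with hald
  set be : ℝ := a0*c2 - a2*c0 with hbed
  set ga : ℝ := a1*c2 - a2*c1 with hgad
  have hδne : be^2 - al*ga ≠ 0 := hδ0
  set gmap : W →ₗ[ℝ] W := bW.constr ℝ ![(-be) • bW 0 + al • bW 1, (-ga) • bW 0 + be • bW 1]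
    with hgmapd
  have hg0 : gmap (bW 0) = (-be) • bW 0 + al • bW 1 := by
    rw [hgmapd, Module.Basis.constr_basis]
    simp
  have hg1 : gmap (bW 1) = (-ga) • bW 0 + be • bW 1 := by
    rw [hgmapd, Module.Basis.constr_basis]
    simp
  have hgw : ∀ s t : ℝ, gmap (s • bW 0 + t • bW 1)
      = ((-be)*s - ga*t) • bW 0 + (al*s + be*t) • bW 1 := by
    intro s t
    rw [map_add, map_smul, map_smul, hg0, hg1]
    module
  have hsq0 : ∀ w : W, gmap (gmap w) = (be^2 - al*ga) • w := by
    intro w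
    conv_lhs => rw [hbWrep w, hgw, hgw]
    conv_rhs => rw [hbWrep w]
    module
  have hcomp1 : gmap ∘ₗ ((be^2 - al*ga)⁻¹ • gmap) = LinearMap.id := by
    apply LinearMap.ext; intro w
    simp only [LinearMap.comp_apply, LinearMap.smul_apply, LinearMap.id_apply, map_smul, hsq0,
      smul_smul, inv_mul_cancel₀ hδne, one_smul]
  have hcomp2 : ((be^2 - al*ga)⁻¹ • gmap) ∘ₗ gmap = LinearMap.id := by
    apply LinearMap.ext; intro w
    simp only [LinearMap.comp_apply, LinearMap.smul_apply, LinearMap.id_apply, hsq0,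
      smul_smul, inv_mul_cancel₀ hδne, one_smul]
  refine ⟨LinearEquiv.ofLinear gmap ((be^2 - al*ga)⁻¹ • gmap) hcomp1 hcomp2, ?_, ?_, ?_⟩
  · -- not a scalar multiple of the identity
    rintro ⟨k, hk⟩
    have h0 := hk (bW 0)
    have h1 := hk (bW 1)
    rw [LinearEquiv.ofLinear_apply, hg0] at h0
    rw [LinearEquiv.ofLinear_apply, hg1] at h1
    have e : (-be - k) • bW 0 + al • bW 1 = 0 := by
      calc (-be - k) • bW 0 + al • bW 1
          = ((-be) • bW 0 + al • bW 1) - k • bW 0 := by module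
        _ = k • bW 0 - k • bW 0 := by rw [h0]
        _ = 0 := sub_self _
    have e' : (-ga) • bW 0 + (be - k) • bW 1 = 0 := by
      calc (-ga) • bW 0 + (be - k) • bW 1
          = ((-ga) • bW 0 + be • bW 1) - k • bW 1 := by module
        _ = k • bW 1 - k • bW 1 := by rw [h1]
        _ = 0 := sub_self _
    obtain ⟨e1, e2⟩ := hbWcoef _ _ e
    obtain ⟨e3, e4⟩ := hbWcoef _ _ e'
    have hbe : be = 0 := by linarith
    have hga : ga = 0 := by linarith
    exact hδne (by rw [hbe, e2, hga]; ring)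
  · -- the square is scalar
    refine ⟨be^2 - al*ga, fun w => ?_⟩
    show gmap (gmap w) = _
    exact hsq0 w
  · -- conics through the four points
    intro Q hQ1 hQ2 hQ3 hQ4 w hw
    have hQu₁ : Q u₁ = 0 := by rw [hu1d, QuadraticMap.map_smul, hQ1, smul_zero]
    have hQu₂ : Q u₂ = 0 := by rw [hu2d, QuadraticMap.map_smul, hQ2, smul_zero]
    have hQu₃ : Q u₃ = 0 := by rw [hu3d, QuadraticMap.map_smul, hQ3, smul_zero]
    have hexp : ∀ s t r : ℝ, Q (s • u₁ + (t • u₂ + r • u₃))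
        = (s*t) * QuadraticMap.polar Q u₁ u₂ + (t*r) * QuadraticMap.polar Q u₂ u₃
          + (s*r) * QuadraticMap.polar Q u₁ u₃ := by
      intro s t r
      rw [QuadraticMap.map_add (⇑Q) (s • u₁) (t • u₂ + r • u₃),
        QuadraticMap.map_add (⇑Q) (t • u₂) (r • u₃)]
      rw [QuadraticMap.map_smul Q s u₁, QuadraticMap.map_smul Q t u₂, QuadraticMap.map_smul Q r u₃,
        hQu₁, hQu₂, hQu₃]
      rw [QuadraticMap.polar_add_right]
      simp only [QuadraticMap.polar_smul_left, QuadraticMap.polar_smul_right, smul_eq_mul]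
      ring
    have hsum : QuadraticMap.polar Q u₁ u₂ + QuadraticMap.polar Q u₂ u₃
        + QuadraticMap.polar Q u₁ u₃ = 0 := by
      have h4 := hexp 1 1 1
      simp only [one_smul, one_mul] at h4
      rw [hv4', hQ4] at h4
      linarith
    set Pv : ℝ := QuadraticMap.polar Q u₁ u₂ with hPvd
    set Rv : ℝ := QuadraticMap.polar Q u₂ u₃ with hRvd
    have hQW : ∀ s t : ℝ, Q (s • p + t • q)
        = (Pv*a0+Rv*c0)*s^2 + (Pv*a1+Rv*c1)*(s*t) + (Pv*a2+Rv*c2)*t^2 := by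
      intro s t
      have hdec : s • p + t • q
          = (s*xp + t*xq) • u₁ + ((s*yp + t*yq) • u₂ + (s*zp + t*zq) • u₃) := by
        conv_lhs => rw [← hrec (s • p + t • q)]
        rw [hFlin, hFlin, hFlin, ← hxpd, ← hxqd, ← hypd, ← hyqd, ← hzpd, ← hzqd]
      rw [hdec, hexp]
      rw [ha0d, ha1d, ha2d, hc0d, hc1d, hc2d]
      linear_combination ((s*xp + t*xq)*(s*zp + t*zq)) * hsum
    set x : ℝ := bW.repr w 0 with hxd
    set y : ℝ := bW.repr w 1 with hyd
    have hwdec : w = x • bW 0 + y • bW 1 := by rw [hxd, hyd]; exact hbWrep w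
    have hwcoe : (↑w : Fin 3 → ℝ) = x • p + y • q := by
      conv_lhs => rw [hwdec]
      exact hcoe x y
    have hQw0 : (Pv*a0+Rv*c0)*x^2 + (Pv*a1+Rv*c1)*(x*y) + (Pv*a2+Rv*c2)*y^2 = 0 := by
      rw [← hQW x y, ← hwcoe]; exact hw
    rw [LinearEquiv.ofLinear_apply]
    have hgcoe : ((gmap w : W) : Fin 3 → ℝ) = ((-be)*x - ga*y) • p + (al*x + be*y) • q := by
      conv_lhs => rw [hwdec]
      rw [hgw x y]
      exact hcoe _ _
    rw [hgcoe, hQW]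
    rw [hald, hbed, hgad]
    linear_combination desargues_root_swap a0 a1 a2 c0 c1 c2 Pv Rv x y hQw0
end

section
/- Let v₁, v₂, v₃, v₄ ∈ ℂ³ be nonzero vectors such that every three of them are linearly independent, and let W ⊆ ℂ³ be a 2-dimensional linear subspace containing none of v₁, v₂, v₃, v₄. Then there exists a linear automorphism g : W ≃ W such that: g is not a scalar multiple of the identity; g ∘ g is a scalar multiple of the identity; for every quadratic form Q on ℂ³ with Q(v₁) = Q(v₂) = Q(v₃) = Q(v₄) = 0 and every w ∈ W with Q(w) = 0, one also has Q(g(w)) = 0; g has two linearly independent eigenvectors spanning distinct eigenlines of W; and for every nonzero quadratic form Q on ℂ³ vanishing at v₁, v₂, v₃, v₄ there exists a nonzero w ∈ W with Q(w) = 0. -/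
open QuadraticMap in
lemma desargues_expand2 (Q : QuadraticForm ℂ (Fin 3 → ℂ)) (x y : ℂ) (A B : Fin 3 → ℂ) :
    Q (x • A + y • B) = x^2 * Q A + y^2 * Q B + x*y*polar Q A B := by
  have hp : Q (x • A + y • B) = Q (x•A) + Q (y•B) + polar Q (x•A) (y•B) := by
    rw [polar]; ring
  rw [hp, QuadraticMap.map_smul, QuadraticMap.map_smul,
    QuadraticMap.polar_smul_left, QuadraticMap.polar_smul_right]
  simp only [smul_eq_mul]; ring

open QuadraticMap in
lemma desargues_expand3 (Q : QuadraticForm ℂ (Fin 3 → ℂ)) (x y z : ℂ) (A B C : Fin 3 → ℂ) :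
    Q (x • A + y • B + z • C) = x^2 * Q A + y^2 * Q B + z^2 * Q C
      + x*y*polar Q A B + y*z*polar Q B C + x*z*polar Q A C := by
  have hp : Q (x • A + y • B + z • C)
      = Q (x•A + y•B) + Q (z•C) + polar Q (x•A + y•B) (z•C) := by
    rw [polar]; ring_nf
  rw [hp, desargues_expand2, QuadraticMap.map_smul, QuadraticMap.polar_smul_right,
    QuadraticMap.polar_add_left, QuadraticMap.polar_smul_left, QuadraticMap.polar_smul_left]
  simp only [smul_eq_mul]; ring

lemma desargues_stage1 (a1 b1 c1 a2 b2 c2 α β γ δ d e s t A B C : ℂ)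
    (hα : α = c1*a2-a1*c2) (hβ : β = c1*b2-b1*c2) (hγ : γ = a1*b2-b1*a2)
    (hδ : δ = α^2+β*γ) (hA : A = d*a1+e*a2) (hB : B = d*b1+e*b2) (hC : C = d*c1+e*c2) :
    A*(α*s+β*t)^2 + B*((α*s+β*t)*(γ*s-α*t)) + C*(γ*s-α*t)^2
      = δ*(A*s^2+B*(s*t)+C*t^2) := by
  subst hδ hα hβ hγ hA hB hC; ring

lemma desargues_stage2 (x0 x1 x2 y0 y1 y2 a1 b1 c1 a2 b2 c2 d e f s t : ℂ)
    (ha1 : a1 = x0*x1-x0*x2) (hb1 : b1 = x0*y1+x1*y0-(x0*y2+x2*y0)) (hc1 : c1 = y0*y1-y0*y2)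
    (ha2 : a2 = x1*x2-x0*x2) (hb2 : b2 = x1*y2+x2*y1-(x0*y2+x2*y0)) (hc2 : c2 = y1*y2-y0*y2)
    (hf : f = -d-e) :
    d*((s*x0+t*y0)*(s*x1+t*y1)) + e*((s*x1+t*y1)*(s*x2+t*y2)) + f*((s*x0+t*y0)*(s*x2+t*y2))
      = (d*a1+e*a2)*s^2 + (d*b1+e*b2)*(s*t) + (d*c1+e*c2)*t^2 := by
  subst ha1 hb1 hc1 ha2 hb2 hc2 hf; ring

lemma desargues_stage3 (x0 x1 x2 y0 y1 y2 a1 b1 c1 a2 b2 c2 α β γ δ m0 m1 m2 : ℂ)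
    (ha1 : a1 = x0*x1-x0*x2) (hb1 : b1 = x0*y1+x1*y0-(x0*y2+x2*y0)) (hc1 : c1 = y0*y1-y0*y2)
    (ha2 : a2 = x1*x2-x0*x2) (hb2 : b2 = x1*y2+x2*y1-(x0*y2+x2*y0)) (hc2 : c2 = y1*y2-y0*y2)
    (hα : α = c1*a2-a1*c2) (hβ : β = c1*b2-b1*c2) (hγ : γ = a1*b2-b1*a2)
    (hδ : δ = α^2+β*γ)
    (hm0 : m0 = x1*y2-x2*y1) (hm1 : m1 = x2*y0-x0*y2) (hm2 : m2 = x0*y1-x1*y0) :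
    δ = -(m0*m1*m2*(m0+m1+m2)) := by
  subst hδ hα hβ hγ ha1 hb1 hc1 ha2 hb2 hc2 hm0 hm1 hm2; ring

lemma desargues_spanAux (x0 x1 x2 y0 y1 y2 p q r : ℂ)
    (hind : ∀ s t : ℂ, s*x0+t*y0 = 0 → s*x1+t*y1 = 0 → s*x2+t*y2 = 0 → s = 0 ∧ t = 0)
    (hm : p*(x1*y2 - x2*y1) + q*(x2*y0 - x0*y2) + r*(x0*y1 - x1*y0) = 0) :
    ∃ s t : ℂ, s*x0+t*y0 = p ∧ s*x1+t*y1 = q ∧ s*x2+t*y2 = r := by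
  have hcross : ¬(x1*y2 - x2*y1 = 0 ∧ x2*y0 - x0*y2 = 0 ∧ x0*y1 - x1*y0 = 0) := by
    rintro ⟨h0, h1, h2⟩
    by_cases hx0 : x0 = 0
    · by_cases hx1 : x1 = 0
      · by_cases hx2 : x2 = 0
        · exact one_ne_zero (hind 1 0 (by simp [hx0]) (by simp [hx1]) (by simp [hx2])).1
        · exact hx2 (neg_eq_zero.mp (hind y2 (-x2) (by linear_combination -h1)
            (by linear_combination h0) (by ring)).2)
      · exact hx1 (neg_eq_zero.mp (hind y1 (-x1) (by linear_combination h2) (by ring)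
          (by linear_combination -h0)).2)
    · exact hx0 (neg_eq_zero.mp (hind y0 (-x0) (by ring) (by linear_combination -h2)
        (by linear_combination h1)).2)
  by_cases hm2 : x0*y1 - x1*y0 = 0
  · by_cases hm0 : x1*y2 - x2*y1 = 0
    · have hm1 : x2*y0 - x0*y2 ≠ 0 := fun h => hcross ⟨hm0, h, hm2⟩
      refine ⟨(r*y0 - p*y2)/(x2*y0 - x0*y2), (p*x2 - r*x0)/(x2*y0 - x0*y2), ?_, ?_, ?_⟩ <;>
        rw [div_mul_eq_mul_div, div_mul_eq_mul_div, ← add_div, div_eq_iff hm1]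
      · ring
      · linear_combination -hm
      · ring
    · refine ⟨(q*y2 - r*y1)/(x1*y2 - x2*y1), (r*x1 - q*x2)/(x1*y2 - x2*y1), ?_, ?_, ?_⟩ <;>
        rw [div_mul_eq_mul_div, div_mul_eq_mul_div, ← add_div, div_eq_iff hm0]
      · linear_combination -hm
      · ring
      · ring
  · refine ⟨(p*y1 - q*y0)/(x0*y1 - x1*y0), (q*x0 - p*x1)/(x0*y1 - x1*y0), ?_, ?_, ?_⟩ <;>
      rw [div_mul_eq_mul_div, div_mul_eq_mul_div, ← add_div, div_eq_iff hm2]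
    · ring
    · ring
    · linear_combination -hm

set_option maxHeartbeats 1000000 in
/-- **Desargues' involution theorem, complex projective plane version.**
Given four base points in general position in the complex projective plane and a
line (2-dimensional subspace `W` of `ℂ³`) avoiding them, there is an involution
of the line (a linear automorphism `g` of `W`, not a scalar multiple of the
identity, whose square is a scalar multiple of the identity) such that every conic
through the four base points meets the line in a pair of conjugate points;
moreover `g` has two linearly independent eigenvectors spanning distinct
eigenlines (the two fixed points of the involution), and every conic through the
four base points actually meets the line. -/
theorem desargues_involution_complex
    (v₁ v₂ v₃ v₄ : Fin 3 → ℂ)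
    (hv₁ : v₁ ≠ 0) (hv₂ : v₂ ≠ 0) (hv₃ : v₃ ≠ 0) (hv₄ : v₄ ≠ 0)
    (h123 : LinearIndependent ℂ ![v₁, v₂, v₃])
    (h124 : LinearIndependent ℂ ![v₁, v₂, v₄])
    (h134 : LinearIndependent ℂ ![v₁, v₃, v₄])
    (h234 : LinearIndependent ℂ ![v₂, v₃, v₄])
    (W : Submodule ℂ (Fin 3 → ℂ)) (hW : Module.finrank ℂ W = 2)
    (hWv₁ : v₁ ∉ W) (hWv₂ : v₂ ∉ W) (hWv₃ : v₃ ∉ W) (hWv₄ : v₄ ∉ W) :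
    ∃ g : W ≃ₗ[ℂ] W,
      (¬ ∃ c : ℂ, ∀ w : W, g w = c • w) ∧
      (∃ c : ℂ, ∀ w : W, g (g w) = c • w) ∧
      (∀ Q : QuadraticForm ℂ (Fin 3 → ℂ),
        Q v₁ = 0 → Q v₂ = 0 → Q v₃ = 0 → Q v₄ = 0 →
        ∀ w : W, Q (w : Fin 3 → ℂ) = 0 → Q ((g w : W) : Fin 3 → ℂ) = 0) ∧
      (∃ w₁ w₂ : W, LinearIndependent ℂ ![w₁, w₂] ∧
        (∃ c₁ : ℂ, g w₁ = c₁ • w₁) ∧ (∃ c₂ : ℂ, g w₂ = c₂ • w₂) ∧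
        Submodule.span ℂ ({w₁} : Set W) ≠ Submodule.span ℂ ({w₂} : Set W)) ∧
      (∀ Q : QuadraticForm ℂ (Fin 3 → ℂ), Q ≠ 0 →
        Q v₁ = 0 → Q v₂ = 0 → Q v₃ = 0 → Q v₄ = 0 →
        ∃ w : W, w ≠ 0 ∧ Q (w : Fin 3 → ℂ) = 0) := by
  classical
  -- basis from the first three points
  have hfr : Fintype.card (Fin 3) = Module.finrank ℂ (Fin 3 → ℂ) := by simp
  set B₀ : Module.Basis (Fin 3) ℂ (Fin 3 → ℂ) := basisOfLinearIndependentOfCardEqFinrank h123 hfr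
    with hB₀def
  have hB₀ : ∀ i, B₀ i = ![v₁, v₂, v₃] i := fun i => by
    rw [hB₀def, coe_basisOfLinearIndependentOfCardEqFinrank]
  set a : ℂ := B₀.repr v₄ 0 with hadef
  set b : ℂ := B₀.repr v₄ 1 with hbdef
  set c : ℂ := B₀.repr v₄ 2 with hcdef
  have hv4 : v₄ = a • v₁ + b • v₂ + c • v₃ := by
    have := B₀.sum_repr v₄
    rw [Fin.sum_univ_three] at this
    rw [← this, hB₀ 0, hB₀ 1, hB₀ 2]
    simp
    rfl
  have ha : a ≠ 0 := by
    intro h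
    have hs : ∑ i, (![-b, -c, 1] : Fin 3 → ℂ) i • ![v₂, v₃, v₄] i = 0 := by
      rw [Fin.sum_univ_three]
      simp only [Matrix.cons_val_zero, Matrix.cons_val_one, Matrix.head_cons,
        Matrix.cons_val_two, Matrix.tail_cons]
      rw [hv4, h]; module
    have := Fintype.linearIndependent_iff.mp h234 ![-b, -c, 1] hs 2
    simp at this
  have hb : b ≠ 0 := by
    intro h
    have hs : ∑ i, (![-a, -c, 1] : Fin 3 → ℂ) i • ![v₁, v₃, v₄] i = 0 := by
      rw [Fin.sum_univ_three]
      simp only [Matrix.cons_val_zero, Matrix.cons_val_one, Matrix.head_cons,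
        Matrix.cons_val_two, Matrix.tail_cons]
      rw [hv4, h]; module
    have := Fintype.linearIndependent_iff.mp h134 ![-a, -c, 1] hs 2
    simp at this
  have hc : c ≠ 0 := by
    intro h
    have hs : ∑ i, (![-a, -b, 1] : Fin 3 → ℂ) i • ![v₁, v₂, v₄] i = 0 := by
      rw [Fin.sum_univ_three]
      simp only [Matrix.cons_val_zero, Matrix.cons_val_one, Matrix.head_cons,
        Matrix.cons_val_two, Matrix.tail_cons]
      rw [hv4, h]; module
    have := Fintype.linearIndependent_iff.mp h124 ![-a, -b, 1] hs 2
    simp at this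
  -- rescaled base points
  set V₁ : Fin 3 → ℂ := a • v₁ with hV₁def
  set V₂ : Fin 3 → ℂ := b • v₂ with hV₂def
  set V₃ : Fin 3 → ℂ := c • v₃ with hV₃def
  have hv4' : v₄ = V₁ + V₂ + V₃ := hv4
  have hWV₁ : V₁ ∉ W := fun h => hWv₁ (by
    have := W.smul_mem a⁻¹ h
    rwa [hV₁def, smul_smul, inv_mul_cancel₀ ha, one_smul] at this)
  have hWV₂ : V₂ ∉ W := fun h => hWv₂ (by
    have := W.smul_mem b⁻¹ h
    rwa [hV₂def, smul_smul, inv_mul_cancel₀ hb, one_smul] at this)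
  have hWV₃ : V₃ ∉ W := fun h => hWv₃ (by
    have := W.smul_mem c⁻¹ h
    rwa [hV₃def, smul_smul, inv_mul_cancel₀ hc, one_smul] at this)
  have hB₀0 : B₀ 0 = a⁻¹ • V₁ := by
    rw [hB₀ 0, hV₁def, smul_smul, inv_mul_cancel₀ ha, one_smul]
    simp
  have hB₀1 : B₀ 1 = b⁻¹ • V₂ := by
    rw [hB₀ 1, hV₂def, smul_smul, inv_mul_cancel₀ hb, one_smul]
    simp
  have hB₀2 : B₀ 2 = c⁻¹ • V₃ := by
    rw [hB₀ 2, hV₃def, smul_smul, inv_mul_cancel₀ hc, one_smul]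
    simp
  -- basis of the line W
  set bW : Module.Basis (Fin 2) ℂ W := Module.finBasisOfFinrankEq ℂ W hW with hbWdef
  set u : Fin 3 → ℂ := (bW 0 : Fin 3 → ℂ) with hudef
  set v : Fin 3 → ℂ := (bW 1 : Fin 3 → ℂ) with hvdef
  have huW : u ∈ W := (bW 0).2
  have hvW : v ∈ W := (bW 1).2
  have hpairW : ∀ s t : ℂ, s • bW 0 + t • bW 1 = (0 : W) → s = 0 ∧ t = 0 := by
    intro s t h
    have hs : ∑ i, (![s, t] : Fin 2 → ℂ) i • bW i = 0 := by
      rw [Fin.sum_univ_two]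
      simp only [Matrix.cons_val_zero, Matrix.cons_val_one, Matrix.head_cons]
      exact h
    have := Fintype.linearIndependent_iff.mp bW.linearIndependent ![s, t] hs
    exact ⟨this 0, this 1⟩
  have hpair : ∀ s t : ℂ, s • u + t • v = 0 → s = 0 ∧ t = 0 := by
    intro s t h
    refine hpairW s t ?_
    apply Subtype.ext
    simp only [Submodule.coe_add, Submodule.coe_smul, Submodule.coe_zero]
    exact h
  have hrepW : ∀ w : W, w = (bW.repr w 0) • bW 0 + (bW.repr w 1) • bW 1 := by
    intro w
    have := bW.sum_repr w
    rw [Fin.sum_univ_two] at this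
    exact this.symm
  -- coordinates of u, v with respect to V₁ V₂ V₃
  set x0 : ℂ := B₀.repr u 0 / a with hx0
  set x1 : ℂ := B₀.repr u 1 / b with hx1
  set x2 : ℂ := B₀.repr u 2 / c with hx2
  set y0 : ℂ := B₀.repr v 0 / a with hy0
  set y1 : ℂ := B₀.repr v 1 / b with hy1
  set y2 : ℂ := B₀.repr v 2 / c with hy2
  have hcoord : ∀ w : Fin 3 → ℂ,
      w = (B₀.repr w 0 / a) • V₁ + (B₀.repr w 1 / b) • V₂ + (B₀.repr w 2 / c) • V₃ := by
    intro w
    have h := B₀.sum_repr w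
    rw [Fin.sum_univ_three, hB₀0, hB₀1, hB₀2] at h
    rw [div_eq_mul_inv, div_eq_mul_inv, div_eq_mul_inv, mul_smul, mul_smul, mul_smul]
    exact h.symm
  have hu : u = x0 • V₁ + x1 • V₂ + x2 • V₃ := hcoord u
  have hv : v = y0 • V₁ + y1 • V₂ + y2 • V₃ := hcoord v
  have hcomb : ∀ s t : ℂ, s • u + t • v
      = (s*x0+t*y0) • V₁ + (s*x1+t*y1) • V₂ + (s*x2+t*y2) • V₃ := by
    intro s t; rw [hu, hv]; module
  have hind : ∀ s t : ℂ, s*x0+t*y0 = 0 → s*x1+t*y1 = 0 → s*x2+t*y2 = 0 → s = 0 ∧ t = 0 := by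
    intro s t h0 h1 h2
    apply hpair s t
    rw [hcomb, h0, h1, h2]
    simp
  have key : ∀ p q r : ℂ, (p • V₁ + q • V₂ + r • V₃) ∉ W →
      p*(x1*y2 - x2*y1) + q*(x2*y0 - x0*y2) + r*(x0*y1 - x1*y0) ≠ 0 := by
    intro p q r hnW h
    obtain ⟨s, t, e0, e1, e2⟩ := desargues_spanAux x0 x1 x2 y0 y1 y2 p q r hind h
    apply hnW
    have hst := hcomb s t
    rw [e0, e1, e2] at hst
    exact hst ▸ W.add_mem (W.smul_mem s huW) (W.smul_mem t hvW)
  have hM0 : x1*y2 - x2*y1 ≠ 0 := by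
    have := key 1 0 0 (by simpa using hWV₁)
    intro h; exact this (by linear_combination h)
  have hM1 : x2*y0 - x0*y2 ≠ 0 := by
    have := key 0 1 0 (by simpa using hWV₂)
    intro h; exact this (by linear_combination h)
  have hM2 : x0*y1 - x1*y0 ≠ 0 := by
    have := key 0 0 1 (by simpa using hWV₃)
    intro h; exact this (by linear_combination h)
  have hMS : (x1*y2 - x2*y1) + (x2*y0 - x0*y2) + (x0*y1 - x1*y0) ≠ 0 := by
    have := key 1 1 1 (by simpa [← hv4'] using hWv₄)
    intro h; exact this (by linear_combination h)
  -- the coefficients of the two degenerate conics restricted to W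
  obtain ⟨a1, ha1⟩ : ∃ z : ℂ, z = x0*x1-x0*x2 := ⟨_, rfl⟩
  obtain ⟨b1, hb1⟩ : ∃ z : ℂ, z = x0*y1+x1*y0-(x0*y2+x2*y0) := ⟨_, rfl⟩
  obtain ⟨c1, hc1⟩ : ∃ z : ℂ, z = y0*y1-y0*y2 := ⟨_, rfl⟩
  obtain ⟨a2, ha2⟩ : ∃ z : ℂ, z = x1*x2-x0*x2 := ⟨_, rfl⟩
  obtain ⟨b2, hb2⟩ : ∃ z : ℂ, z = x1*y2+x2*y1-(x0*y2+x2*y0) := ⟨_, rfl⟩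
  obtain ⟨c2, hc2⟩ : ∃ z : ℂ, z = y1*y2-y0*y2 := ⟨_, rfl⟩
  obtain ⟨α, hα⟩ : ∃ z : ℂ, z = c1*a2-a1*c2 := ⟨_, rfl⟩
  obtain ⟨β, hβ⟩ : ∃ z : ℂ, z = c1*b2-b1*c2 := ⟨_, rfl⟩
  obtain ⟨γ, hγ⟩ : ∃ z : ℂ, z = a1*b2-b1*a2 := ⟨_, rfl⟩
  obtain ⟨δ, hδ⟩ : ∃ z : ℂ, z = α^2+β*γ := ⟨_, rfl⟩
  have hδ0 : δ ≠ 0 := by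
    have hδm := desargues_stage3 x0 x1 x2 y0 y1 y2 a1 b1 c1 a2 b2 c2 α β γ δ
      (x1*y2-x2*y1) (x2*y0-x0*y2) (x0*y1-x1*y0)
      ha1 hb1 hc1 ha2 hb2 hc2 hα hβ hγ hδ rfl rfl rfl
    rw [hδm]
    exact neg_ne_zero.mpr (mul_ne_zero (mul_ne_zero (mul_ne_zero hM0 hM1) hM2) hMS)
  -- the involution
  set T : W →ₗ[ℂ] W := bW.constr ℂ ![α • bW 0 + γ • bW 1, β • bW 0 - α • bW 1] with hTdef
  have hT0 : T (bW 0) = α • bW 0 + γ • bW 1 := by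
    rw [hTdef, Module.Basis.constr_basis]
    simp only [Matrix.cons_val_zero]
  have hT1 : T (bW 1) = β • bW 0 - α • bW 1 := by
    rw [hTdef, Module.Basis.constr_basis]
    simp only [Matrix.cons_val_one, Matrix.head_cons, Matrix.cons_val_zero]
  have hTst : ∀ s t : ℂ, T (s • bW 0 + t • bW 1)
      = (α*s + β*t) • bW 0 + (γ*s - α*t) • bW 1 := by
    intro s t
    rw [map_add, map_smul, map_smul, hT0, hT1]
    module
  have hTT : ∀ w : W, T (T w) = δ • w := by
    intro w
    rw [hrepW w, hTst, hTst, hδ]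
    match_scalars <;> ring
  set g : W ≃ₗ[ℂ] W := LinearEquiv.ofLinear T (δ⁻¹ • T)
    (by ext w
        simp only [LinearMap.coe_comp, Function.comp_apply, LinearMap.smul_apply,
          LinearMap.id_coe, id_eq, map_smul]
        rw [hTT, smul_smul, inv_mul_cancel₀ hδ0, one_smul])
    (by ext w
        simp only [LinearMap.coe_comp, Function.comp_apply, LinearMap.smul_apply,
          LinearMap.id_coe, id_eq]
        rw [hTT, smul_smul, inv_mul_cancel₀ hδ0, one_smul]) with hgdef
  have hg : ∀ w : W, g w = T w := fun w => rfl
  -- evaluation of admissible conics on W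
  have hQeval : ∀ Q : QuadraticForm ℂ (Fin 3 → ℂ),
      Q v₁ = 0 → Q v₂ = 0 → Q v₃ = 0 → Q v₄ = 0 →
      ∃ d e : ℂ, ∀ s t : ℂ, Q (s • u + t • v)
        = (d*a1+e*a2)*s^2 + (d*b1+e*b2)*(s*t) + (d*c1+e*c2)*t^2 := by
    intro Q hQ1 hQ2 hQ3 hQ4
    have hQV1 : Q V₁ = 0 := by rw [hV₁def, QuadraticMap.map_smul, hQ1]; simp
    have hQV2 : Q V₂ = 0 := by rw [hV₂def, QuadraticMap.map_smul, hQ2]; simp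
    have hQV3 : Q V₃ = 0 := by rw [hV₃def, QuadraticMap.map_smul, hQ3]; simp
    obtain ⟨d, hd⟩ : ∃ z : ℂ, z = QuadraticMap.polar Q V₁ V₂ := ⟨_, rfl⟩
    obtain ⟨e, he⟩ : ∃ z : ℂ, z = QuadraticMap.polar Q V₂ V₃ := ⟨_, rfl⟩
    obtain ⟨f, hf⟩ : ∃ z : ℂ, z = QuadraticMap.polar Q V₁ V₃ := ⟨_, rfl⟩
    have hsum : d + e + f = 0 := by
      have h := desargues_expand3 Q 1 1 1 V₁ V₂ V₃
      rw [one_smul, one_smul, one_smul, ← hv4', hQ4, hQV1, hQV2, hQV3,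
        ← hd, ← he, ← hf] at h
      linear_combination -h
    have hfeq : f = -d - e := by linear_combination hsum
    refine ⟨d, e, fun s t => ?_⟩
    have h := desargues_expand3 Q (s*x0+t*y0) (s*x1+t*y1) (s*x2+t*y2) V₁ V₂ V₃
    rw [← hcomb, hQV1, hQV2, hQV3, ← hd, ← he, ← hf] at h
    rw [h, ← desargues_stage2 x0 x1 x2 y0 y1 y2 a1 b1 c1 a2 b2 c2 d e f s t
      ha1 hb1 hc1 ha2 hb2 hc2 hfeq]
    ring
  refine ⟨g, ?_, ?_, ?_, ?_, ?_⟩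
  · -- not a scalar multiple of the identity
    rintro ⟨k, hk⟩
    have h0 := hk (bW 0); rw [hg, hT0] at h0
    have h1 := hk (bW 1); rw [hg, hT1] at h1
    have e0 : (α - k) • bW 0 + γ • bW 1 = (0 : W) := by
      have hcalc : (α - k) • bW 0 + γ • bW 1 = (α • bW 0 + γ • bW 1) - k • bW 0 := by module
      rw [hcalc, h0]; abel
    have e1 : β • bW 0 + (-α - k) • bW 1 = (0 : W) := by
      have hcalc : β • bW 0 + (-α - k) • bW 1 = (β • bW 0 - α • bW 1) - k • bW 1 := by module
      rw [hcalc, h1]; abel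
    obtain ⟨hak, hγ0⟩ := hpairW _ _ e0
    obtain ⟨hβ0, hak'⟩ := hpairW _ _ e1
    have hα0 : α = 0 := by linear_combination (hak - hak')/2
    exact hδ0 (by rw [hδ, hγ0, hβ0, hα0]; ring)
  · -- square is scalar
    refine ⟨δ, fun w => ?_⟩
    rw [hg (g w), hg w]
    exact hTT w
  · -- conics through the four points are involution-invariant on W
    intro Q hQ1 hQ2 hQ3 hQ4 w hw
    obtain ⟨d, e, hQ⟩ := hQeval Q hQ1 hQ2 hQ3 hQ4
    obtain ⟨s, t⟩ : True := trivial
    set s : ℂ := bW.repr w 0 with hsdef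
    set t : ℂ := bW.repr w 1 with htdef
    have hwc : (w : Fin 3 → ℂ) = s • u + t • v := by
      conv_lhs => rw [hrepW w]
      simp only [Submodule.coe_add, Submodule.coe_smul]
      rfl
    have hgwc : ((g w : W) : Fin 3 → ℂ) = (α*s+β*t) • u + (γ*s-α*t) • v := by
      rw [hg]
      conv_lhs => rw [hrepW w, hTst]
      simp only [Submodule.coe_add, Submodule.coe_smul]
      rfl
    rw [hwc, hQ] at hw
    rw [hgwc, hQ]
    have hkey := desargues_stage1 a1 b1 c1 a2 b2 c2 α β γ δ d e s t
      (d*a1+e*a2) (d*b1+e*b2) (d*c1+e*c2) hα hβ hγ hδ rfl rfl rfl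
    rw [hkey, hw, mul_zero]
  · -- the two fixed points
    obtain ⟨ρ, hρ⟩ : ∃ z : ℂ, z ^ 2 = δ := IsAlgClosed.exists_pow_nat_eq δ zero_lt_two
    have hρ0 : ρ ≠ 0 := fun h => hδ0 (by rw [← hρ, h]; ring)
    have hgood : ∃ w : W, T w + ρ • w ≠ 0 ∧ T w - ρ • w ≠ 0 := by
      by_contra hno
      push_neg at hno
      have hcases : ∀ w : W, T w + ρ • w = 0 ∨ T w - ρ • w = 0 := fun w => by
        by_cases h : T w + ρ • w = 0
        · exact Or.inl h
        · exact Or.inr (hno w h)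
      have hγ0 : γ = 0 := by
        rcases hcases (bW 0) with h | h
        · have h' : (α + ρ) • bW 0 + γ • bW 1 = (0 : W) := by rw [← h, hT0]; module
          exact (hpairW _ _ h').2
        · have h' : (α - ρ) • bW 0 + γ • bW 1 = (0 : W) := by rw [← h, hT0]; module
          exact (hpairW _ _ h').2
      have hβ0 : β = 0 := by
        rcases hcases (bW 1) with h | h
        · have h' : β • bW 0 + (ρ - α) • bW 1 = (0 : W) := by rw [← h, hT1]; module
          exact (hpairW _ _ h').1
        · have h' : β • bW 0 + (-ρ - α) • bW 1 = (0 : W) := by rw [← h, hT1]; module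
          exact (hpairW _ _ h').1
      have hT01 : T (bW 0 + bW 1) = (α + β) • bW 0 + (γ - α) • bW 1 := by
        rw [map_add, hT0, hT1]; module
      rcases hcases (bW 0 + bW 1) with h | h
      · have h' : (α + β + ρ) • bW 0 + (γ - α + ρ) • bW 1 = (0 : W) := by
          rw [← h, hT01]; module
        obtain ⟨e1, e2⟩ := hpairW _ _ h'
        exact hρ0 (by linear_combination (e1 + e2 - hβ0 - hγ0)/2)
      · have h' : (α + β - ρ) • bW 0 + (γ - α - ρ) • bW 1 = (0 : W) := by
          rw [← h, hT01]; module
        obtain ⟨e1, e2⟩ := hpairW _ _ h'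
        exact hρ0 (by linear_combination (hβ0 + hγ0 - e1 - e2)/2)
    obtain ⟨w, hw1ne, hw2ne⟩ := hgood
    set w₁ : W := T w + ρ • w with hw₁def
    set w₂ : W := T w - ρ • w with hw₂def
    have hgw₁ : T w₁ = ρ • w₁ := by
      rw [hw₁def, map_add, map_smul, hTT, ← hρ]; module
    have hgw₂ : T w₂ = (-ρ) • w₂ := by
      rw [hw₂def, map_sub, map_smul, hTT, ← hρ]; module
    have hindp : ∀ s t : ℂ, s • w₁ + t • w₂ = 0 → s = 0 ∧ t = 0 := by
      intro s t hst
      have h2 : s • (ρ • w₁) + t • ((-ρ) • w₂) = 0 := by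
        rw [← hgw₁, ← hgw₂, ← map_smul, ← map_smul, ← map_add, hst, map_zero]
      have h3 : ρ • (s • w₁ - t • w₂) = 0 := by
        have hcalc : ρ • (s • w₁ - t • w₂) = s • (ρ • w₁) + t • ((-ρ) • w₂) := by module
        rw [hcalc, h2]
      have h4 : s • w₁ - t • w₂ = 0 := by
        rcases smul_eq_zero.mp h3 with h | h
        · exact absurd h hρ0
        · exact h
      have h5 : (2*s) • w₁ = 0 := by
        have hcalc : (2*s) • w₁ = (s • w₁ + t • w₂) + (s • w₁ - t • w₂) := by module
        rw [hcalc, hst, h4, add_zero]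
      have hs : s = 0 := by
        rcases smul_eq_zero.mp h5 with h | h
        · linear_combination h/2
        · exact absurd h hw1ne
      refine ⟨hs, ?_⟩
      rw [hs, zero_smul, zero_add] at hst
      rcases smul_eq_zero.mp hst with h | h
      · exact h
      · exact absurd h hw2ne
    refine ⟨w₁, w₂, LinearIndependent.pair_iff.mpr hindp, ⟨ρ, ?_⟩, ⟨-ρ, ?_⟩, ?_⟩
    · rw [hg]; exact hgw₁
    · rw [hg]; exact hgw₂
    · intro h
      have hmem : w₁ ∈ Submodule.span ℂ ({w₂} : Set W) :=
        h ▸ Submodule.mem_span_singleton_self w₁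
      obtain ⟨k, hk⟩ := Submodule.mem_span_singleton.mp hmem
      have hzero : (1 : ℂ) • w₁ + (-k) • w₂ = 0 := by rw [← hk]; module
      exact one_ne_zero (hindp 1 (-k) hzero).1
  · -- every admissible conic meets the line
    intro Q hQne hQ1 hQ2 hQ3 hQ4
    have hb0ne : bW 0 ≠ 0 := by
      intro h
      have : (1:ℂ) • bW 0 + (0:ℂ) • bW 1 = (0 : W) := by rw [h]; module
      exact one_ne_zero (hpairW _ _ this).1
    have hb1ne : bW 1 ≠ 0 := by
      intro h
      have : (0:ℂ) • bW 0 + (1:ℂ) • bW 1 = (0 : W) := by rw [h]; module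
      exact one_ne_zero (hpairW _ _ this).2
    by_cases hqu : Q u = 0
    · exact ⟨bW 0, hb0ne, by rw [← hudef]; exact hqu⟩
    · by_cases hqv : Q v = 0
      · exact ⟨bW 1, hb1ne, by rw [← hvdef]; exact hqv⟩
      · obtain ⟨r, hr⟩ : ∃ z : ℂ, z ^ 2 = (QuadraticMap.polar Q u v)^2 - 4*(Q u)*(Q v) :=
          IsAlgClosed.exists_pow_nat_eq _ zero_lt_two
        set P : ℂ := QuadraticMap.polar Q u v with hPdef
        set t₀ : ℂ := (-P + r)/(2*Q v) with ht₀def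
        refine ⟨bW 0 + t₀ • bW 1, ?_, ?_⟩
        · intro h
          have : (1:ℂ) • bW 0 + t₀ • bW 1 = (0 : W) := by rw [← h]; module
          exact one_ne_zero (hpairW _ _ this).1
        · have hco : ((bW 0 + t₀ • bW 1 : W) : Fin 3 → ℂ) = u + t₀ • v := by
            simp only [Submodule.coe_add, Submodule.coe_smul]
            rfl
          rw [hco]
          have h := desargues_expand2 Q 1 t₀ u v
          rw [one_smul] at h
          rw [h, ← hPdef]
          have h2v : (2 : ℂ) * Q v ≠ 0 := by
            intro hz
            rcases mul_eq_zero.mp hz with hz | hz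
            · norm_num at hz
            · exact hqv hz
          rw [ht₀def]
          field_simp
          linear_combination hr
end

section
/- Let A, B, C, D ∈ ℝ² with no three collinear, let u ∈ ℝ² be nonzero, M ∈ ℝ², and let ℓ = {M + t·u : t ∈ ℝ} be a line containing none of A, B, C, D. Suppose there is a conic f₁ through A, B, C, D and a constant c ≠ 0 with f₁(M + t·u) = c·t² for all t ∈ ℝ (f₁ is tangent to ℓ at M), and a conic f₂ through A, B, C, D and a t₀ ≠ 0 with f₂(M + t₀·u) = 0 and f₂(M − t₀·u) = 0 (f₂ meets ℓ in two points whose midpoint is M). Then for every conic f through A, B, C, D, the set {t ∈ ℝ : f(M + t·u) = 0} is either empty, or equal to {0}, or equal to {t₁, −t₁} for some t₁ ≠ 0. -/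
/-- A conic (possibly degenerate) in the affine plane `ℝ × ℝ`, given by the six
coefficients of a polynomial `a·x² + b·x·y + c·y² + d·x + e·y + g`. -/
structure Conic where
  a : ℝ
  b : ℝ
  c : ℝ
  d : ℝ
  e : ℝ
  g : ℝ

/-- Evaluation of the defining polynomial of a conic at a point of `ℝ × ℝ`. -/
def Conic.eval (f : Conic) (p : ℝ × ℝ) : ℝ :=
  f.a * p.1 ^ 2 + f.b * p.1 * p.2 + f.c * p.2 ^ 2 + f.d * p.1 + f.e * p.2 + f.g

/-- The defining polynomial is nonzero. -/
def Conic.Nonzero (f : Conic) : Prop :=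
  ¬ (f.a = 0 ∧ f.b = 0 ∧ f.c = 0 ∧ f.d = 0 ∧ f.e = 0 ∧ f.g = 0)

/-- The conic passes through the four points `A`, `B`, `C`, `D`. -/
def Conic.Through (f : Conic) (A B C D : ℝ × ℝ) : Prop :=
  f.eval A = 0 ∧ f.eval B = 0 ∧ f.eval C = 0 ∧ f.eval D = 0

/-- No three of the four points `A`, `B`, `C`, `D` are collinear. -/
def NoThreeCollinear (A B C D : ℝ × ℝ) : Prop :=
  ¬ Collinear ℝ ({A, B, C} : Set (ℝ × ℝ)) ∧ ¬ Collinear ℝ ({A, B, D} : Set (ℝ × ℝ)) ∧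
  ¬ Collinear ℝ ({A, C, D} : Set (ℝ × ℝ)) ∧ ¬ Collinear ℝ ({B, C, D} : Set (ℝ × ℝ))

/-- The line through `M` with direction `u`. -/
def parmLine (M u : ℝ × ℝ) : Set (ℝ × ℝ) :=
  {p | ∃ t : ℝ, p = M + t • u}

namespace Prop1Aux

lemma cross_zero_collinear {A B C : ℝ × ℝ}
    (h : (B.1 - A.1) * (C.2 - A.2) - (B.2 - A.2) * (C.1 - A.1) = 0) :
    Collinear ℝ ({A, B, C} : Set (ℝ × ℝ)) := by
  rcases eq_or_ne B A with rfl | hBA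
  · rw [Set.insert_idem]
    exact collinear_pair ℝ B C
  · rw [collinear_iff_of_mem (Set.mem_insert A _)]
    refine ⟨B - A, fun S hS => ?_⟩
    have hd : (B.1 - A.1) ^ 2 + (B.2 - A.2) ^ 2 ≠ 0 := by
      intro h0
      apply hBA
      have h1 : B.1 - A.1 = 0 := by nlinarith [sq_nonneg (B.1 - A.1), sq_nonneg (B.2 - A.2)]
      have h2 : B.2 - A.2 = 0 := by nlinarith [sq_nonneg (B.1 - A.1), sq_nonneg (B.2 - A.2)]
      exact Prod.ext_iff.mpr ⟨by linarith, by linarith⟩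
    rcases hS with rfl | rfl | rfl
    · exact ⟨0, by simp⟩
    · exact ⟨1, by simp [vadd_eq_add]⟩
    · refine ⟨((B.1 - A.1) * (S.1 - A.1) + (B.2 - A.2) * (S.2 - A.2)) /
        ((B.1 - A.1) ^ 2 + (B.2 - A.2) ^ 2), ?_⟩
      have h1 : S.1 = ((B.1 - A.1) * (S.1 - A.1) + (B.2 - A.2) * (S.2 - A.2)) /
          ((B.1 - A.1) ^ 2 + (B.2 - A.2) ^ 2) * (B.1 - A.1) + A.1 := by
        field_simp
        linear_combination (-(B.2 - A.2)) * h
      have h2 : S.2 = ((B.1 - A.1) * (S.1 - A.1) + (B.2 - A.2) * (S.2 - A.2)) /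
          ((B.1 - A.1) ^ 2 + (B.2 - A.2) ^ 2) * (B.2 - A.2) + A.2 := by
        field_simp
        linear_combination (B.1 - A.1) * h
      refine Prod.ext_iff.mpr ⟨?_, ?_⟩
      · simpa [vadd_eq_add, Prod.smul_fst, smul_eq_mul] using h1
      · simpa [vadd_eq_add, Prod.smul_snd, smul_eq_mul] using h2

def ev (p : ℝ × ℝ) (w : Fin 6 → ℝ) : ℝ :=
  w 0 * p.1 ^ 2 + w 1 * (p.1 * p.2) + w 2 * p.2 ^ 2 + w 3 * p.1 + w 4 * p.2 + w 5

noncomputable def evL (p : ℝ × ℝ) : (Fin 6 → ℝ) →ₗ[ℝ] ℝ where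
  toFun := ev p
  map_add' w w' := by simp [ev]; ring
  map_smul' r w := by simp [ev, smul_eq_mul]; ring

@[simp] lemma evL_apply (p : ℝ × ℝ) (w : Fin 6 → ℝ) : evL p w = ev p w := rfl

def cvec (f : Conic) : Fin 6 → ℝ
  | 0 => f.a | 1 => f.b | 2 => f.c | 3 => f.d | 4 => f.e | 5 => f.g

lemma ev_cvec (f : Conic) (p : ℝ × ℝ) : ev p (cvec f) = f.eval p := by
  simp [ev, cvec, Conic.eval]; ring

lemma ev_combo (a b : ℝ) (w w' : Fin 6 → ℝ) (p : ℝ × ℝ) :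
    ev p (a • w + b • w') = a * ev p w + b * ev p w' := by
  simp [ev, smul_eq_mul]; ring

lemma ev_combo4 (a b c d : ℝ) (w1 w2 w3 w4 : Fin 6 → ℝ) (p : ℝ × ℝ) :
    ev p (a • w1 + b • w2 + c • w3 + d • w4)
      = a * ev p w1 + b * ev p w2 + c * ev p w3 + d * ev p w4 := by
  simp [ev, smul_eq_mul]; ring

lemma eval_line (h : Conic) (N w : ℝ × ℝ) (t : ℝ) :
    h.eval (N + t • w) = (h.a * w.1 ^ 2 + h.b * w.1 * w.2 + h.c * w.2 ^ 2) * t ^ 2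
      + (2 * h.a * N.1 * w.1 + h.b * (N.1 * w.2 + N.2 * w.1) + 2 * h.c * N.2 * w.2
          + h.d * w.1 + h.e * w.2) * t
      + h.eval N := by
  simp [Conic.eval, Prod.fst_add, Prod.snd_add, Prod.smul_fst, Prod.smul_snd, smul_eq_mul]
  ring

def lineW (P Q : ℝ × ℝ) : Fin 3 → ℝ
  | 0 => Q.2 - P.2 | 1 => P.1 - Q.1 | 2 => Q.1 * P.2 - P.1 * Q.2

def lval (l : Fin 3 → ℝ) (p : ℝ × ℝ) : ℝ := l 0 * p.1 + l 1 * p.2 + l 2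

def prodW (l m : Fin 3 → ℝ) : Fin 6 → ℝ
  | 0 => l 0 * m 0 | 1 => l 0 * m 1 + l 1 * m 0 | 2 => l 1 * m 1
  | 3 => l 0 * m 2 + l 2 * m 0 | 4 => l 1 * m 2 + l 2 * m 1 | 5 => l 2 * m 2

lemma ev_prodW (l m : Fin 3 → ℝ) (p : ℝ × ℝ) :
    ev p (prodW l m) = lval l p * lval m p := by
  simp [ev, prodW, lval]; ring

lemma lval_self (P Q : ℝ × ℝ) : lval (lineW P Q) P = 0 := by
  simp [lval, lineW]; ring

lemma lval_self' (P Q : ℝ × ℝ) : lval (lineW P Q) Q = 0 := by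
  simp [lval, lineW]; ring

lemma collinear_of_lval {X P Q : ℝ × ℝ} (h : lval (lineW P Q) X = 0) :
    Collinear ℝ ({X, P, Q} : Set (ℝ × ℝ)) := by
  apply cross_zero_collinear
  have h' : (Q.2 - P.2) * X.1 + (P.1 - Q.1) * X.2 + (Q.1 * P.2 - P.1 * Q.2) = 0 := h
  linear_combination -h'

lemma vanish_on_line (A B C D : ℝ × ℝ) (hgen : NoThreeCollinear A B C D)
    (u : ℝ × ℝ) (hu : u ≠ 0) (M : ℝ × ℝ)
    (hA : A ∉ parmLine M u) (hB : B ∉ parmLine M u)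
    (hC : C ∉ parmLine M u) (hD : D ∉ parmLine M u)
    (h : Conic) (hth : h.Through A B C D)
    (hv : ∀ t : ℝ, h.eval (M + t • u) = 0) :
    h.a = 0 ∧ h.b = 0 ∧ h.c = 0 ∧ h.d = 0 ∧ h.e = 0 ∧ h.g = 0 := by
  have hn0 : u.1 ^ 2 + u.2 ^ 2 ≠ 0 := by
    intro h0
    apply hu
    have h1 : u.1 = 0 := by nlinarith [sq_nonneg u.1, sq_nonneg u.2]
    have h2 : u.2 = 0 := by nlinarith [sq_nonneg u.1, sq_nonneg u.2]
    exact Prod.ext_iff.mpr ⟨h1, h2⟩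
  set n : ℝ := u.1 ^ 2 + u.2 ^ 2 with hndef
  have hv0 := hv 0
  have hv1 := hv 1
  have hvm := hv (-1)
  rw [eval_line] at hv0 hv1 hvm
  norm_num at hv0 hv1 hvm
  have hM0 : h.eval M = 0 := hv0
  have Qu0 : h.a * u.1 ^ 2 + h.b * u.1 * u.2 + h.c * u.2 ^ 2 = 0 := by linarith
  have Bu0 : 2 * h.a * M.1 * u.1 + h.b * (M.1 * u.2 + M.2 * u.1) + 2 * h.c * M.2 * u.2
      + h.d * u.1 + h.e * u.2 = 0 := by linarith
  have hM0' : h.a * M.1 ^ 2 + h.b * M.1 * M.2 + h.c * M.2 ^ 2 + h.d * M.1 + h.e * M.2 + h.g = 0 :=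
    hM0
  set K : ℝ := 2 * h.a * u.1 * u.2 + h.b * (u.2 ^ 2 - u.1 ^ 2) - 2 * h.c * u.1 * u.2 with hKdef
  set Qv : ℝ := h.a * u.2 ^ 2 - h.b * u.1 * u.2 + h.c * u.1 ^ 2 with hQvdef
  set Bv : ℝ := 2 * h.a * M.1 * u.2 + h.b * (M.2 * u.2 - M.1 * u.1) - 2 * h.c * M.2 * u.1
      + h.d * u.2 - h.e * u.1 with hBvdef
  set p : ℝ := Qv * u.2 + K * u.1 with hpdef
  set q : ℝ := K * u.2 - Qv * u.1 with hqdef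
  set r : ℝ := n * Bv - p * M.1 - q * M.2 with hrdef
  have key : ∀ P : ℝ × ℝ, n ^ 2 * (h.eval P) =
      (u.2 * (P.1 - M.1) - u.1 * (P.2 - M.2)) * (p * P.1 + q * P.2 + r) := by
    intro P
    simp only [Conic.eval, hpdef, hqdef, hrdef, hKdef, hQvdef, hBvdef, hndef]
    linear_combination (u.1 * (P.1 - M.1) + u.2 * (P.2 - M.2)) ^ 2 * Qu0
      + ((u.1 ^ 2 + u.2 ^ 2) * (u.1 * (P.1 - M.1) + u.2 * (P.2 - M.2))) * Bu0
      + (u.1 ^ 2 + u.2 ^ 2) ^ 2 * hM0'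
  have hX : ∀ P : ℝ × ℝ, P ∉ parmLine M u → u.2 * (P.1 - M.1) - u.1 * (P.2 - M.2) ≠ 0 := by
    intro P hP h0
    apply hP
    refine ⟨(u.1 * (P.1 - M.1) + u.2 * (P.2 - M.2)) / n, ?_⟩
    have h1 : P.1 = M.1 + (u.1 * (P.1 - M.1) + u.2 * (P.2 - M.2)) / n * u.1 := by
      field_simp
      linear_combination u.2 * h0
    have h2 : P.2 = M.2 + (u.1 * (P.1 - M.1) + u.2 * (P.2 - M.2)) / n * u.2 := by
      field_simp
      linear_combination (-u.1) * h0
    refine Prod.ext_iff.mpr ⟨?_, ?_⟩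
    · simpa [Prod.fst_add, Prod.smul_fst, smul_eq_mul] using h1
    · simpa [Prod.snd_add, Prod.smul_snd, smul_eq_mul] using h2
  have hL : ∀ P : ℝ × ℝ, P ∉ parmLine M u → h.eval P = 0 → p * P.1 + q * P.2 + r = 0 := by
    intro P hP h0
    have hk := key P
    rw [h0, mul_zero] at hk
    rcases mul_eq_zero.mp hk.symm with h' | h'
    · exact absurd h' (hX P hP)
    · exact h'
  have hLA := hL A hA hth.1
  have hLB := hL B hB hth.2.1
  have hLC := hL C hC hth.2.2.1
  have hLD := hL D hD hth.2.2.2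
  by_cases hpq : p = 0 ∧ q = 0
  · obtain ⟨hp0, hq0⟩ := hpq
    have hr0 : r = 0 := by rw [hp0, hq0] at hLA; linarith
    have hz : ∀ P : ℝ × ℝ, h.eval P = 0 := by
      intro P
      have hk := key P
      rw [hp0, hq0, hr0] at hk
      have hzz : n ^ 2 * h.eval P = 0 := by rw [hk]; ring
      have hn2 : n ^ 2 ≠ 0 := pow_ne_zero 2 hn0
      exact (mul_eq_zero.mp hzz).resolve_left hn2
    have z00 := hz (0, 0)
    have z10 := hz (1, 0)
    have zm0 := hz (-1, 0)
    have z01 := hz (0, 1)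
    have z0m := hz (0, -1)
    have z11 := hz (1, 1)
    simp only [Conic.eval] at z00 z10 zm0 z01 z0m z11
    norm_num at z00 z10 zm0 z01 z0m z11
    refine ⟨by linarith, by linarith, by linarith, by linarith, by linarith, by linarith⟩
  · exfalso
    have hcross : (B.1 - A.1) * (C.2 - A.2) - (B.2 - A.2) * (C.1 - A.1) = 0 := by
      rcases (not_and_or.mp hpq) with hp | hq
      · have h1 : p * ((B.1 - A.1) * (C.2 - A.2) - (B.2 - A.2) * (C.1 - A.1)) = 0 := by
          linear_combination (C.2 - A.2) * hLB - (B.2 - A.2) * hLC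
            + ((B.2 - A.2) - (C.2 - A.2)) * hLA
        exact (mul_eq_zero.mp h1).resolve_left hp
      · have h1 : q * ((B.1 - A.1) * (C.2 - A.2) - (B.2 - A.2) * (C.1 - A.1)) = 0 := by
          linear_combination (B.1 - A.1) * hLC - (C.1 - A.1) * hLB
            + ((C.1 - A.1) - (B.1 - A.1)) * hLA
        exact (mul_eq_zero.mp h1).resolve_left hq
    exact hgen.1 (cross_zero_collinear hcross)

lemma pencil (A B C D : ℝ × ℝ) (hgen : NoThreeCollinear A B C D)
    (w₁ w₂ : Fin 6 → ℝ)
    (h₁ : ∀ P ∈ ({A, B, C, D} : Set (ℝ × ℝ)), ev P w₁ = 0)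
    (h₂ : ∀ P ∈ ({A, B, C, D} : Set (ℝ × ℝ)), ev P w₂ = 0)
    (hind : LinearIndependent ℝ ![w₁, w₂])
    (w : Fin 6 → ℝ) (hw : ∀ P ∈ ({A, B, C, D} : Set (ℝ × ℝ)), ev P w = 0) :
    ∃ α β : ℝ, α • w₁ + β • w₂ = w := by
  obtain ⟨hAB, hABD, hACD, hBCD⟩ := hgen
  classical
  have swap12 : ∀ {X Y Z : ℝ × ℝ}, Collinear ℝ ({X, Y, Z} : Set (ℝ × ℝ)) →
      Collinear ℝ ({Y, X, Z} : Set (ℝ × ℝ)) := by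
    intro X Y Z hcol
    have : ({Y, X, Z} : Set (ℝ × ℝ)) = {X, Y, Z} := by ext x; simp; tauto
    rwa [this]
  have rot : ∀ {X Y Z : ℝ × ℝ}, Collinear ℝ ({X, Y, Z} : Set (ℝ × ℝ)) →
      Collinear ℝ ({Z, X, Y} : Set (ℝ × ℝ)) := by
    intro X Y Z hcol
    have : ({Z, X, Y} : Set (ℝ × ℝ)) = {X, Y, Z} := by ext x; simp; tauto
    rwa [this]
  set wA := prodW (lineW B C) (lineW B D) with hwA
  set wB := prodW (lineW A C) (lineW A D) with hwB
  set wC := prodW (lineW A B) (lineW A D) with hwC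
  set wD := prodW (lineW A B) (lineW A C) with hwD
  have hAA : ev A wA ≠ 0 := by
    rw [hwA, ev_prodW]
    intro h0
    rcases mul_eq_zero.mp h0 with h1 | h1
    · exact hAB (collinear_of_lval h1)
    · exact hABD (collinear_of_lval h1)
  have hBB : ev B wB ≠ 0 := by
    rw [hwB, ev_prodW]
    intro h0
    rcases mul_eq_zero.mp h0 with h1 | h1
    · exact hAB (swap12 (collinear_of_lval h1))
    · exact hABD (swap12 (collinear_of_lval h1))
  have hCC : ev C wC ≠ 0 := by
    rw [hwC, ev_prodW]
    intro h0
    rcases mul_eq_zero.mp h0 with h1 | h1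
    · exact hAB (rot (rot (collinear_of_lval h1)))
    · exact hACD (swap12 (collinear_of_lval h1))
  have hDD : ev D wD ≠ 0 := by
    rw [hwD, ev_prodW]
    intro h0
    rcases mul_eq_zero.mp h0 with h1 | h1
    · exact hABD (rot (rot (collinear_of_lval h1)))
    · exact hACD (rot (rot (collinear_of_lval h1)))
  have hAB0 : ev B wA = 0 := by rw [hwA, ev_prodW, lval_self, zero_mul]
  have hAC0 : ev C wA = 0 := by rw [hwA, ev_prodW, lval_self', zero_mul]
  have hAD0 : ev D wA = 0 := by rw [hwA, ev_prodW, lval_self', mul_zero]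
  have hBA0 : ev A wB = 0 := by rw [hwB, ev_prodW, lval_self, zero_mul]
  have hBC0 : ev C wB = 0 := by rw [hwB, ev_prodW, lval_self', zero_mul]
  have hBD0 : ev D wB = 0 := by rw [hwB, ev_prodW, lval_self', mul_zero]
  have hCA0 : ev A wC = 0 := by rw [hwC, ev_prodW, lval_self, zero_mul]
  have hCB0 : ev B wC = 0 := by rw [hwC, ev_prodW, lval_self', zero_mul]
  have hCD0 : ev D wC = 0 := by rw [hwC, ev_prodW, lval_self', mul_zero]
  have hDA0 : ev A wD = 0 := by rw [hwD, ev_prodW, lval_self, zero_mul]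
  have hDB0 : ev B wD = 0 := by rw [hwD, ev_prodW, lval_self', zero_mul]
  have hDC0 : ev C wD = 0 := by rw [hwD, ev_prodW, lval_self', mul_zero]
  set pts : Fin 4 → ℝ × ℝ := ![A, B, C, D] with hpts
  set Φ : (Fin 6 → ℝ) →ₗ[ℝ] (Fin 4 → ℝ) := LinearMap.pi (fun i => evL (pts i)) with hΦ
  have hsurj : Function.Surjective Φ := by
    intro y
    refine ⟨(y 0 / ev A wA) • wA + (y 1 / ev B wB) • wB
      + (y 2 / ev C wC) • wC + (y 3 / ev D wD) • wD, ?_⟩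
    funext i
    fin_cases i <;>
      simp only [hΦ, LinearMap.pi_apply, evL_apply, hpts] <;>
      rw [show (![A, B, C, D] : Fin 4 → ℝ × ℝ) _ = _ from rfl] <;>
      rw [ev_combo4] <;>
      simp [hAB0, hAC0, hAD0, hBA0, hBC0, hBD0, hCA0, hCB0, hCD0, hDA0, hDB0, hDC0,
        div_mul_cancel₀, hAA, hBB, hCC, hDD]
  have hker2 : Module.finrank ℝ (LinearMap.ker Φ) = 2 := by
    have h1 := LinearMap.finrank_range_add_finrank_ker Φ
    rw [LinearMap.range_eq_top.mpr hsurj, finrank_top] at h1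
    simp [Module.finrank_pi] at h1
    omega
  have hmem : ∀ w' : Fin 6 → ℝ, (∀ P ∈ ({A, B, C, D} : Set (ℝ × ℝ)), ev P w' = 0) →
      w' ∈ LinearMap.ker Φ := by
    intro w' hw'
    rw [LinearMap.mem_ker]
    funext i
    fin_cases i <;>
      simp only [hΦ, LinearMap.pi_apply, evL_apply, hpts, Pi.zero_apply] <;>
      rw [show (![A, B, C, D] : Fin 4 → ℝ × ℝ) _ = _ from rfl]
    · exact hw' A (by simp)
    · exact hw' B (by simp)
    · exact hw' C (by simp)
    · exact hw' D (by simp)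
  have hrange : Set.range ![w₁, w₂] = {w₁, w₂} := by
    ext z
    constructor
    · rintro ⟨i, rfl⟩; fin_cases i <;> simp
    · rintro (rfl | rfl)
      exacts [⟨0, rfl⟩, ⟨1, rfl⟩]
  have hspan : Submodule.span ℝ ({w₁, w₂} : Set (Fin 6 → ℝ)) = LinearMap.ker Φ := by
    apply Submodule.eq_of_le_of_finrank_le
    · rw [Submodule.span_le]
      intro z hz
      rcases Set.mem_insert_iff.mp hz with rfl | hz'
      · exact hmem _ h₁
      · rw [Set.mem_singleton_iff] at hz'
        subst hz'
        exact hmem _ h₂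
    · rw [hker2, ← hrange]
      rw [finrank_span_eq_card hind]
      simp
  have hwmem : w ∈ Submodule.span ℝ ({w₁, w₂} : Set (Fin 6 → ℝ)) := by
    rw [hspan]; exact hmem w hw
  exact Submodule.mem_span_pair.mp hwmem

end Prop1Aux

open Prop1Aux

/-- **Proposition 1, affine midpoint form.** If one conic through the four base
points is tangent to the line `ℓ = {M + t·u}` at `M` (its restriction to `ℓ` is
`c·t²`) and another conic meets `ℓ` in two points symmetric about `M`, then every
conic through the four base points meets `ℓ` either not at all, or only at `M`,
or in a pair of points symmetric about `M`. -/


theorem prop_one_affine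
    (A B C D : ℝ × ℝ) (hgen : NoThreeCollinear A B C D)
    (u : ℝ × ℝ) (hu : u ≠ 0) (M : ℝ × ℝ)
    (hA : A ∉ parmLine M u) (hB : B ∉ parmLine M u)
    (hC : C ∉ parmLine M u) (hD : D ∉ parmLine M u)
    (f₁ : Conic) (hf₁0 : f₁.Nonzero) (hf₁ : f₁.Through A B C D)
    (c : ℝ) (hc : c ≠ 0) (htan : ∀ t : ℝ, f₁.eval (M + t • u) = c * t ^ 2)
    (f₂ : Conic) (hf₂0 : f₂.Nonzero) (hf₂ : f₂.Through A B C D)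
    (t₀ : ℝ) (ht₀ : t₀ ≠ 0)
    (h₂p : f₂.eval (M + t₀ • u) = 0) (h₂q : f₂.eval (M - t₀ • u) = 0) :
    ∀ f : Conic, f.Nonzero → f.Through A B C D →
      {t : ℝ | f.eval (M + t • u) = 0} = ∅ ∨
      {t : ℝ | f.eval (M + t • u) = 0} = {0} ∨
      ∃ t₁ : ℝ, t₁ ≠ 0 ∧ {t : ℝ | f.eval (M + t • u) = 0} = {t₁, -t₁} := by
  intro f hf0 hfth
  -- linear independence of the two given conics
  have hind : LinearIndependent ℝ ![cvec f₁, cvec f₂] := by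
    rw [LinearIndependent.pair_iff]
    intro s t hst
    have hs : s = 0 := by
      have h1 : ev (M + t₀ • u) (s • cvec f₁ + t • cvec f₂) = 0 := by
        rw [hst]; simp [ev]
      rw [ev_combo, ev_cvec, ev_cvec, htan, h₂p] at h1
      have hct : c * t₀ ^ 2 ≠ 0 := mul_ne_zero hc (pow_ne_zero 2 ht₀)
      have h2 : s * (c * t₀ ^ 2) = 0 := by linarith
      exact (mul_eq_zero.mp h2).resolve_right hct
    refine ⟨hs, ?_⟩
    rw [hs, zero_smul, zero_add] at hst
    rcases smul_eq_zero.mp hst with ht | hw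
    · exact ht
    · exact absurd ⟨by simpa [cvec] using congrFun hw 0, by simpa [cvec] using congrFun hw 1,
        by simpa [cvec] using congrFun hw 2, by simpa [cvec] using congrFun hw 3,
        by simpa [cvec] using congrFun hw 4, by simpa [cvec] using congrFun hw 5⟩ hf₂0
  have hthrough : ∀ (h : Conic), h.Through A B C D →
      ∀ P ∈ ({A, B, C, D} : Set (ℝ × ℝ)), ev P (cvec h) = 0 := by
    intro h hth P hP
    rw [ev_cvec]
    rcases hP with rfl | rfl | rfl | rfl
    · exact hth.1
    · exact hth.2.1
    · exact hth.2.2.1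
    · exact hth.2.2.2
  obtain ⟨α, β, hαβ⟩ := pencil A B C D hgen (cvec f₁) (cvec f₂)
    (hthrough f₁ hf₁) (hthrough f₂ hf₂) hind (cvec f) (hthrough f hfth)
  have hev : ∀ p : ℝ × ℝ, f.eval p = α * f₁.eval p + β * f₂.eval p := by
    intro p
    rw [← ev_cvec, ← hαβ, ev_combo, ev_cvec, ev_cvec]
  -- the restriction of f₂ to the line is even
  set Q2 : ℝ := f₂.a * u.1 ^ 2 + f₂.b * u.1 * u.2 + f₂.c * u.2 ^ 2 with hQ2d
  set B2 : ℝ := 2 * f₂.a * M.1 * u.1 + f₂.b * (M.1 * u.2 + M.2 * u.1) + 2 * f₂.c * M.2 * u.2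
      + f₂.d * u.1 + f₂.e * u.2 with hB2d
  have e2 : ∀ t : ℝ, f₂.eval (M + t • u) = Q2 * t ^ 2 + B2 * t + f₂.eval M :=
    fun t => eval_line f₂ M u t
  have eqp : Q2 * t₀ ^ 2 + B2 * t₀ + f₂.eval M = 0 := by rw [← e2]; exact h₂p
  have eqm : Q2 * t₀ ^ 2 - B2 * t₀ + f₂.eval M = 0 := by
    have h' : f₂.eval (M + (-t₀) • u) = 0 := by
      rw [show M + (-t₀) • u = M - t₀ • u by rw [neg_smul, ← sub_eq_add_neg]]
      exact h₂q
    have h'' := e2 (-t₀)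
    rw [h'] at h''
    linear_combination -h''
  have hB20 : B2 = 0 := by
    have h1 : B2 * t₀ = 0 := by linear_combination (eqp - eqm) / 2
    exact (mul_eq_zero.mp h1).resolve_right ht₀
  -- the restriction of f is even
  have hq : ∀ t : ℝ, f.eval (M + t • u) = (α * c + β * Q2) * t ^ 2 + β * f₂.eval M := by
    intro t
    rw [hev, htan, e2, hB20]; ring
  set P : ℝ := α * c + β * Q2 with hPd
  set G : ℝ := β * f₂.eval M with hGd
  by_cases hP0 : P = 0
  · by_cases hG0 : G = 0
    · exfalso
      exact hf0 (vanish_on_line A B C D hgen u hu M hA hB hC hD f hfth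
        (fun t => by rw [hq, hP0, hG0]; ring))
    · left
      ext t
      simp only [Set.mem_setOf_eq, Set.mem_empty_iff_false, iff_false]
      rw [hq, hP0]
      simpa using hG0
  · rcases lt_trichotomy (-G / P) 0 with hs | hs | hs
    · left
      ext t
      simp only [Set.mem_setOf_eq, Set.mem_empty_iff_false, iff_false]
      rw [hq]
      intro habs
      have ht2 : t ^ 2 = -G / P := by
        rw [eq_div_iff hP0]
        linear_combination habs
      nlinarith [sq_nonneg t]
    · right; left
      have hG0 : G = 0 := by
        have := div_eq_zero_iff.mp hs
        rcases this with h' | h'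
        · linarith
        · exact absurd h' hP0
      ext t
      simp only [Set.mem_setOf_eq, Set.mem_singleton_iff]
      rw [hq, hG0]
      constructor
      · intro h0
        have h1 : P * t ^ 2 = 0 := by linarith
        have h2 : t ^ 2 = 0 := (mul_eq_zero.mp h1).resolve_left hP0
        exact (pow_eq_zero_iff two_ne_zero).mp h2
      · rintro rfl; ring
    · right; right
      set s : ℝ := -G / P with hsd
      have hsq : Real.sqrt s ^ 2 = s := Real.sq_sqrt hs.le
      have hPs : P * Real.sqrt s ^ 2 = -G := by
        rw [hsq, hsd]
        field_simp
      refine ⟨Real.sqrt s, ne_of_gt (Real.sqrt_pos.mpr hs), ?_⟩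
      ext t
      simp only [Set.mem_setOf_eq, Set.mem_insert_iff, Set.mem_singleton_iff]
      rw [hq]
      constructor
      · intro h0
        have h1 : P * ((t - Real.sqrt s) * (t + Real.sqrt s)) = 0 := by
          linear_combination h0 - hPs
        have h2 := (mul_eq_zero.mp h1).resolve_left hP0
        rcases mul_eq_zero.mp h2 with h3 | h3
        · left; linarith
        · right; linarith
      · rintro (rfl | rfl)
        · linear_combination hPs
        · linear_combination hPs
end

section
/- Let v₁, v₂, v₃, v₄ ∈ ℝ³ be nonzero vectors such that every three of them are linearly independent, and let W ⊆ ℝ³ be a 2-dimensional subspace containing none of them. Suppose Q₁ and Q₂ are nonzero quadratic forms on ℝ³ vanishing at v₁, v₂, v₃, v₄ such that the zeros of Q₁ in the projective line of W are exactly two distinct points [p], [q], the zeros of Q₂ are exactly two distinct points [s], [t], the pairs {[p],[q]} and {[s],[t]} are different, and there exist two distinct points [m] ≠ [n] on the projective line of W with ([m],[n];[p],[q]) = −1 and ([m],[n];[s],[t]) = −1. Then for every nonzero quadratic form Q on ℝ³ vanishing at v₁, v₂, v₃, v₄, the set of zeros of Q in the projective line of W is either empty, or equal to {[m]}, or equal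 to {[n]}, or consists of two distinct points [x], [y] with ([m],[n];[x],[y]) = −1. -/
/-- Four points `[m], [n], [p], [q]` of a projective line (with `[m] ≠ [n]`) form a
harmonic range, `([m],[n];[p],[q]) = -1`, if there are representative vectors
`a • m` of `[m]` and `b • n` of `[n]` such that `a • m + b • n` represents `[p]`
and `a • m - b • n` represents `[q]`. -/
def IsHarmonic (m n p q : Fin 3 → ℝ) : Prop :=
  ∃ a b : ℝ, a ≠ 0 ∧ b ≠ 0 ∧
    (∃ cp : ℝ, cp ≠ 0 ∧ a • m + b • n = cp • p) ∧
    (∃ cq : ℝ, cq ≠ 0 ∧ a • m - b • n = cq • q)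

/-- The zeros of a quadratic form `Q` on the projective line determined by the
2-dimensional subspace `W`, described as the set of nonzero vectors of `W` on
which `Q` vanishes. -/
def projZeros (Q : QuadraticForm ℝ (Fin 3 → ℝ)) (W : Submodule ℝ (Fin 3 → ℝ)) :
    Set (Fin 3 → ℝ) :=
  {w | w ∈ W ∧ w ≠ 0 ∧ Q w = 0}

/-- The set of nonzero vectors representing the projective point `[m]`. -/
def ray (m : Fin 3 → ℝ) : Set (Fin 3 → ℝ) :=
  {w | ∃ c : ℝ, c ≠ 0 ∧ w = c • m}

open QuadraticMap

lemma qadd (Q : QuadraticForm ℝ (Fin 3 → ℝ)) (x y : Fin 3 → ℝ) :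
    Q (x + y) = Q x + Q y + polar (⇑Q) x y := by simp [polar]

lemma expand2' (Q : QuadraticForm ℝ (Fin 3 → ℝ)) (u v : Fin 3 → ℝ) (x y : ℝ) :
    Q (x • u + y • v) = Q u * x ^ 2 + Q v * y ^ 2 + x * y * polar (⇑Q) u v := by
  rw [qadd, QuadraticMap.map_smul, QuadraticMap.map_smul, polar_smul_left, polar_smul_right]
  simp [smul_eq_mul]; ring

lemma expand3' (Q : QuadraticForm ℝ (Fin 3 → ℝ)) (u v w : Fin 3 → ℝ) (a b c : ℝ) :
    Q (a • u + b • v + c • w) = Q u * a ^ 2 + Q v * b ^ 2 + Q w * c ^ 2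
      + a * b * polar (⇑Q) u v + a * c * polar (⇑Q) u w + b * c * polar (⇑Q) v w := by
  rw [qadd, expand2', QuadraticMap.map_smul, polar_add_left, polar_smul_left, polar_smul_left,
    polar_smul_right, polar_smul_right]
  simp [smul_eq_mul]; ring

lemma polar_comb (α β : ℝ) (Q₁ Q₂ : QuadraticForm ℝ (Fin 3 → ℝ)) (x y : Fin 3 → ℝ) :
    polar (⇑(α • Q₁ + β • Q₂)) x y = α * polar (⇑Q₁) x y + β * polar (⇑Q₂) x y := by
  simp [polar, QuadraticMap.add_apply, QuadraticMap.smul_apply, smul_eq_mul]; ring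

lemma comb_apply (α β : ℝ) (Q₁ Q₂ : QuadraticForm ℝ (Fin 3 → ℝ)) (x : Fin 3 → ℝ) :
    (α • Q₁ + β • Q₂) x = α * Q₁ x + β * Q₂ x := by
  simp [QuadraticMap.add_apply, QuadraticMap.smul_apply, smul_eq_mul]

lemma polar_sub' (Q Q' : QuadraticForm ℝ (Fin 3 → ℝ)) (x y : Fin 3 → ℝ) :
    polar (⇑(Q - Q')) x y = polar (⇑Q) x y - polar (⇑Q') x y := by
  simp [polar, QuadraticMap.sub_apply]; ring

lemma vanish_of_polar (v₁ v₂ v₃ v₄ : Fin 3 → ℝ)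
    (h123 : LinearIndependent ℝ ![v₁, v₂, v₃])
    (h124 : LinearIndependent ℝ ![v₁, v₂, v₄])
    (h134 : LinearIndependent ℝ ![v₁, v₃, v₄])
    (h234 : LinearIndependent ℝ ![v₂, v₃, v₄])
    (Q : QuadraticForm ℝ (Fin 3 → ℝ))
    (h1 : Q v₁ = 0) (h2 : Q v₂ = 0) (h3 : Q v₃ = 0) (h4 : Q v₄ = 0)
    (hp12 : polar (⇑Q) v₁ v₂ = 0) (hp23 : polar (⇑Q) v₂ v₃ = 0) : Q = 0 := by
  have hcard : Fintype.card (Fin 3) = Module.finrank ℝ (Fin 3 → ℝ) := by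
    simp [Module.finrank_fin_fun]
  set b : Module.Basis (Fin 3) ℝ (Fin 3 → ℝ) := basisOfLinearIndependentOfCardEqFinrank h123 hcard
    with hbdef
  have hb : ∀ i, b i = ![v₁, v₂, v₃] i := by
    intro i
    rw [hbdef, coe_basisOfLinearIndependentOfCardEqFinrank]
  have hw : ∀ w : Fin 3 → ℝ, ∃ a0 a1 a2 : ℝ, w = a0 • v₁ + a1 • v₂ + a2 • v₃ := by
    intro w
    refine ⟨b.repr w 0, b.repr w 1, b.repr w 2, ?_⟩
    conv_lhs => rw [← b.sum_repr w]
    rw [Fin.sum_univ_three, hb 0, hb 1, hb 2]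
    simp
  obtain ⟨a0, a1, a2, ha⟩ := hw v₄
  have ha2 : a2 ≠ 0 := by
    intro h
    have hs : ∑ i, ![a0, a1, (-1:ℝ)] i • ![v₁, v₂, v₄] i = 0 := by
      rw [Fin.sum_univ_three]
      simp only [Matrix.cons_val_zero, Matrix.cons_val_one, Matrix.head_cons,
        Matrix.cons_val_two, Matrix.tail_cons]
      rw [ha, h]
      module
    have := Fintype.linearIndependent_iff.mp h124 ![a0, a1, -1] hs 2
    norm_num [Matrix.cons_val_two, Matrix.tail_cons, Matrix.head_cons] at this
  have ha1 : a1 ≠ 0 := by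
    intro h
    have hs : ∑ i, ![a0, a2, (-1:ℝ)] i • ![v₁, v₃, v₄] i = 0 := by
      rw [Fin.sum_univ_three]
      simp only [Matrix.cons_val_zero, Matrix.cons_val_one, Matrix.head_cons,
        Matrix.cons_val_two, Matrix.tail_cons]
      rw [ha, h]
      module
    have := Fintype.linearIndependent_iff.mp h134 ![a0, a2, -1] hs 2
    norm_num [Matrix.cons_val_two, Matrix.tail_cons, Matrix.head_cons] at this
  have ha0 : a0 ≠ 0 := by
    intro h
    have hs : ∑ i, ![a1, a2, (-1:ℝ)] i • ![v₂, v₃, v₄] i = 0 := by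
      rw [Fin.sum_univ_three]
      simp only [Matrix.cons_val_zero, Matrix.cons_val_one, Matrix.head_cons,
        Matrix.cons_val_two, Matrix.tail_cons]
      rw [ha, h]
      module
    have := Fintype.linearIndependent_iff.mp h234 ![a1, a2, -1] hs 2
    norm_num [Matrix.cons_val_two, Matrix.tail_cons, Matrix.head_cons] at this
  have e := expand3' Q v₁ v₂ v₃ a0 a1 a2
  rw [← ha, h4, h1, h2, h3, hp12, hp23] at e
  have h13 : polar (⇑Q) v₁ v₃ = 0 := by
    have h' : a0 * a2 * polar (⇑Q) v₁ v₃ = a0 * a2 * 0 := by rw [mul_zero]; linarith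
    exact mul_left_cancel₀ (mul_ne_zero ha0 ha2) h'
  apply QuadraticMap.ext
  intro w
  obtain ⟨c0, c1, c2, hc⟩ := hw w
  rw [hc, expand3' Q v₁ v₂ v₃ c0 c1 c2, h1, h2, h3, hp12, hp23, h13]
  simp

/-- From a vector equation `a • u = b • v` with `a ≠ 0`, express `u` as a multiple of `v`. -/
lemma smul_eq_smul_imp (u v : Fin 3 → ℝ) (a b : ℝ) (ha : a ≠ 0) (h : a • u = b • v) :
    u = (a⁻¹ * b) • v := by
  rw [mul_smul, ← h, smul_smul, inv_mul_cancel₀ ha, one_smul]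

lemma harm_aux (Q : QuadraticForm ℝ (Fin 3 → ℝ)) (W : Submodule ℝ (Fin 3 → ℝ))
    (m n p q : Fin 3 → ℝ) (hm : m ∈ W) (hn : n ∈ W) (hm0 : m ≠ 0) (hn0 : n ≠ 0)
    (hmn : ∀ c : ℝ, n ≠ c • m)
    (hQW : projZeros Q W = ray p ∪ ray q)
    (hharm : IsHarmonic m n p q) :
    polar (⇑Q) m n = 0 ∧ Q m ≠ 0 ∧ Q n ≠ 0 := by
  obtain ⟨a, b, ha, hb, ⟨cp, hcp, hep⟩, ⟨cq, hcq, heq⟩⟩ := hharm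
  have hpz : Q p = 0 := by
    have : p ∈ projZeros Q W := by
      rw [hQW]; left; exact ⟨1, one_ne_zero, (one_smul ℝ p).symm⟩
    exact this.2.2
  have hqz : Q q = 0 := by
    have : q ∈ projZeros Q W := by
      rw [hQW]; right; exact ⟨1, one_ne_zero, (one_smul ℝ q).symm⟩
    exact this.2.2
  have e1 : Q m * a ^ 2 + Q n * b ^ 2 + a * b * polar (⇑Q) m n = 0 := by
    rw [← expand2', hep, QuadraticMap.map_smul, hpz]; simp
  have e2 : Q m * a ^ 2 + Q n * b ^ 2 - a * b * polar (⇑Q) m n = 0 := by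
    have h' : a • m - b • n = a • m + (-b) • n := by module
    have h0 : Q (a • m + (-b) • n) = 0 := by
      rw [← h', heq, QuadraticMap.map_smul, hqz]; simp
    have h1 := expand2' Q m n a (-b)
    rw [h0] at h1
    linear_combination -h1
  have hpol : polar (⇑Q) m n = 0 := by
    have hab : a * b ≠ 0 := mul_ne_zero ha hb
    have h' : a * b * polar (⇑Q) m n = a * b * 0 := by rw [mul_zero]; linarith
    exact mul_left_cancel₀ hab h'
  refine ⟨hpol, ?_, ?_⟩
  · intro hQm
    have hmem : m ∈ ray p ∪ ray q := by rw [← hQW]; exact ⟨hm, hm0, hQm⟩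
    rcases hmem with ⟨c, hc, hmc⟩ | ⟨c, hc, hmc⟩
    · have hpm : p = (c⁻¹ * 1) • m := smul_eq_smul_imp p m c 1 hc (by rw [one_smul, ← hmc])
      have h1 : b • n = (cp * (c⁻¹ * 1) - a) • m := by
        have : a • m + b • n = (cp * (c⁻¹ * 1)) • m := by rw [hep, hpm, smul_smul]
        rw [sub_smul, ← this]; module
      exact hmn _ (smul_eq_smul_imp n m b _ hb h1)
    · have hpm : q = (c⁻¹ * 1) • m := smul_eq_smul_imp q m c 1 hc (by rw [one_smul, ← hmc])
      have h1 : b • n = (a - cq * (c⁻¹ * 1)) • m := by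
        have : a • m - b • n = (cq * (c⁻¹ * 1)) • m := by rw [heq, hpm, smul_smul]
        rw [sub_smul, ← this]; module
      exact hmn _ (smul_eq_smul_imp n m b _ hb h1)
  · intro hQn
    have hmem : n ∈ ray p ∪ ray q := by rw [← hQW]; exact ⟨hn, hn0, hQn⟩
    have key : ∀ d : ℝ, m = d • n → False := by
      intro d hd
      rcases eq_or_ne d 0 with h0 | h0
      · rw [h0, zero_smul] at hd; exact hm0 hd
      · exact hmn _ (smul_eq_smul_imp n m d 1 h0 (by rw [one_smul, ← hd]))
    rcases hmem with ⟨c, hc, hnc⟩ | ⟨c, hc, hnc⟩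
    · have hpn : p = (c⁻¹ * 1) • n := smul_eq_smul_imp p n c 1 hc (by rw [one_smul, ← hnc])
      have h1 : a • m = (cp * (c⁻¹ * 1) - b) • n := by
        have : a • m + b • n = (cp * (c⁻¹ * 1)) • n := by rw [hep, hpn, smul_smul]
        rw [sub_smul, ← this]; module
      exact key _ (smul_eq_smul_imp m n a _ ha h1)
    · have hpn : q = (c⁻¹ * 1) • n := smul_eq_smul_imp q n c 1 hc (by rw [one_smul, ← hnc])
      have h1 : a • m = (cq * (c⁻¹ * 1) + b) • n := by
        have : a • m - b • n = (cq * (c⁻¹ * 1)) • n := by rw [heq, hpn, smul_smul]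
        rw [add_smul, ← this]; module
      exact key _ (smul_eq_smul_imp m n a _ ha h1)

set_option maxHeartbeats 1000000 in
/-- **Proposition 2.** Suppose two different conics through the four base points
meet the line of `W` in two different pairs of distinct points `{[p],[q]}` and
`{[s],[t]}`, and suppose there are two distinct points `[m] ≠ [n]` on the line with
`([m],[n];[p],[q]) = -1 = ([m],[n];[s],[t])`. Then every conic through the four
base points meets the line either not at all, or exactly in `[m]`, or exactly in
`[n]`, or in two distinct points `[x], [y]` with `([m],[n];[x],[y]) = -1`. -/
theorem prop_two
    (v₁ v₂ v₃ v₄ : Fin 3 → ℝ)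
    (hv₁ : v₁ ≠ 0) (hv₂ : v₂ ≠ 0) (hv₃ : v₃ ≠ 0) (hv₄ : v₄ ≠ 0)
    (h123 : LinearIndependent ℝ ![v₁, v₂, v₃])
    (h124 : LinearIndependent ℝ ![v₁, v₂, v₄])
    (h134 : LinearIndependent ℝ ![v₁, v₃, v₄])
    (h234 : LinearIndependent ℝ ![v₂, v₃, v₄])
    (W : Submodule ℝ (Fin 3 → ℝ)) (hW : Module.finrank ℝ W = 2)
    (hWv₁ : v₁ ∉ W) (hWv₂ : v₂ ∉ W) (hWv₃ : v₃ ∉ W) (hWv₄ : v₄ ∉ W)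
    (Q₁ Q₂ : QuadraticForm ℝ (Fin 3 → ℝ)) (hQ₁ : Q₁ ≠ 0) (hQ₂ : Q₂ ≠ 0)
    (hQ₁v : Q₁ v₁ = 0 ∧ Q₁ v₂ = 0 ∧ Q₁ v₃ = 0 ∧ Q₁ v₄ = 0)
    (hQ₂v : Q₂ v₁ = 0 ∧ Q₂ v₂ = 0 ∧ Q₂ v₃ = 0 ∧ Q₂ v₄ = 0)
    (p q s t : Fin 3 → ℝ)
    (hp : p ∈ W) (hq : q ∈ W) (hs : s ∈ W) (ht : t ∈ W)
    (hp0 : p ≠ 0) (hq0 : q ≠ 0) (hs0 : s ≠ 0) (ht0 : t ≠ 0)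
    (hpq : ∀ c : ℝ, q ≠ c • p) (hst : ∀ c : ℝ, t ≠ c • s)
    (hQ₁W : projZeros Q₁ W = ray p ∪ ray q)
    (hQ₂W : projZeros Q₂ W = ray s ∪ ray t)
    (hpairs : ray p ∪ ray q ≠ ray s ∪ ray t)
    (m n : Fin 3 → ℝ) (hm : m ∈ W) (hn : n ∈ W) (hm0 : m ≠ 0) (hn0 : n ≠ 0)
    (hmn : ∀ c : ℝ, n ≠ c • m)
    (hharm₁ : IsHarmonic m n p q) (hharm₂ : IsHarmonic m n s t) :
    ∀ Q : QuadraticForm ℝ (Fin 3 → ℝ), Q ≠ 0 →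
      Q v₁ = 0 → Q v₂ = 0 → Q v₃ = 0 → Q v₄ = 0 →
      projZeros Q W = ∅ ∨ projZeros Q W = ray m ∨ projZeros Q W = ray n ∨
      ∃ x y : Fin 3 → ℝ, x ∈ W ∧ y ∈ W ∧ x ≠ 0 ∧ y ≠ 0 ∧ (∀ c : ℝ, y ≠ c • x) ∧
        projZeros Q W = ray x ∪ ray y ∧ IsHarmonic m n x y := by
  intro Q hQ hQ1 hQ2 hQ3 hQ4
  obtain ⟨h11, h12, h13, h14⟩ := hQ₁v
  obtain ⟨h21, h22, h23, h24⟩ := hQ₂v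
  -- `m`, `n` are linearly independent
  have hmnInd : LinearIndependent ℝ ![m, n] := by
    rw [linearIndependent_fin2]
    constructor
    · simpa using hn0
    · intro a han
      simp only [Matrix.cons_val_one, Matrix.head_cons, Matrix.cons_val_zero] at han
      rcases eq_or_ne a 0 with h0 | h0
      · rw [h0, zero_smul] at han; exact hm0 han.symm
      · exact hmn _ (smul_eq_smul_imp n m a 1 h0 (by rw [one_smul, han]))
  have hz : ∀ x y : ℝ, x • m + y • n = 0 → x = 0 ∧ y = 0 := by
    intro x y hxy
    have hs : ∑ i, ![x, y] i • ![m, n] i = 0 := by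
      rw [Fin.sum_univ_two]; simpa using hxy
    have h := Fintype.linearIndependent_iff.mp hmnInd ![x, y] hs
    exact ⟨h 0, h 1⟩
  have hcoord : ∀ w ∈ W, ∃ x y : ℝ, w = x • m + y • n := by
    intro w hw'
    have hrange : Set.range ![m, n] = {m, n} := by
      ext z; simp only [Set.mem_range, Fin.exists_fin_two, Set.mem_insert_iff,
        Set.mem_singleton_iff, Matrix.cons_val_zero, Matrix.cons_val_one, Matrix.head_cons,
        eq_comm]
    have hfr : Module.finrank ℝ (Submodule.span ℝ ({m, n} : Set (Fin 3 → ℝ))) = 2 := by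
      rw [← hrange, finrank_span_eq_card hmnInd]; simp
    have hspan : Submodule.span ℝ ({m, n} : Set (Fin 3 → ℝ)) = W := by
      apply Submodule.eq_of_le_of_finrank_le
      · rw [Submodule.span_le, Set.insert_subset_iff, Set.singleton_subset_iff]
        exact ⟨hm, hn⟩
      · rw [hW, hfr]
    rw [← hspan] at hw'
    obtain ⟨x, y, hxy⟩ := Submodule.mem_span_pair.mp hw'
    exact ⟨x, y, hxy.symm⟩
  -- the pencil: Q₁ and Q₂ are linearly independent
  have hindep : ∀ c₁ c₂ : ℝ, c₁ • Q₁ + c₂ • Q₂ = 0 → c₁ = 0 ∧ c₂ = 0 := by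
    intro c₁ c₂ hc
    by_cases h2 : c₂ = 0
    · subst h2
      rw [zero_smul, add_zero] at hc
      by_cases h1 : c₁ = 0
      · exact ⟨h1, rfl⟩
      · exact absurd
          (by rw [← one_smul ℝ Q₁, ← inv_mul_cancel₀ h1, mul_smul, hc, smul_zero]) hQ₁
    · exfalso
      have h' : c₂ • Q₂ = (-c₁) • Q₁ := by
        apply QuadraticMap.ext
        intro x
        have hcx := DFunLike.congr_fun hc x
        simp only [QuadraticMap.add_apply, QuadraticMap.smul_apply, smul_eq_mul,
          QuadraticMap.zero_apply] at hcx ⊢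
        linarith
      have hQ₂eq : Q₂ = (c₂⁻¹ * -c₁) • Q₁ := by
        calc Q₂ = c₂⁻¹ • (c₂ • Q₂) := by rw [smul_smul, inv_mul_cancel₀ h2, one_smul]
        _ = c₂⁻¹ • ((-c₁) • Q₁) := by rw [h']
        _ = (c₂⁻¹ * -c₁) • Q₁ := by rw [smul_smul]
      have hd : (c₂⁻¹ * -c₁) ≠ 0 := by
        intro h0
        rw [h0, zero_smul] at hQ₂eq
        exact hQ₂ hQ₂eq
      have hsame : projZeros Q₁ W = projZeros Q₂ W := by
        ext w
        simp only [projZeros, Set.mem_setOf_eq]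
        constructor <;> rintro ⟨hw1, hw2, hw3⟩ <;> refine ⟨hw1, hw2, ?_⟩
        · rw [hQ₂eq, QuadraticMap.smul_apply, hw3, smul_zero]
        · rw [hQ₂eq, QuadraticMap.smul_apply, smul_eq_mul] at hw3
          exact (mul_eq_zero.mp hw3).resolve_left hd
      exact hpairs (by rw [← hQ₁W, ← hQ₂W, hsame])
  have hvan : ∀ R : QuadraticForm ℝ (Fin 3 → ℝ), R v₁ = 0 → R v₂ = 0 → R v₃ = 0 → R v₄ = 0 →
      polar (⇑R) v₁ v₂ = 0 → polar (⇑R) v₂ v₃ = 0 → R = 0 :=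
    fun R a b c d e f => vanish_of_polar v₁ v₂ v₃ v₄ h123 h124 h134 h234 R a b c d e f
  set u₁ := polar (⇑Q₁) v₁ v₂ with hu₁
  set u₂ := polar (⇑Q₁) v₂ v₃ with hu₂
  set w₁ := polar (⇑Q₂) v₁ v₂ with hw₁
  set w₂ := polar (⇑Q₂) v₂ v₃ with hw₂
  have hdet : u₁ * w₂ - u₂ * w₁ ≠ 0 := by
    intro hd
    have hR : w₂ • Q₁ + (-u₂) • Q₂ = 0 := by
      apply hvan
      · rw [comb_apply, h11, h21]; ring
      · rw [comb_apply, h12, h22]; ring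
      · rw [comb_apply, h13, h23]; ring
      · rw [comb_apply, h14, h24]; ring
      · rw [polar_comb, ← hu₁, ← hw₁]; linarith
      · rw [polar_comb, ← hu₂, ← hw₂]; ring
    obtain ⟨hw₂0, hu₂0⟩ := hindep _ _ hR
    have hR' : w₁ • Q₁ + (-u₁) • Q₂ = 0 := by
      apply hvan
      · rw [comb_apply, h11, h21]; ring
      · rw [comb_apply, h12, h22]; ring
      · rw [comb_apply, h13, h23]; ring
      · rw [comb_apply, h14, h24]; ring
      · rw [polar_comb, ← hu₁, ← hw₁]; ring
      · rw [polar_comb, ← hu₂, ← hw₂]; linarith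
    obtain ⟨hw₁0, hu₁0⟩ := hindep _ _ hR'
    apply hQ₁
    apply hvan Q₁ h11 h12 h13 h14
    · rw [← hu₁]; linarith
    · rw [← hu₂]; linarith
  set e₁ := polar (⇑Q) v₁ v₂ with he₁
  set e₂ := polar (⇑Q) v₂ v₃ with he₂
  set α := (e₁ * w₂ - e₂ * w₁) / (u₁ * w₂ - u₂ * w₁) with hα
  set β := (u₁ * e₂ - u₂ * e₁) / (u₁ * w₂ - u₂ * w₁) with hβ
  have hQeq : Q = α • Q₁ + β • Q₂ := by
    have hR : Q - (α • Q₁ + β • Q₂) = 0 := by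
      apply hvan
      · rw [QuadraticMap.sub_apply, comb_apply, hQ1, h11, h21]; ring
      · rw [QuadraticMap.sub_apply, comb_apply, hQ2, h12, h22]; ring
      · rw [QuadraticMap.sub_apply, comb_apply, hQ3, h13, h23]; ring
      · rw [QuadraticMap.sub_apply, comb_apply, hQ4, h14, h24]; ring
      · rw [polar_sub', polar_comb, ← he₁, ← hu₁, ← hw₁, hα, hβ]
        rw [div_mul_eq_mul_div, div_mul_eq_mul_div, ← add_div, sub_eq_zero, eq_div_iff hdet]
        ring
      · rw [polar_sub', polar_comb, ← he₂, ← hu₂, ← hw₂, hα, hβ]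
        rw [div_mul_eq_mul_div, div_mul_eq_mul_div, ← add_div, sub_eq_zero, eq_div_iff hdet]
        ring
    exact sub_eq_zero.mp hR
  have hdec : ∀ x, Q x = α * Q₁ x + β * Q₂ x := by
    intro x
    conv_lhs => rw [hQeq]
    rw [comb_apply]
  -- restriction to W
  obtain ⟨hpol₁, hA₁, hC₁⟩ := harm_aux Q₁ W m n p q hm hn hm0 hn0 hmn hQ₁W hharm₁
  obtain ⟨hpol₂, hA₂, hC₂⟩ := harm_aux Q₂ W m n s t hm hn hm0 hn0 hmn hQ₂W hharm₂
  have hpolQ : polar (⇑Q) m n = 0 := by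
    rw [hQeq, polar_comb, hpol₁, hpol₂]; ring
  have hQexp : ∀ x y : ℝ, Q (x • m + y • n) = Q m * x ^ 2 + Q n * y ^ 2 := by
    intro x y; rw [expand2', hpolQ]; ring
  by_cases hA : Q m = 0 <;> by_cases hC : Q n = 0
  · -- degenerate case: Q vanishes on all of W — impossible
    exfalso
    have h1 : α * Q₁ m + β * Q₂ m = 0 := by rw [← hdec m]; exact hA
    have h2 : α * Q₁ n + β * Q₂ n = 0 := by rw [← hdec n]; exact hC
    have hα0 : α ≠ 0 := by
      intro h0
      have hβ0 : β = 0 := by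
        rw [h0, zero_mul, zero_add] at h1
        exact (mul_eq_zero.mp h1).resolve_right hA₂
      rw [h0, hβ0] at hQeq
      simp only [zero_smul, add_zero] at hQeq
      exact hQ hQeq
    have hβ0 : β ≠ 0 := by
      intro h0
      rw [h0, zero_mul, add_zero] at h1
      exact hα0 ((mul_eq_zero.mp h1).resolve_right hA₁)
    have hcross : Q₁ m * Q₂ n = Q₂ m * Q₁ n := by
      have h3 : α * (Q₁ m * Q₂ n) = α * (Q₂ m * Q₁ n) := by
        linear_combination Q₂ n * h1 - Q₂ m * h2
      exact mul_left_cancel₀ hα0 h3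
    have hQ₁exp : ∀ x y : ℝ, Q₁ (x • m + y • n) = Q₁ m * x ^ 2 + Q₁ n * y ^ 2 := by
      intro x y; rw [expand2', hpol₁]; ring
    have hQ₂exp : ∀ x y : ℝ, Q₂ (x • m + y • n) = Q₂ m * x ^ 2 + Q₂ n * y ^ 2 := by
      intro x y; rw [expand2', hpol₂]; ring
    have hsame : projZeros Q₁ W = projZeros Q₂ W := by
      ext w
      simp only [projZeros, Set.mem_setOf_eq]
      constructor <;> rintro ⟨hw1, hw0, hwz⟩ <;> refine ⟨hw1, hw0, ?_⟩
      · obtain ⟨x, y, rfl⟩ := hcoord w hw1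
        rw [hQ₁exp] at hwz
        rw [hQ₂exp]
        have h4 : Q₁ m * (Q₂ m * x ^ 2 + Q₂ n * y ^ 2) = 0 := by
          linear_combination Q₂ m * hwz + y ^ 2 * hcross
        exact (mul_eq_zero.mp h4).resolve_left hA₁
      · obtain ⟨x, y, rfl⟩ := hcoord w hw1
        rw [hQ₂exp] at hwz
        rw [hQ₁exp]
        have h4 : Q₂ m * (Q₁ m * x ^ 2 + Q₁ n * y ^ 2) = 0 := by
          linear_combination Q₁ m * hwz - y ^ 2 * hcross
        exact (mul_eq_zero.mp h4).resolve_left hA₂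
    exact hpairs (by rw [← hQ₁W, ← hQ₂W, hsame])
  · -- Q m = 0, Q n ≠ 0 : zero set is ray m
    right; left
    ext w
    simp only [projZeros, ray, Set.mem_setOf_eq]
    constructor
    · rintro ⟨hw1, hw0, hwz⟩
      obtain ⟨x, y, rfl⟩ := hcoord w hw1
      rw [hQexp, hA] at hwz
      have h' : Q n * y ^ 2 = 0 := by linarith
      have hy : y = 0 := by
        have := (mul_eq_zero.mp h').resolve_left hC
        exact pow_eq_zero_iff two_ne_zero |>.mp this
      subst hy
      have hx : x ≠ 0 := by rintro rfl; exact hw0 (by simp)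
      exact ⟨x, hx, by simp⟩
    · rintro ⟨c, hc, rfl⟩
      exact ⟨W.smul_mem c hm, smul_ne_zero hc hm0,
        by rw [QuadraticMap.map_smul, hA]; simp⟩
  · -- Q m ≠ 0, Q n = 0 : zero set is ray n
    right; right; left
    ext w
    simp only [projZeros, ray, Set.mem_setOf_eq]
    constructor
    · rintro ⟨hw1, hw0, hwz⟩
      obtain ⟨x, y, rfl⟩ := hcoord w hw1
      rw [hQexp, hC] at hwz
      have h' : Q m * x ^ 2 = 0 := by linarith
      have hx : x = 0 := by
        have := (mul_eq_zero.mp h').resolve_left hA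
        exact pow_eq_zero_iff two_ne_zero |>.mp this
      subst hx
      have hy : y ≠ 0 := by rintro rfl; exact hw0 (by simp)
      exact ⟨y, hy, by simp⟩
    · rintro ⟨c, hc, rfl⟩
      exact ⟨W.smul_mem c hn, smul_ne_zero hc hn0,
        by rw [QuadraticMap.map_smul, hC]; simp⟩
  · -- Q m ≠ 0, Q n ≠ 0
    rcases (mul_ne_zero hA hC).lt_or_gt with hneg | hpos
    · -- opposite signs: two zeros, harmonic
      right; right; right
      set s' := Real.sqrt (-(Q m * Q n)) with hsd
      have hspos : 0 < -(Q m * Q n) := by linarith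
      have hs2 : s' ^ 2 = -(Q m * Q n) := Real.sq_sqrt hspos.le
      have hs0' : s' ≠ 0 := by
        rw [hsd]
        exact ne_of_gt (Real.sqrt_pos.mpr hspos)
      have hXne : Q n • m + s' • n ≠ 0 := fun h0 => hC (hz _ _ h0).1
      have hYne : Q n • m - s' • n ≠ 0 := by
        intro h0
        have h0' : Q n • m + (-s') • n = 0 := by rw [← h0]; module
        exact hC (hz _ _ h0').1
      refine ⟨Q n • m + s' • n, Q n • m - s' • n,
        W.add_mem (W.smul_mem _ hm) (W.smul_mem _ hn),
        W.sub_mem (W.smul_mem _ hm) (W.smul_mem _ hn),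
        hXne, hYne, ?_, ?_, ?_⟩
      · intro c hYX
        have h' : (Q n - c * Q n) • m + (-s' - c * s') • n =
            (Q n • m - s' • n) - c • (Q n • m + s' • n) := by module
        have hsub : (Q n • m - s' • n) - c • (Q n • m + s' • n) = 0 := by
          rw [hYX]; exact sub_self _
        obtain ⟨ea, eb⟩ := hz _ _ (h'.trans hsub)
        have hc1 : 1 - c = 0 := by
          have h5 : Q n * (1 - c) = 0 := by linear_combination ea
          exact (mul_eq_zero.mp h5).resolve_left hC
        have hc' : c = 1 := by linarith
        rw [hc'] at eb
        apply hs0'; linarith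
      · ext w
        simp only [projZeros, ray, Set.mem_setOf_eq, Set.mem_union]
        constructor
        · rintro ⟨hw1, hw0, hwz⟩
          obtain ⟨x, y, rfl⟩ := hcoord w hw1
          rw [hQexp] at hwz
          have hx : x ≠ 0 := by
            rintro rfl
            have h' : Q n * y ^ 2 = 0 := by linear_combination hwz
            have hy0 : y = 0 :=
              pow_eq_zero_iff two_ne_zero |>.mp ((mul_eq_zero.mp h').resolve_left hC)
            exact hw0 (by rw [hy0]; simp)
          have hfac : (Q n * y - s' * x) * (Q n * y + s' * x) = 0 := by
            linear_combination Q n * hwz - x ^ 2 * hs2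
          rcases mul_eq_zero.mp hfac with h5 | h5
          · left
            refine ⟨x / Q n, div_ne_zero hx hC, ?_⟩
            rw [smul_add, smul_smul, smul_smul, div_mul_cancel₀ _ hC]
            congr 1
            rw [show y = x / Q n * s' by field_simp; linarith]
          · right
            refine ⟨x / Q n, div_ne_zero hx hC, ?_⟩
            rw [smul_sub, smul_smul, smul_smul, div_mul_cancel₀ _ hC, sub_eq_add_neg,
              ← neg_smul]
            congr 1
            rw [show y = -(x / Q n * s') by field_simp; linarith]
        · rintro (⟨c, hc, rfl⟩ | ⟨c, hc, rfl⟩)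
          · refine ⟨W.smul_mem _ (W.add_mem (W.smul_mem _ hm) (W.smul_mem _ hn)),
              smul_ne_zero hc hXne, ?_⟩
            rw [QuadraticMap.map_smul]
            have hX : Q (Q n • m + s' • n) = 0 := by
              rw [hQexp]
              linear_combination Q n * hs2
            rw [hX]; simp
          · refine ⟨W.smul_mem _ (W.sub_mem (W.smul_mem _ hm) (W.smul_mem _ hn)),
              smul_ne_zero hc hYne, ?_⟩
            rw [QuadraticMap.map_smul]
            have hY : Q (Q n • m - s' • n) = 0 := by
              rw [show Q n • m - s' • n = Q n • m + (-s') • n by module, hQexp]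
              linear_combination Q n * hs2
            rw [hY]; simp
      · exact ⟨Q n, s', hC, hs0', ⟨1, one_ne_zero, (one_smul ℝ _).symm⟩,
          ⟨1, one_ne_zero, (one_smul ℝ _).symm⟩⟩
    · -- same signs: no zeros
      left
      rw [Set.eq_empty_iff_forall_notMem]
      intro w hwmem
      obtain ⟨hw1, hw0, hwz⟩ := hwmem
      obtain ⟨x, y, rfl⟩ := hcoord w hw1
      rw [hQexp] at hwz
      have hxy : x ≠ 0 ∨ y ≠ 0 := by
        by_contra h
        push_neg at h
        exact hw0 (by rw [h.1, h.2]; simp)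
      rcases hxy with hx | hy
      · have hx2 : 0 < x ^ 2 := by positivity
        have e1 : (Q m * Q n) * x ^ 2 + (Q n * y) ^ 2 = 0 := by
          linear_combination Q n * hwz
        nlinarith [sq_nonneg (Q n * y), mul_pos hpos hx2]
      · have hy2 : 0 < y ^ 2 := by positivity
        have e1 : (Q m * x) ^ 2 + (Q m * Q n) * y ^ 2 = 0 := by
          linear_combination Q m * hwz
        nlinarith [sq_nonneg (Q m * x), mul_pos hpos hy2]
end

section
/- Let A, B, C, D ∈ ℝ² with no three collinear, let ℓ be a line containing none of A, B, C, D, and let M ∈ ℓ. Suppose there are conics f₁ and f₂ through A, B, C, D such that the intersection of the zero set of f₁ with ℓ is exactly {P, Q} with P ≠ Q and M = (P + Q)/2, the intersection of the zero set of f₂ with ℓ is exactly {S, T} with S ≠ T and M = (S + T)/2, and {P, Q} ≠ {S, T}. Then every conic f through A, B, C, D meets ℓ either in the empty set, or exactly in {M}, or exactly in a pair of distinct points whose midpoint is M. -/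
namespace Klamkin

noncomputable section

/-- cross product test for collinearity of `P, Q, R`. -/
def cross (P Q R : ℝ × ℝ) : ℝ := (R.1 - P.1) * (Q.2 - P.2) - (R.2 - P.2) * (Q.1 - P.1)

lemma cross_self_left (P Q : ℝ × ℝ) : cross P Q P = 0 := by unfold cross; ring

lemma cross_self_right (P Q : ℝ × ℝ) : cross P Q Q = 0 := by unfold cross; ring

lemma collinear_of_cross_eq_zero {P Q R : ℝ × ℝ} (h : cross P Q R = 0) :
    Collinear ℝ ({P, Q, R} : Set (ℝ × ℝ)) := by
  rw [collinear_iff_of_mem (Set.mem_insert P {Q, R})]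
  unfold cross at h
  by_cases hQ : Q = P
  · refine ⟨R - P, ?_⟩
    intro p hp
    simp only [Set.mem_insert_iff, Set.mem_singleton_iff] at hp
    rcases hp with rfl | rfl | rfl
    · exact ⟨0, by simp⟩
    · exact ⟨0, by simp [hQ]⟩
    · exact ⟨1, by simp [vadd_eq_add]⟩
  · refine ⟨Q - P, ?_⟩
    have hQP : Q.1 ≠ P.1 ∨ Q.2 ≠ P.2 := by
      by_contra hc
      push_neg at hc
      exact hQ (Prod.ext hc.1 hc.2)
    intro p hp
    simp only [Set.mem_insert_iff, Set.mem_singleton_iff] at hp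
    rcases hp with rfl | rfl | rfl
    · exact ⟨0, by simp⟩
    · exact ⟨1, by simp [vadd_eq_add]⟩
    · rcases hQP with h1 | h2
      · refine ⟨(p.1 - P.1) / (Q.1 - P.1), ?_⟩
        have hne : Q.1 - P.1 ≠ 0 := sub_ne_zero.mpr h1
        apply Prod.ext
        · simp only [vadd_eq_add, Prod.fst_add, Prod.smul_fst, Prod.fst_sub, smul_eq_mul]
          field_simp
          ring
        · simp only [vadd_eq_add, Prod.snd_add, Prod.smul_snd, Prod.snd_sub, smul_eq_mul]
          field_simp
          linear_combination -h
      · refine ⟨(p.2 - P.2) / (Q.2 - P.2), ?_⟩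
        have hne : Q.2 - P.2 ≠ 0 := sub_ne_zero.mpr h2
        apply Prod.ext
        · simp only [vadd_eq_add, Prod.fst_add, Prod.smul_fst, Prod.fst_sub, smul_eq_mul]
          field_simp
          linear_combination h
        · simp only [vadd_eq_add, Prod.snd_add, Prod.smul_snd, Prod.snd_sub, smul_eq_mul]
          field_simp
          ring

lemma cross_ne_zero {P Q R : ℝ × ℝ} (h : ¬ Collinear ℝ ({P, Q, R} : Set (ℝ × ℝ))) :
    cross P Q R ≠ 0 := fun hc => h (collinear_of_cross_eq_zero hc)

/-- the evaluation of a coefficient vector at a point, as a linear map. -/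
def rowMap (p : ℝ × ℝ) : (Fin 6 → ℝ) →ₗ[ℝ] ℝ where
  toFun v := v 0 * p.1 ^ 2 + v 1 * (p.1 * p.2) + v 2 * p.2 ^ 2 + v 3 * p.1 + v 4 * p.2 + v 5
  map_add' x y := by simp only [Pi.add_apply]; ring
  map_smul' r x := by simp only [Pi.smul_apply, smul_eq_mul, RingHom.id_apply]; ring

def toVec (f : Conic) : Fin 6 → ℝ := ![f.a, f.b, f.c, f.d, f.e, f.g]

lemma cons_val_five {α : Type*} (a b c d e f : α) : ![a, b, c, d, e, f] (5 : Fin 6) = f := rfl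

lemma rowMap_toVec (f : Conic) (p : ℝ × ℝ) : rowMap p (toVec f) = f.eval p := by
  simp only [rowMap, toVec, LinearMap.coe_mk, AddHom.coe_mk, Conic.eval,
    Matrix.cons_val_zero, Matrix.cons_val_one, Matrix.head_cons, Matrix.cons_val_two, Matrix.tail_cons, Matrix.cons_val_three, Matrix.cons_val_four, cons_val_five]
  ring

def linesVec (a1 b1 c1 a2 b2 c2 : ℝ) : Fin 6 → ℝ :=
  ![a1 * a2, a1 * b2 + a2 * b1, b1 * b2, a1 * c2 + a2 * c1, b1 * c2 + b2 * c1, c1 * c2]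

lemma rowMap_linesVec (p : ℝ × ℝ) (a1 b1 c1 a2 b2 c2 : ℝ) :
    rowMap p (linesVec a1 b1 c1 a2 b2 c2)
      = (a1 * p.1 + b1 * p.2 + c1) * (a2 * p.1 + b2 * p.2 + c2) := by
  simp only [rowMap, linesVec, LinearMap.coe_mk, AddHom.coe_mk,
    Matrix.cons_val_zero, Matrix.cons_val_one, Matrix.head_cons, Matrix.cons_val_two, Matrix.tail_cons, Matrix.cons_val_three, Matrix.cons_val_four, cons_val_five]
  ring

/-- coefficient vector of the product of the line `PQ` and the line `P'Q'`. -/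
def prodVec (P Q P' Q' : ℝ × ℝ) : Fin 6 → ℝ :=
  linesVec (Q.2 - P.2) (-(Q.1 - P.1)) (P.2 * (Q.1 - P.1) - P.1 * (Q.2 - P.2))
           (Q'.2 - P'.2) (-(Q'.1 - P'.1)) (P'.2 * (Q'.1 - P'.1) - P'.1 * (Q'.2 - P'.2))

lemma rowMap_prodVec (p P Q P' Q' : ℝ × ℝ) :
    rowMap p (prodVec P Q P' Q') = cross P Q p * cross P' Q' p := by
  rw [prodVec, rowMap_linesVec]; unfold cross; ring

def phi (A B C D : ℝ × ℝ) : (Fin 6 → ℝ) →ₗ[ℝ] (Fin 4 → ℝ) :=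
  LinearMap.pi fun i => rowMap (![A, B, C, D] i)

lemma phi_apply (A B C D : ℝ × ℝ) (v : Fin 6 → ℝ) (i : Fin 4) :
    phi A B C D v i = rowMap (![A, B, C, D] i) v := rfl

lemma setperm1 (X Y Z : ℝ × ℝ) : ({X, Y, Z} : Set (ℝ × ℝ)) = {Z, X, Y} := by
  ext x; simp only [Set.mem_insert_iff, Set.mem_singleton_iff]; tauto

lemma setperm2 (X Y Z : ℝ × ℝ) : ({X, Y, Z} : Set (ℝ × ℝ)) = {X, Z, Y} := by
  ext x; simp only [Set.mem_insert_iff, Set.mem_singleton_iff]; tauto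

lemma fin4_two : (⟨2, by omega⟩ : Fin 4) = 2 := rfl
lemma fin4_three : (⟨3, by omega⟩ : Fin 4) = 3 := rfl

lemma pencil (A B C D : ℝ × ℝ) (hgen : NoThreeCollinear A B C D)
    (f f₁ f₂ : Conic) (hf : f.Through A B C D) (h1 : f₁.Through A B C D)
    (h2 : f₂.Through A B C D) :
    ∃ g : Fin 3 → ℝ, (g 0 ≠ 0 ∨ g 1 ≠ 0 ∨ g 2 ≠ 0) ∧
      g 0 • toVec f + g 1 • toVec f₁ + g 2 • toVec f₂ = 0 := by
  obtain ⟨nABC, nABD, nACD, nBCD⟩ := hgen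
  have c0 : cross B C A ≠ 0 := cross_ne_zero (by rw [setperm1 B C A]; exact nABC)
  have c0' : cross B D A ≠ 0 := cross_ne_zero (by rw [setperm1 B D A]; exact nABD)
  have c1 : cross A C B ≠ 0 := cross_ne_zero (by rw [setperm2 A C B]; exact nABC)
  have c1' : cross A D B ≠ 0 := cross_ne_zero (by rw [setperm2 A D B]; exact nABD)
  have c2 : cross A B C ≠ 0 := cross_ne_zero nABC
  have c2' : cross A D C ≠ 0 := cross_ne_zero (by rw [setperm2 A D C]; exact nACD)
  have c3 : cross A B D ≠ 0 := cross_ne_zero nABD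
  have c3' : cross A C D ≠ 0 := cross_ne_zero nACD
  have hsurj : Function.Surjective (phi A B C D) := by
    intro y
    refine ⟨(y 0 / (cross B C A * cross B D A)) • prodVec B C B D
          + (y 1 / (cross A C B * cross A D B)) • prodVec A C A D
          + (y 2 / (cross A B C * cross A D C)) • prodVec A B A D
          + (y 3 / (cross A B D * cross A C D)) • prodVec A B A C, ?_⟩
    funext i
    rw [map_add, map_add, map_add, map_smul, map_smul, map_smul, map_smul]
    fin_cases i <;>
      · simp only [Pi.add_apply, Pi.smul_apply, smul_eq_mul, phi_apply, Fin.isValue,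
          Matrix.cons_val_zero, Matrix.cons_val_one, Matrix.head_cons, Fin.mk_one,
          Matrix.cons_val_two, Matrix.tail_cons, Matrix.cons_val_three, Fin.zero_eta, fin4_two, fin4_three,
          rowMap_prodVec, cross_self_left, cross_self_right, mul_zero, zero_mul,
          add_zero, zero_add]
        field_simp
  have hker2 : Module.finrank ℝ (LinearMap.ker (phi A B C D)) ≤ 2 := by
    have h := LinearMap.finrank_range_add_finrank_ker (phi A B C D)
    rw [LinearMap.range_eq_top.mpr hsurj, finrank_top, Module.finrank_fin_fun,
      Module.finrank_fin_fun] at h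
    omega
  have mem : ∀ (h : Conic), h.Through A B C D → toVec h ∈ LinearMap.ker (phi A B C D) := by
    intro h hthr
    rw [LinearMap.mem_ker]
    funext i
    fin_cases i
    · show rowMap A (toVec h) = 0
      rw [rowMap_toVec]; exact hthr.1
    · show rowMap B (toVec h) = 0
      rw [rowMap_toVec]; exact hthr.2.1
    · show rowMap C (toVec h) = 0
      rw [rowMap_toVec]; exact hthr.2.2.1
    · show rowMap D (toVec h) = 0
      rw [rowMap_toVec]; exact hthr.2.2.2
  set K := LinearMap.ker (phi A B C D)
  let w : Fin 3 → K := ![⟨toVec f, mem f hf⟩, ⟨toVec f₁, mem f₁ h1⟩, ⟨toVec f₂, mem f₂ h2⟩]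
  have hnli : ¬ LinearIndependent ℝ w := by
    intro hli
    have hcard := hli.fintype_card_le_finrank
    rw [Fintype.card_fin] at hcard
    omega
  obtain ⟨g, hg, i, hgi⟩ := Fintype.not_linearIndependent_iff.mp hnli
  refine ⟨g, ?_, ?_⟩
  · fin_cases i
    · exact Or.inl hgi
    · exact Or.inr (Or.inl hgi)
    · exact Or.inr (Or.inr hgi)
  · have hval := congrArg Subtype.val hg
    simpa [Fin.sum_univ_three, w] using hval

def qa (f : Conic) (u : ℝ × ℝ) : ℝ := f.a * u.1 ^ 2 + f.b * (u.1 * u.2) + f.c * u.2 ^ 2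

def qb (f : Conic) (M u : ℝ × ℝ) : ℝ :=
  2 * f.a * M.1 * u.1 + f.b * (M.1 * u.2 + M.2 * u.1) + 2 * f.c * M.2 * u.2 + f.d * u.1 + f.e * u.2

def qc (f : Conic) (M : ℝ × ℝ) : ℝ := f.eval M

lemma evalLine (f : Conic) (M u : ℝ × ℝ) (t : ℝ) :
    f.eval (M + t • u) = qa f u * t ^ 2 + qb f M u * t + qc f M := by
  simp only [Conic.eval, qa, qb, qc, Prod.fst_add, Prod.snd_add, Prod.smul_fst, Prod.smul_snd,
    smul_eq_mul]
  ring

lemma ne_zero_coord {u : ℝ × ℝ} (hu : u ≠ 0) : u.1 ≠ 0 ∨ u.2 ≠ 0 := by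
  by_contra hc
  push_neg at hc
  exact hu (Prod.ext hc.1 hc.2)

lemma param_inj {u : ℝ × ℝ} (hu : u ≠ 0) {M : ℝ × ℝ} {t s : ℝ}
    (h : M + t • u = M + s • u) : t = s := by
  have h1 := congrArg Prod.fst h
  have h2 := congrArg Prod.snd h
  simp only [Prod.fst_add, Prod.smul_fst, smul_eq_mul, Prod.snd_add, Prod.smul_snd,
    add_right_inj] at h1 h2
  rcases ne_zero_coord hu with h | h
  · exact mul_right_cancel₀ h h1
  · exact mul_right_cancel₀ h h2

lemma two_point {M u : ℝ × ℝ} (hu : u ≠ 0) (f : Conic) {P Q : ℝ × ℝ} (hPQ : P ≠ Q)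
    (hM : M = midpoint ℝ P Q) (hℓ : {p ∈ parmLine M u | f.eval p = 0} = {P, Q}) :
    ∃ r : ℝ, r ≠ 0 ∧ P = M + r • u ∧ Q = M + (-r) • u ∧
      qb f M u = 0 ∧ qa f u ≠ 0 ∧ qc f M = -(qa f u * r ^ 2) := by
  have hPmem : P ∈ {p ∈ parmLine M u | f.eval p = 0} := by
    rw [hℓ]; exact Set.mem_insert _ _
  have hQmem : Q ∈ {p ∈ parmLine M u | f.eval p = 0} := by
    rw [hℓ]; exact Set.mem_insert_of_mem _ rfl
  obtain ⟨⟨tP, hPt⟩, hPe⟩ := hPmem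
  obtain ⟨⟨tQ, hQt⟩, hQe⟩ := hQmem
  have hadd : M + M = P + Q := by rw [hM]; exact midpoint_add_self ℝ P Q
  have hadd1 := congrArg Prod.fst hadd
  have hadd2 := congrArg Prod.snd hadd
  have hPt1 := congrArg Prod.fst hPt
  have hPt2 := congrArg Prod.snd hPt
  have hQt1 := congrArg Prod.fst hQt
  have hQt2 := congrArg Prod.snd hQt
  simp only [Prod.fst_add, Prod.snd_add, Prod.smul_fst, Prod.smul_snd, smul_eq_mul] at hadd1 hadd2 hPt1 hPt2 hQt1 hQt2
  have hsum : tP + tQ = 0 := by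
    rcases ne_zero_coord hu with h | h
    · have : (tP + tQ) * u.1 = 0 := by linarith
      exact (mul_eq_zero.mp this).resolve_right h
    · have : (tP + tQ) * u.2 = 0 := by linarith
      exact (mul_eq_zero.mp this).resolve_right h
  have htQ : tQ = -tP := by linarith
  have hr0 : tP ≠ 0 := by
    intro h0
    apply hPQ
    rw [hPt, hQt, h0, htQ, h0]
    norm_num
  rw [hPt, evalLine] at hPe
  rw [hQt, htQ, evalLine] at hQe
  have hqb : qb f M u = 0 := by
    have hq : qb f M u * tP = 0 := by nlinarith [hPe, hQe]
    exact (mul_eq_zero.mp hq).resolve_right hr0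
  have hqc : qc f M = -(qa f u * tP ^ 2) := by nlinarith [hPe, hQe]
  have hqa : qa f u ≠ 0 := by
    intro h0
    have hall : ∀ t : ℝ, f.eval (M + t • u) = 0 := by
      intro t
      rw [evalLine, h0, hqb, hqc, h0]
      ring
    have hmem3 : (M + (|tP| + 1) • u) ∈ {p ∈ parmLine M u | f.eval p = 0} :=
      ⟨⟨|tP| + 1, rfl⟩, hall _⟩
    rw [hℓ] at hmem3
    have habs1 := le_abs_self tP
    have habs2 := neg_abs_le tP
    rcases hmem3 with h3 | h3
    · rw [hPt] at h3
      have := param_inj hu h3.symm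
      linarith
    · rw [Set.mem_singleton_iff, hQt, htQ] at h3
      have := param_inj hu h3.symm
      linarith
  exact ⟨tP, hr0, hPt, by rw [hQt, htQ], hqb, hqa, hqc⟩

end

end Klamkin

open Klamkin

/-- **Klamkin's extension of the butterfly theorem.** If two conics through the
four base points cut the line `ℓ` in two different pairs of distinct points with
the same midpoint `M`, then every conic through the four base points meets `ℓ`
either not at all, or exactly at `M`, or exactly in a pair of distinct points
with midpoint `M`. -/
theorem klamkin_butterfly
    (A B C D : ℝ × ℝ) (hgen : NoThreeCollinear A B C D)
    (u : ℝ × ℝ) (hu : u ≠ 0) (M : ℝ × ℝ)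
    (hA : A ∉ parmLine M u) (hB : B ∉ parmLine M u)
    (hC : C ∉ parmLine M u) (hD : D ∉ parmLine M u)
    (f₁ : Conic) (hf₁0 : f₁.Nonzero) (hf₁ : f₁.Through A B C D)
    (P Q : ℝ × ℝ) (hPQ : P ≠ Q) (hMPQ : M = midpoint ℝ P Q)
    (hf₁ℓ : {p ∈ parmLine M u | f₁.eval p = 0} = {P, Q})
    (f₂ : Conic) (hf₂0 : f₂.Nonzero) (hf₂ : f₂.Through A B C D)
    (S T : ℝ × ℝ) (hST : S ≠ T) (hMST : M = midpoint ℝ S T)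
    (hf₂ℓ : {p ∈ parmLine M u | f₂.eval p = 0} = {S, T})
    (hdiff : ({P, Q} : Set (ℝ × ℝ)) ≠ {S, T}) :
    ∀ f : Conic, f.Nonzero → f.Through A B C D →
      {p ∈ parmLine M u | f.eval p = 0} = ∅ ∨
      {p ∈ parmLine M u | f.eval p = 0} = {M} ∨
      ∃ X Y : ℝ × ℝ, X ≠ Y ∧ M = midpoint ℝ X Y ∧
        {p ∈ parmLine M u | f.eval p = 0} = {X, Y} := by
  intro f hf0 hfT
  -- analyze the two reference conics
  obtain ⟨r, hr0, hPr, hQr, hqb1, hqa1, hqc1⟩ := two_point hu f₁ hPQ hMPQ hf₁ℓ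
  obtain ⟨s, hs0, hSr, hTr, hqb2, hqa2, hqc2⟩ := two_point hu f₂ hST hMST hf₂ℓ
  -- the two root pairs are different
  have hrs : r ^ 2 ≠ s ^ 2 := by
    intro h
    have hfac : (s - r) * (s + r) = 0 := by linear_combination -h
    apply hdiff
    rcases mul_eq_zero.mp hfac with h' | h'
    · have hsr : s = r := by linarith
      rw [hPr, hQr, hSr, hTr, hsr]
    · have hsr : s = -r := by linarith
      rw [hPr, hQr, hSr, hTr, hsr, neg_neg, Set.pair_comm]
  have hdet : qa f₁ u * qc f₂ M - qa f₂ u * qc f₁ M ≠ 0 := by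
    rw [hqc1, hqc2]
    have : qa f₁ u * -(qa f₂ u * s ^ 2) - qa f₂ u * -(qa f₁ u * r ^ 2)
        = qa f₁ u * qa f₂ u * (r ^ 2 - s ^ 2) := by ring
    rw [this]
    exact mul_ne_zero (mul_ne_zero hqa1 hqa2) (sub_ne_zero.mpr hrs)
  -- the pencil relation
  obtain ⟨g, hgnz, hsum⟩ := pencil A B C D hgen f f₁ f₂ hfT hf₁ hf₂
  have hcomp : ∀ j : Fin 6, g 0 * toVec f j + g 1 * toVec f₁ j + g 2 * toVec f₂ j = 0 := by
    intro j
    have := congrFun hsum j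
    simpa using this
  have ha := hcomp 0
  have hb := hcomp 1
  have hc := hcomp 2
  have hd := hcomp 3
  have he := hcomp 4
  have hgg := hcomp 5
  simp only [toVec, Matrix.cons_val_zero, Matrix.cons_val_one, Matrix.head_cons,
    Matrix.cons_val_two, Matrix.tail_cons, Matrix.cons_val_three, Matrix.cons_val_four,
    cons_val_five] at ha hb hc hd he hgg
  -- linear relations for restricted quadratic coefficients
  have hqa : g 0 * qa f u + g 1 * qa f₁ u + g 2 * qa f₂ u = 0 := by
    simp only [qa]
    linear_combination u.1 ^ 2 * ha + (u.1 * u.2) * hb + u.2 ^ 2 * hc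
  have hqb : g 0 * qb f M u + g 1 * qb f₁ M u + g 2 * qb f₂ M u = 0 := by
    simp only [qb]
    linear_combination (2 * M.1 * u.1) * ha + (M.1 * u.2 + M.2 * u.1) * hb
      + (2 * M.2 * u.2) * hc + u.1 * hd + u.2 * he
  have hqc : g 0 * qc f M + g 1 * qc f₁ M + g 2 * qc f₂ M = 0 := by
    simp only [qc, Conic.eval]
    linear_combination M.1 ^ 2 * ha + (M.1 * M.2) * hb + M.2 ^ 2 * hc + M.1 * hd
      + M.2 * he + hgg
  -- g 0 ≠ 0
  have hg0 : g 0 ≠ 0 := by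
    intro h0
    rw [h0, zero_mul, zero_add] at hqa hqc
    have h1 : g 1 * (qa f₁ u * qc f₂ M - qa f₂ u * qc f₁ M) = 0 := by
      linear_combination qc f₂ M * hqa - qa f₂ u * hqc
    have hg1 : g 1 = 0 := (mul_eq_zero.mp h1).resolve_right hdet
    rw [hg1, zero_mul, zero_add] at hqa
    have hg2 : g 2 = 0 := (mul_eq_zero.mp hqa).resolve_right hqa2
    rcases hgnz with h | h | h
    · exact h h0
    · exact h hg1
    · exact h hg2
  -- the restricted quadratic of f has no linear term
  have hQb : qb f M u = 0 := by
    rw [hqb1, hqb2, mul_zero, mul_zero, add_zero, add_zero] at hqb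
    exact (mul_eq_zero.mp hqb).resolve_left hg0
  -- the restricted quadratic of f is not identically zero
  have hnz : qa f u = 0 → qc f M ≠ 0 := by
    intro hA0 hC0
    rw [hA0, mul_zero, zero_add] at hqa
    rw [hC0, mul_zero, zero_add] at hqc
    have h1 : g 1 * (qa f₁ u * qc f₂ M - qa f₂ u * qc f₁ M) = 0 := by
      linear_combination qc f₂ M * hqa - qa f₂ u * hqc
    have hg1 : g 1 = 0 := (mul_eq_zero.mp h1).resolve_right hdet
    rw [hg1, zero_mul, zero_add] at hqa
    have hg2 : g 2 = 0 := (mul_eq_zero.mp hqa).resolve_right hqa2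
    rw [hg1, hg2] at ha hb hc hd he hgg
    apply hf0
    refine ⟨?_, ?_, ?_, ?_, ?_, ?_⟩
    · have : g 0 * f.a = 0 := by linarith
      exact (mul_eq_zero.mp this).resolve_left hg0
    · have : g 0 * f.b = 0 := by linarith
      exact (mul_eq_zero.mp this).resolve_left hg0
    · have : g 0 * f.c = 0 := by linarith
      exact (mul_eq_zero.mp this).resolve_left hg0
    · have : g 0 * f.d = 0 := by linarith
      exact (mul_eq_zero.mp this).resolve_left hg0
    · have : g 0 * f.e = 0 := by linarith
      exact (mul_eq_zero.mp this).resolve_left hg0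
    · have : g 0 * f.g = 0 := by linarith
      exact (mul_eq_zero.mp this).resolve_left hg0
  by_cases hQa : qa f u = 0
  · -- empty intersection
    left
    have hQc := hnz hQa
    ext p
    simp only [Set.mem_setOf_eq, Set.mem_empty_iff_false, iff_false]
    rintro ⟨⟨t, rfl⟩, hpe⟩
    rw [evalLine, hQa, hQb] at hpe
    exact hQc (by linarith)
  · rcases lt_trichotomy (-(qc f M) / qa f u) 0 with hk | hk | hk
    · -- empty intersection
      left
      ext p
      simp only [Set.mem_setOf_eq, Set.mem_empty_iff_false, iff_false]
      rintro ⟨⟨t, rfl⟩, hpe⟩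
      rw [evalLine, hQb] at hpe
      have ht2 : t ^ 2 = -(qc f M) / qa f u := by
        field_simp
        linear_combination hpe
      rw [← ht2] at hk
      exact absurd hk (not_lt.mpr (sq_nonneg t))
    · -- intersection is exactly {M}
      right; left
      have hQc : qc f M = 0 := by
        rcases div_eq_zero_iff.mp hk with h | h
        · linarith [neg_eq_zero.mp h]
        · exact absurd h hQa
      ext p
      simp only [Set.mem_setOf_eq, Set.mem_singleton_iff]
      constructor
      · rintro ⟨⟨t, rfl⟩, hpe⟩
        rw [evalLine, hQb, hQc] at hpe
        have ht2 : qa f u * t ^ 2 = 0 := by linarith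
        have ht : t = 0 :=
          (pow_eq_zero_iff two_ne_zero).mp ((mul_eq_zero.mp ht2).resolve_left hQa)
        rw [ht]
        simp
      · rintro rfl
        exact ⟨⟨0, by simp⟩, hQc⟩
    · -- intersection is a symmetric pair
      right; right
      set k := -(qc f M) / qa f u with hk_def
      have hρ2 : Real.sqrt k ^ 2 = k := Real.sq_sqrt hk.le
      have hρpos : 0 < Real.sqrt k := Real.sqrt_pos.mpr hk
      have hprod : qa f u * k + qc f M = 0 := by
        rw [hk_def]
        field_simp
        ring
      refine ⟨M + Real.sqrt k • u, M + (-Real.sqrt k) • u, ?_, ?_, ?_⟩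
      · intro h
        have := param_inj hu h
        linarith
      · have hXY : (M + Real.sqrt k • u) + (M + (-Real.sqrt k) • u) = M + M := by
          apply Prod.ext
          · simp only [Prod.fst_add, Prod.smul_fst, smul_eq_mul]
            ring
          · simp only [Prod.snd_add, Prod.smul_snd, smul_eq_mul]
            ring
        have hmid : midpoint ℝ (M + Real.sqrt k • u) (M + (-Real.sqrt k) • u) = M := by
          rw [midpoint_eq_smul_add, hXY, ← midpoint_eq_smul_add, midpoint_self]
        exact hmid.symm
      · ext p
        simp only [Set.mem_setOf_eq, Set.mem_insert_iff, Set.mem_singleton_iff]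
        constructor
        · rintro ⟨⟨t, rfl⟩, hpe⟩
          rw [evalLine, hQb] at hpe
          have ht2 : t ^ 2 = Real.sqrt k ^ 2 := by
            rw [hρ2]
            have h1 : qa f u * t ^ 2 = qa f u * k := by linarith
            exact mul_left_cancel₀ hQa h1
          have hfac : (t - Real.sqrt k) * (t + Real.sqrt k) = 0 := by
            linear_combination ht2
          rcases mul_eq_zero.mp hfac with h | h
          · left
            rw [show t = Real.sqrt k by linarith]
          · right
            rw [show t = -Real.sqrt k by linarith]
        · rintro (rfl | rfl)
          · refine ⟨⟨Real.sqrt k, rfl⟩, ?_⟩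
            rw [evalLine, hQb, hρ2]
            linarith
          · refine ⟨⟨-Real.sqrt k, rfl⟩, ?_⟩
            rw [evalLine, hQb, neg_pow, hρ2]
            simp only [neg_one_pow_eq_one_iff_even, mul_zero, zero_mul]
            linarith [hprod]
end

section
/- Let S be a circle in the Euclidean plane ℝ² with center O and radius r > 0. Let P, Q ∈ S with P ≠ Q and let M = (P + Q)/2. Let A, B, C, D ∈ S be pairwise distinct points, each distinct from P and from Q, such that M lies on the line through A and B and on the line through C and D, and these two lines are distinct. Suppose X is a point lying on both the line through A and D and the line through P and Q, and Y is a point lying on both the line through B and C and the line through P and Q. Then M = (X + Y)/2. -/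
lemma butterfly_alg (e1 e2 u1 u2 v1 v2 w1 w2 a b c d x y E : ℝ)
    (hE : E < 0)
    (heu : e1*u1 + e2*u2 = 0)
    (habs : (a+b)*(v1^2+v2^2) = -2*(e1*v1+e2*v2))
    (habp : a*b*(v1^2+v2^2) = E)
    (hcds : (c+d)*(w1^2+w2^2) = -2*(e1*w1+e2*w2))
    (hcdp : c*d*(w1^2+w2^2) = E)
    (hK : v1*w2 - v2*w1 ≠ 0)
    (hx : x*(a*(v1*u2-v2*u1) + d*(u1*w2-u2*w1)) = a*d*(v1*w2-v2*w1))
    (hy : y*(b*(v1*u2-v2*u1) + c*(u1*w2-u2*w1)) = b*c*(v1*w2-v2*w1)) :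
    x + y = 0 := by
  have hv2 : v1^2+v2^2 ≠ 0 := by
    intro h; exact hE.ne (by rw [← habp, h]; ring)
  have hw2 : w1^2+w2^2 ≠ 0 := by
    intro h; exact hE.ne (by rw [← hcdp, h]; ring)
  have ha : a ≠ 0 := by intro h; exact hE.ne (by rw [← habp, h]; ring)
  have hb : b ≠ 0 := by intro h; exact hE.ne (by rw [← habp, h]; ring)
  have hc : c ≠ 0 := by intro h; exact hE.ne (by rw [← hcdp, h]; ring)
  have hd : d ≠ 0 := by intro h; exact hE.ne (by rw [← hcdp, h]; ring)
  have hDx : a*(v1*u2-v2*u1) + d*(u1*w2-u2*w1) ≠ 0 := by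
    intro h
    rw [h, mul_zero] at hx
    exact (mul_ne_zero (mul_ne_zero ha hd) hK) hx.symm
  have hDy : b*(v1*u2-v2*u1) + c*(u1*w2-u2*w1) ≠ 0 := by
    intro h
    rw [h, mul_zero] at hy
    exact (mul_ne_zero (mul_ne_zero hb hc) hK) hy.symm
  have h2 : (a*b*(c+d)*(v1*u2-v2*u1) + c*d*(a+b)*(u1*w2-u2*w1))
      * ((v1^2+v2^2)*(w1^2+w2^2)) = 0 := by
    linear_combination ((v1*u2-v2*u1)*(c+d)*(w1^2+w2^2))*habp
      + ((v1*u2-v2*u1)*E)*hcds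
      + ((u1*w2-u2*w1)*(a+b)*(v1^2+v2^2))*hcdp
      + ((u1*w2-u2*w1)*E)*habs
      + (-2*E*(v1*w2-v2*w1))*heu
  have key : a*b*(c+d)*(v1*u2-v2*u1) + c*d*(a+b)*(u1*w2-u2*w1) = 0 :=
    (mul_eq_zero.mp h2).resolve_right (mul_ne_zero hv2 hw2)
  have final : (x+y) * ((a*(v1*u2-v2*u1) + d*(u1*w2-u2*w1))
      * (b*(v1*u2-v2*u1) + c*(u1*w2-u2*w1))) = 0 := by
    linear_combination (b*(v1*u2-v2*u1) + c*(u1*w2-u2*w1))*hx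
      + (a*(v1*u2-v2*u1) + d*(u1*w2-u2*w1))*hy
      + (v1*w2-v2*w1)*key
  exact (mul_eq_zero.mp final).resolve_right (mul_ne_zero hDx hDy)

lemma mem_pair_sub {A B p : EuclideanSpace ℝ (Fin 2)}
    (h : p ∈ affineSpan ℝ ({A, B} : Set (EuclideanSpace ℝ (Fin 2)))) :
    ∃ t : ℝ, p - A = t • (B - A) := by
  have h' : (p -ᵥ A) +ᵥ A ∈ affineSpan ℝ ({A, B} : Set (EuclideanSpace ℝ (Fin 2))) := by
    rwa [vsub_vadd]
  obtain ⟨t, ht⟩ := vadd_left_mem_affineSpan_pair.mp h'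
  exact ⟨t, by simpa [vsub_eq_sub] using ht.symm⟩

lemma sphere_coord {O p : EuclideanSpace ℝ (Fin 2)} {r : ℝ} (h : p ∈ Metric.sphere O r) :
    (p 0 - O 0)^2 + (p 1 - O 1)^2 = r^2 := by
  have h1 : dist p O ^ 2 = r ^ 2 := by rw [Metric.mem_sphere.mp h]
  rw [EuclideanSpace.dist_eq, Real.sq_sqrt (by positivity)] at h1
  simpa [Fin.sum_univ_two, Real.dist_eq, sq_abs] using h1

lemma coord_ne {p q : EuclideanSpace ℝ (Fin 2)} (h : p ≠ q) :
    (p 0 - q 0)^2 + (p 1 - q 1)^2 ≠ 0 := by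
  intro h0
  apply h
  have h1 : p 0 = q 0 := by nlinarith [sq_nonneg (p 0 - q 0), sq_nonneg (p 1 - q 1)]
  have h2 : p 1 = q 1 := by nlinarith [sq_nonneg (p 0 - q 0), sq_nonneg (p 1 - q 1)]
  ext i
  fin_cases i <;> assumption

example (a b c : EuclideanSpace ℝ (Fin 2)) (t : ℝ) (h : a - b = t • c) (i : Fin 2) :
    a i - b i = t * c i := by
  have := congrArg (fun z => z i) h
  simpa using this

lemma cross_ne_zero {A B C D M : EuclideanSpace ℝ (Fin 2)} {t₁ t₂ : ℝ}
    (hAB : A ≠ B) (hCD : C ≠ D)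
    (ht1 : M - A = t₁ • (B - A)) (ht2 : M - C = t₂ • (D - C))
    (hlines : affineSpan ℝ ({A, B} : Set (EuclideanSpace ℝ (Fin 2))) ≠
      affineSpan ℝ ({C, D} : Set (EuclideanSpace ℝ (Fin 2)))) :
    (B 0 - A 0)*(D 1 - C 1) - (B 1 - A 1)*(D 0 - C 0) ≠ 0 := by
  intro hcross
  have hv2 : (B 0 - A 0)^2 + (B 1 - A 1)^2 ≠ 0 := coord_ne hAB.symm
  have hw2 : (D 0 - C 0)^2 + (D 1 - C 1)^2 ≠ 0 := coord_ne hCD.symm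
  set l : ℝ := ((B 0 - A 0)*(D 0 - C 0) + (B 1 - A 1)*(D 1 - C 1)) /
      ((D 0 - C 0)^2 + (D 1 - C 1)^2) with hl
  have hlam : B - A = l • (D - C) := by
    ext i
    fin_cases i
    · show B 0 - A 0 = (l • (D - C)) 0
      simp only [PiLp.smul_apply, PiLp.sub_apply, smul_eq_mul, hl]
      field_simp
      linear_combination (D 1 - C 1) * hcross
    · show B 1 - A 1 = (l • (D - C)) 1
      simp only [PiLp.smul_apply, PiLp.sub_apply, smul_eq_mul, hl]
      field_simp
      linear_combination (-(D 0 - C 0)) * hcross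
  have hlamne : l ≠ 0 := by
    intro h0
    have hnum : (B 0 - A 0)*(D 0 - C 0) + (B 1 - A 1)*(D 1 - C 1) = 0 :=
      (div_eq_zero_iff.mp (hl.symm.trans h0)).resolve_right hw2
    apply mul_ne_zero hv2 hw2
    linear_combination ((B 0 - A 0)*(D 0 - C 0) + (B 1 - A 1)*(D 1 - C 1))*hnum
      + ((B 0 - A 0)*(D 1 - C 1) - (B 1 - A 1)*(D 0 - C 0))*hcross
  have hw_lam : D - C = l⁻¹ • (B - A) := by
    rw [hlam, smul_smul, inv_mul_cancel₀ hlamne, one_smul]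
  have hACD : A ∈ affineSpan ℝ ({C, D} : Set (EuclideanSpace ℝ (Fin 2))) := by
    have hsub : A - C = (t₂ - t₁*l) • (D - C) := by
      calc A - C = (M - C) - (M - A) := by abel
        _ = t₂ • (D - C) - t₁ • (l • (D - C)) := by rw [ht2, ht1, hlam]
        _ = (t₂ - t₁*l) • (D - C) := by module
    have hAeq : A = (t₂ - t₁*l) • (D -ᵥ C) +ᵥ C := by
      simp only [vsub_eq_sub, vadd_eq_add]
      rw [← hsub]; abel
    rw [hAeq]; exact smul_vsub_vadd_mem_affineSpan_pair _ _ _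
  have hBCD : B ∈ affineSpan ℝ ({C, D} : Set (EuclideanSpace ℝ (Fin 2))) := by
    have hsub : B - C = (t₂ - (t₁ - 1)*l) • (D - C) := by
      calc B - C = (M - C) - ((M - A) - (B - A)) := by abel
        _ = t₂ • (D - C) - (t₁ • (l • (D - C)) - l • (D - C)) := by rw [ht2, ht1, hlam]
        _ = (t₂ - (t₁ - 1)*l) • (D - C) := by module
    have hBeq : B = (t₂ - (t₁ - 1)*l) • (D -ᵥ C) +ᵥ C := by
      simp only [vsub_eq_sub, vadd_eq_add]
      rw [← hsub]; abel
    rw [hBeq]; exact smul_vsub_vadd_mem_affineSpan_pair _ _ _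
  have hCAB : C ∈ affineSpan ℝ ({A, B} : Set (EuclideanSpace ℝ (Fin 2))) := by
    have hsub : C - A = (t₁ - t₂*l⁻¹) • (B - A) := by
      calc C - A = (M - A) - (M - C) := by abel
        _ = t₁ • (B - A) - t₂ • (l⁻¹ • (B - A)) := by rw [ht1, ht2, hw_lam]
        _ = (t₁ - t₂*l⁻¹) • (B - A) := by module
    have hCeq : C = (t₁ - t₂*l⁻¹) • (B -ᵥ A) +ᵥ A := by
      simp only [vsub_eq_sub, vadd_eq_add]
      rw [← hsub]; abel
    rw [hCeq]; exact smul_vsub_vadd_mem_affineSpan_pair _ _ _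
  have hDAB : D ∈ affineSpan ℝ ({A, B} : Set (EuclideanSpace ℝ (Fin 2))) := by
    have hsub : D - A = (t₁ - (t₂ - 1)*l⁻¹) • (B - A) := by
      calc D - A = (M - A) - ((M - C) - (D - C)) := by abel
        _ = t₁ • (B - A) - (t₂ • (l⁻¹ • (B - A)) - l⁻¹ • (B - A)) := by
            rw [ht1, ht2, hw_lam]
        _ = (t₁ - (t₂ - 1)*l⁻¹) • (B - A) := by module
    have hDeq : D = (t₁ - (t₂ - 1)*l⁻¹) • (B -ᵥ A) +ᵥ A := by
      simp only [vsub_eq_sub, vadd_eq_add]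
      rw [← hsub]; abel
    rw [hDeq]; exact smul_vsub_vadd_mem_affineSpan_pair _ _ _
  exact hlines (le_antisymm (affineSpan_pair_le_of_mem_of_mem hACD hBCD)
    (affineSpan_pair_le_of_mem_of_mem hCAB hDAB))

/-- **The classical butterfly theorem.** Let `PQ` be a chord of a circle with
midpoint `M`, let `AB` and `CD` be two other chords through `M`, and let the
lines `AD` and `BC` cut the line `PQ` in points `X` and `Y`. Then `M` is the
midpoint of `X` and `Y`. -/
theorem butterfly_theorem
    (O : EuclideanSpace ℝ (Fin 2)) (r : ℝ) (hr : 0 < r)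
    (P Q : EuclideanSpace ℝ (Fin 2))
    (hP : P ∈ Metric.sphere O r) (hQ : Q ∈ Metric.sphere O r) (hPQ : P ≠ Q)
    (M : EuclideanSpace ℝ (Fin 2)) (hM : M = midpoint ℝ P Q)
    (A B C D : EuclideanSpace ℝ (Fin 2))
    (hA : A ∈ Metric.sphere O r) (hB : B ∈ Metric.sphere O r)
    (hC : C ∈ Metric.sphere O r) (hD : D ∈ Metric.sphere O r)
    (hAB : A ≠ B) (hAC : A ≠ C) (hAD : A ≠ D)
    (hBC : B ≠ C) (hBD : B ≠ D) (hCD : C ≠ D)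
    (hAP : A ≠ P) (hAQ : A ≠ Q) (hBP : B ≠ P) (hBQ : B ≠ Q)
    (hCP : C ≠ P) (hCQ : C ≠ Q) (hDP : D ≠ P) (hDQ : D ≠ Q)
    (hMAB : M ∈ affineSpan ℝ ({A, B} : Set (EuclideanSpace ℝ (Fin 2))))
    (hMCD : M ∈ affineSpan ℝ ({C, D} : Set (EuclideanSpace ℝ (Fin 2))))
    (hlines : affineSpan ℝ ({A, B} : Set (EuclideanSpace ℝ (Fin 2))) ≠
      affineSpan ℝ ({C, D} : Set (EuclideanSpace ℝ (Fin 2))))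
    (X Y : EuclideanSpace ℝ (Fin 2))
    (hXAD : X ∈ affineSpan ℝ ({A, D} : Set (EuclideanSpace ℝ (Fin 2))))
    (hXPQ : X ∈ affineSpan ℝ ({P, Q} : Set (EuclideanSpace ℝ (Fin 2))))
    (hYBC : Y ∈ affineSpan ℝ ({B, C} : Set (EuclideanSpace ℝ (Fin 2))))
    (hYPQ : Y ∈ affineSpan ℝ ({P, Q} : Set (EuclideanSpace ℝ (Fin 2)))) :
    M = midpoint ℝ X Y := by
  have comp : ∀ {p q z w : EuclideanSpace ℝ (Fin 2)} {t : ℝ},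
      p - q = t • (z - w) → ∀ i, p i - q i = t * (z i - w i) := by
    intro p q z w t h i
    have := congrArg (fun f => f i) h
    simpa using this
  obtain ⟨t₁, ht1⟩ := mem_pair_sub hMAB
  obtain ⟨t₂, ht2⟩ := mem_pair_sub hMCD
  obtain ⟨t₃, ht3⟩ := mem_pair_sub hXAD
  obtain ⟨s₁, hs1⟩ := mem_pair_sub hXPQ
  obtain ⟨t₄, ht4⟩ := mem_pair_sub hYBC
  obtain ⟨s₂, hs2⟩ := mem_pair_sub hYPQ
  have hMc : ∀ i, M i = (P i + Q i)/2 := by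
    intro i
    rw [hM, midpoint_eq_smul_add, invOf_eq_inv]
    simp only [PiLp.smul_apply, PiLp.add_apply, smul_eq_mul]
    ring
  have spP := sphere_coord hP
  have spQ := sphere_coord hQ
  have spA := sphere_coord hA
  have spB := sphere_coord hB
  have spC := sphere_coord hC
  have spD := sphere_coord hD
  have m10 := comp ht1 0
  have m11 := comp ht1 1
  have m20 := comp ht2 0
  have m21 := comp ht2 1
  -- recenter the sphere equations at M
  have cA0 : A 0 - O 0 = (M 0 - O 0) + (-t₁)*(B 0 - A 0) := by linear_combination -m10
  have cA1 : A 1 - O 1 = (M 1 - O 1) + (-t₁)*(B 1 - A 1) := by linear_combination -m11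
  have cB0 : B 0 - O 0 = (M 0 - O 0) + (1-t₁)*(B 0 - A 0) := by linear_combination -m10
  have cB1 : B 1 - O 1 = (M 1 - O 1) + (1-t₁)*(B 1 - A 1) := by linear_combination -m11
  have cC0 : C 0 - O 0 = (M 0 - O 0) + (-t₂)*(D 0 - C 0) := by linear_combination -m20
  have cC1 : C 1 - O 1 = (M 1 - O 1) + (-t₂)*(D 1 - C 1) := by linear_combination -m21
  have cD0 : D 0 - O 0 = (M 0 - O 0) + (1-t₂)*(D 0 - C 0) := by linear_combination -m20
  have cD1 : D 1 - O 1 = (M 1 - O 1) + (1-t₂)*(D 1 - C 1) := by linear_combination -m21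
  have cP0 : P 0 - O 0 = (M 0 - O 0) + (-(1:ℝ)/2)*(Q 0 - P 0) := by
    linear_combination -hMc 0
  have cP1 : P 1 - O 1 = (M 1 - O 1) + (-(1:ℝ)/2)*(Q 1 - P 1) := by
    linear_combination -hMc 1
  have cQ0 : Q 0 - O 0 = (M 0 - O 0) + ((1:ℝ)/2)*(Q 0 - P 0) := by
    linear_combination -hMc 0
  have cQ1 : Q 1 - O 1 = (M 1 - O 1) + ((1:ℝ)/2)*(Q 1 - P 1) := by
    linear_combination -hMc 1
  rw [cA0, cA1] at spA
  rw [cB0, cB1] at spB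
  rw [cC0, cC1] at spC
  rw [cD0, cD1] at spD
  rw [cP0, cP1] at spP
  rw [cQ0, cQ1] at spQ
  -- hypotheses of the algebraic lemma
  have heu : (M 0 - O 0)*(Q 0 - P 0) + (M 1 - O 1)*(Q 1 - P 1) = 0 := by
    linear_combination (1/2)*spQ - (1/2)*spP
  have hu2 : (Q 0 - P 0)^2 + (Q 1 - P 1)^2 ≠ 0 := coord_ne hPQ.symm
  have hu2' : 0 < (Q 0 - P 0)^2 + (Q 1 - P 1)^2 :=
    lt_of_le_of_ne (by positivity) (Ne.symm hu2)
  have hEeq : (M 0 - O 0)^2 + (M 1 - O 1)^2 - r^2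
      = -((Q 0 - P 0)^2 + (Q 1 - P 1)^2)/4 := by
    linear_combination spP + heu
  have hEneg : (M 0 - O 0)^2 + (M 1 - O 1)^2 - r^2 < 0 := by
    rw [hEeq]; linarith
  have habs : ((-t₁)+(1-t₁))*((B 0 - A 0)^2+(B 1 - A 1)^2)
      = -2*((M 0 - O 0)*(B 0 - A 0)+(M 1 - O 1)*(B 1 - A 1)) := by
    linear_combination spB - spA
  have habp : (-t₁)*(1-t₁)*((B 0 - A 0)^2+(B 1 - A 1)^2)
      = (M 0 - O 0)^2 + (M 1 - O 1)^2 - r^2 := by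
    linear_combination (-t₁)*habs - spA
  have hcds : ((-t₂)+(1-t₂))*((D 0 - C 0)^2+(D 1 - C 1)^2)
      = -2*((M 0 - O 0)*(D 0 - C 0)+(M 1 - O 1)*(D 1 - C 1)) := by
    linear_combination spD - spC
  have hcdp : (-t₂)*(1-t₂)*((D 0 - C 0)^2+(D 1 - C 1)^2)
      = (M 0 - O 0)^2 + (M 1 - O 1)^2 - r^2 := by
    linear_combination (-t₂)*hcds - spC
  have hK := cross_ne_zero hAB hCD ht1 ht2 hlines
  -- position of X and Y relative to M
  have n10 := comp hs1 0
  have n11 := comp hs1 1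
  have n20 := comp hs2 0
  have n21 := comp hs2 1
  have cX0 : X 0 - M 0 = (s₁ - 1/2)*(Q 0 - P 0) := by linear_combination n10 - hMc 0
  have cX1 : X 1 - M 1 = (s₁ - 1/2)*(Q 1 - P 1) := by linear_combination n11 - hMc 1
  have cY0 : Y 0 - M 0 = (s₂ - 1/2)*(Q 0 - P 0) := by linear_combination n20 - hMc 0
  have cY1 : Y 1 - M 1 = (s₂ - 1/2)*(Q 1 - P 1) := by linear_combination n21 - hMc 1
  -- collinearity equations
  have k10 := comp ht3 0
  have k11 := comp ht3 1
  have j10 := comp ht4 0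
  have j11 := comp ht4 1
  have dD0 : D 0 - M 0 = (1-t₂)*(D 0 - C 0) := by linear_combination -m20
  have dD1 : D 1 - M 1 = (1-t₂)*(D 1 - C 1) := by linear_combination -m21
  have bB0 : B 0 - M 0 = (1-t₁)*(B 0 - A 0) := by linear_combination -m10
  have bB1 : B 1 - M 1 = (1-t₁)*(B 1 - A 1) := by linear_combination -m11
  have E10 : (s₁-1/2)*(Q 0 - P 0) - (-t₁)*(B 0 - A 0)
      = t₃*((1-t₂)*(D 0 - C 0) - (-t₁)*(B 0 - A 0)) := by
    linear_combination k10 - cX0 - m10 - t₃*dD0 - t₃*m10 + 2*t₃*m10 - 2*t₃*m20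
  have E11 : (s₁-1/2)*(Q 1 - P 1) - (-t₁)*(B 1 - A 1)
      = t₃*((1-t₂)*(D 1 - C 1) - (-t₁)*(B 1 - A 1)) := by
    linear_combination k11 - cX1 - m11 - t₃*dD1 - t₃*m11 + 2*t₃*m11 - 2*t₃*m21
  have E20 : (s₂-1/2)*(Q 0 - P 0) - (1-t₁)*(B 0 - A 0)
      = t₄*((-t₂)*(D 0 - C 0) - (1-t₁)*(B 0 - A 0)) := by
    linear_combination j10 - cY0 + bB0 + t₄*m20 + t₄*bB0 + 2*t₄*m10 - 2*t₄*m20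
  have E21 : (s₂-1/2)*(Q 1 - P 1) - (1-t₁)*(B 1 - A 1)
      = t₄*((-t₂)*(D 1 - C 1) - (1-t₁)*(B 1 - A 1)) := by
    linear_combination j11 - cY1 + bB1 + t₄*m21 + t₄*bB1 + 2*t₄*m11 - 2*t₄*m21
  have hx : (s₁-1/2)*((-t₁)*((B 0 - A 0)*(Q 1 - P 1)-(B 1 - A 1)*(Q 0 - P 0))
        + (1-t₂)*((Q 0 - P 0)*(D 1 - C 1)-(Q 1 - P 1)*(D 0 - C 0)))
      = (-t₁)*(1-t₂)*((B 0 - A 0)*(D 1 - C 1) - (B 1 - A 1)*(D 0 - C 0)) := by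
    linear_combination ((1-t₂)*(D 1 - C 1) - (-t₁)*(B 1 - A 1))*E10
      - ((1-t₂)*(D 0 - C 0) - (-t₁)*(B 0 - A 0))*E11
  have hy : (s₂-1/2)*((1-t₁)*((B 0 - A 0)*(Q 1 - P 1)-(B 1 - A 1)*(Q 0 - P 0))
        + (-t₂)*((Q 0 - P 0)*(D 1 - C 1)-(Q 1 - P 1)*(D 0 - C 0)))
      = (1-t₁)*(-t₂)*((B 0 - A 0)*(D 1 - C 1) - (B 1 - A 1)*(D 0 - C 0)) := by
    linear_combination ((-t₂)*(D 1 - C 1) - (1-t₁)*(B 1 - A 1))*E20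
      - ((-t₂)*(D 0 - C 0) - (1-t₁)*(B 0 - A 0))*E21
  have hxy : (s₁ - 1/2) + (s₂ - 1/2) = 0 :=
    butterfly_alg (M 0 - O 0) (M 1 - O 1) (Q 0 - P 0) (Q 1 - P 1)
      (B 0 - A 0) (B 1 - A 1) (D 0 - C 0) (D 1 - C 1)
      (-t₁) (1-t₁) (-t₂) (1-t₂) (s₁ - 1/2) (s₂ - 1/2)
      ((M 0 - O 0)^2 + (M 1 - O 1)^2 - r^2)
      hEneg heu habs habp hcds hcdp hK hx hy
  have hsumv : X + Y = M + M := by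
    ext i
    fin_cases i
    · show X 0 + Y 0 = M 0 + M 0
      linear_combination cX0 + cY0 + (Q 0 - P 0)*hxy
    · show X 1 + Y 1 = M 1 + M 1
      linear_combination cX1 + cY1 + (Q 1 - P 1)*hxy
  calc M = midpoint ℝ M M := (midpoint_self ℝ M).symm
    _ = midpoint ℝ X Y := by
        rw [midpoint_eq_smul_add, midpoint_eq_smul_add, hsumv]
end

section
/- Let f be a nonzero polynomial f(x, y) = a·x² + b·x·y + c·y² + d·x + e·y + g with zero set S ⊆ ℝ². Let P, Q ∈ S with P ≠ Q, let M = (P + Q)/2, and suppose the line ℓ through P and Q is not contained in S. Let A, B, C, D ∈ S be pairwise distinct points with no three of them collinear, none of them lying on ℓ, such that M lies on the line through A and B and on the line through C and D, and these two lines are distinct. Suppose X is a point lying on both the line through A and D and the line ℓ, and Y is a point lying on both the line through B and C and the line ℓ. Then M = (X + Y)/2. -/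
lemma prod_eq {p : ℝ × ℝ} {x y : ℝ} (h1 : p.1 = x) (h2 : p.2 = y) : p = (x, y) := by
  rw [← h1, ← h2]

lemma prod_eq' {p q : ℝ × ℝ} (h1 : p.1 = q.1) (h2 : p.2 = q.2) : p = q := by
  obtain ⟨p1, p2⟩ := p; obtain ⟨q1, q2⟩ := q
  simp_all

lemma coord_eq {X A B : ℝ × ℝ} {t : ℝ} (h : X = A + t • (B - A)) :
    X.1 = A.1 + t * (B.1 - A.1) ∧ X.2 = A.2 + t * (B.2 - A.2) := by
  constructor <;> rw [h] <;> simp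

lemma vec_eq {p M v : ℝ × ℝ} {r : ℝ} (h1 : p.1 = M.1 + r*v.1) (h2 : p.2 = M.2 + r*v.2) :
    p = r • v +ᵥ M := by
  have h : r • v +ᵥ M = (M.1 + r*v.1, M.2 + r*v.2) := by
    apply prod_eq <;> simp <;> ring
  rw [h]; exact prod_eq h1 h2

lemma eval_expand (f : Conic) (m1 m2 t v1 v2 : ℝ) :
    f.eval (m1 + t*v1, m2 + t*v2) =
      (f.a*v1^2 + f.b*v1*v2 + f.c*v2^2)*t^2
      + ((2*f.a*m1 + f.b*m2 + f.d)*v1 + (f.b*m1 + 2*f.c*m2 + f.e)*v2)*t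
      + f.eval (m1, m2) := by
  simp only [Conic.eval]
  ring

lemma mem_span_pair' {A B X : ℝ × ℝ} (h : X ∈ affineSpan ℝ ({A, B} : Set (ℝ × ℝ))) :
    ∃ t : ℝ, X = A + t • (B - A) := by
  have h2 : (X - A) +ᵥ A ∈ line[ℝ, A, B] := by simpa using h
  obtain ⟨r, hr⟩ := vadd_left_mem_affineSpan_pair.mp h2
  refine ⟨r, ?_⟩
  have : r • (B - A) = X - A := by simpa using hr
  rw [this]; abel

lemma butterfly_key (Av Bv Aw Bw C0 al be ga a b c d x y : ℝ)
    (hC0 : C0 ≠ 0) (hga : ga ≠ 0)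
    (hab : a ≠ b) (hcd : c ≠ d)
    (ea : Av*a^2 + Bv*a + C0 = 0) (eb : Av*b^2 + Bv*b + C0 = 0)
    (ec : Aw*c^2 + Bw*c + C0 = 0) (ed : Aw*d^2 + Bw*d + C0 = 0)
    (hid : Bw*al = Bv*be)
    (h1 : x*(d*be - a*al) = a*d*ga)
    (h2 : y*(c*be - b*al) = b*c*ga) :
    x + y = 0 := by
  have ha0 : a ≠ 0 := by rintro rfl; apply hC0; linear_combination ea
  have hb0 : b ≠ 0 := by rintro rfl; apply hC0; linear_combination eb
  have hc0 : c ≠ 0 := by rintro rfl; apply hC0; linear_combination ec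
  have hd0 : d ≠ 0 := by rintro rfl; apply hC0; linear_combination ed
  have hBv : Av*(a+b) + Bv = 0 := by
    have fac : (a - b) * (Av*(a+b) + Bv) = 0 := by linear_combination ea - eb
    rcases mul_eq_zero.1 fac with h | h
    · exact absurd (sub_eq_zero.1 h) hab
    · exact h
  have hBw : Aw*(c+d) + Bw = 0 := by
    have fac : (c - d) * (Aw*(c+d) + Bw) = 0 := by linear_combination ec - ed
    rcases mul_eq_zero.1 fac with h | h
    · exact absurd (sub_eq_zero.1 h) hcd
    · exact h
  have hPv : Av*(a*b) = C0 := by linear_combination (-1)*ea + a*hBv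
  have hPw : Aw*(c*d) = C0 := by linear_combination (-1)*ec + c*hBw
  have hAv : Av ≠ 0 := by rintro h; apply hC0; rw [← hPv, h]; ring
  have hAw : Aw ≠ 0 := by rintro h; apply hC0; rw [← hPw, h]; ring
  have den1 : d*be - a*al ≠ 0 := by
    intro h; rw [h, mul_zero] at h1
    exact (mul_ne_zero (mul_ne_zero ha0 hd0) hga) h1.symm
  have den2 : c*be - b*al ≠ 0 := by
    intro h; rw [h, mul_zero] at h2
    exact (mul_ne_zero (mul_ne_zero hb0 hc0) hga) h2.symm
  have main : (x + y) * ((d*be - a*al) * ((c*be - b*al) * (Av*Aw))) = 0 := by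
    linear_combination ((c*be - b*al)*Av*Aw) * h1 + ((d*be - a*al)*Av*Aw) * h2
      + (ga*be*(a+b)*Av) * hPw - (ga*al*(c+d)*Aw) * hPv
      + (ga*be*C0) * hBv - (ga*al*C0) * hBw + (ga*C0) * hid
  rcases mul_eq_zero.1 main with h | h
  · exact h
  · exact absurd h (mul_ne_zero den1 (mul_ne_zero den2 (mul_ne_zero hAv hAw)))

/-- **The generalized butterfly theorem for conics.** Let `S` be a conic (zero set
of a nonzero polynomial of degree at most two), `PQ` a chord of `S` with midpoint
`M` whose line `ℓ` is not contained in `S`, and let `AB` and `CD` be two other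
chords of `S` through `M`. If the lines `AD` and `BC` cut the line `ℓ` in points
`X` and `Y`, then `M` is the midpoint of `X` and `Y`. -/
theorem butterfly_theorem_conic
    (f : Conic) (hf : f.Nonzero)
    (P Q : ℝ × ℝ) (hfP : f.eval P = 0) (hfQ : f.eval Q = 0) (hPQ : P ≠ Q)
    (M : ℝ × ℝ) (hM : M = midpoint ℝ P Q)
    (hline : ¬ ((affineSpan ℝ ({P, Q} : Set (ℝ × ℝ)) : Set (ℝ × ℝ)) ⊆
      {p : ℝ × ℝ | f.eval p = 0}))
    (A B C D : ℝ × ℝ)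
    (hfA : f.eval A = 0) (hfB : f.eval B = 0) (hfC : f.eval C = 0) (hfD : f.eval D = 0)
    (hAB : A ≠ B) (hAC : A ≠ C) (hAD : A ≠ D)
    (hBC : B ≠ C) (hBD : B ≠ D) (hCD : C ≠ D)
    (hgen : NoThreeCollinear A B C D)
    (hAl : A ∉ affineSpan ℝ ({P, Q} : Set (ℝ × ℝ)))
    (hBl : B ∉ affineSpan ℝ ({P, Q} : Set (ℝ × ℝ)))
    (hCl : C ∉ affineSpan ℝ ({P, Q} : Set (ℝ × ℝ)))
    (hDl : D ∉ affineSpan ℝ ({P, Q} : Set (ℝ × ℝ)))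
    (hMAB : M ∈ affineSpan ℝ ({A, B} : Set (ℝ × ℝ)))
    (hMCD : M ∈ affineSpan ℝ ({C, D} : Set (ℝ × ℝ)))
    (hlines : affineSpan ℝ ({A, B} : Set (ℝ × ℝ)) ≠ affineSpan ℝ ({C, D} : Set (ℝ × ℝ)))
    (X Y : ℝ × ℝ)
    (hXAD : X ∈ affineSpan ℝ ({A, D} : Set (ℝ × ℝ)))
    (hXPQ : X ∈ affineSpan ℝ ({P, Q} : Set (ℝ × ℝ)))
    (hYBC : Y ∈ affineSpan ℝ ({B, C} : Set (ℝ × ℝ)))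
    (hYPQ : Y ∈ affineSpan ℝ ({P, Q} : Set (ℝ × ℝ))) :
    M = midpoint ℝ X Y := by
  -- coordinates of the midpoint
  have hM1 : M.1 = (P.1 + Q.1)/2 := by
    rw [hM, midpoint_eq_smul_add]; simp; ring
  have hM2 : M.2 = (P.2 + Q.2)/2 := by
    rw [hM, midpoint_eq_smul_add]; simp; ring
  -- parameters
  obtain ⟨s, hsM⟩ := mem_span_pair' hMAB
  obtain ⟨s', hsM'⟩ := mem_span_pair' hMCD
  obtain ⟨t, htX⟩ := mem_span_pair' hXAD
  obtain ⟨t', htY⟩ := mem_span_pair' hYBC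
  obtain ⟨r, hrX⟩ := mem_span_pair' hXPQ
  obtain ⟨r', hrY⟩ := mem_span_pair' hYPQ
  obtain ⟨hsM1, hsM2⟩ := coord_eq hsM
  obtain ⟨hsM'1, hsM'2⟩ := coord_eq hsM'
  obtain ⟨htX1, htX2⟩ := coord_eq htX
  obtain ⟨htY1, htY2⟩ := coord_eq htY
  obtain ⟨hrX1, hrX2⟩ := coord_eq hrX
  obtain ⟨hrY1, hrY2⟩ := coord_eq hrY
  -- clean coordinate descriptions
  have hA1 : A.1 = M.1 + (-s)*(B.1 - A.1) := by linear_combination -hsM1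
  have hA2 : A.2 = M.2 + (-s)*(B.2 - A.2) := by linear_combination -hsM2
  have hB1 : B.1 = M.1 + (1-s)*(B.1 - A.1) := by linear_combination -hsM1
  have hB2 : B.2 = M.2 + (1-s)*(B.2 - A.2) := by linear_combination -hsM2
  have hC1 : C.1 = M.1 + (-s')*(D.1 - C.1) := by linear_combination -hsM'1
  have hC2 : C.2 = M.2 + (-s')*(D.2 - C.2) := by linear_combination -hsM'2
  have hD1 : D.1 = M.1 + (1-s')*(D.1 - C.1) := by linear_combination -hsM'1
  have hD2 : D.2 = M.2 + (1-s')*(D.2 - C.2) := by linear_combination -hsM'2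
  have hP1 : P.1 = M.1 + (-1)*(Q.1 - M.1) := by linear_combination -2*hM1
  have hP2 : P.2 = M.2 + (-1)*(Q.2 - M.2) := by linear_combination -2*hM2
  have hQ1 : Q.1 = M.1 + (1:ℝ)*(Q.1 - M.1) := by ring
  have hQ2 : Q.2 = M.2 + (1:ℝ)*(Q.2 - M.2) := by ring
  have hX1 : X.1 = M.1 + (2*r-1)*(Q.1 - M.1) := by linear_combination hrX1 + (2*r-2)*hM1
  have hX2 : X.2 = M.2 + (2*r-1)*(Q.2 - M.2) := by linear_combination hrX2 + (2*r-2)*hM2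
  have hY1 : Y.1 = M.1 + (2*r'-1)*(Q.1 - M.1) := by linear_combination hrY1 + (2*r'-2)*hM1
  have hY2 : Y.2 = M.2 + (2*r'-1)*(Q.2 - M.2) := by linear_combination hrY2 + (2*r'-2)*hM2
  -- evaluations along the three directions
  have eA := eval_expand f M.1 M.2 (-s) (B.1-A.1) (B.2-A.2)
  rw [← prod_eq hA1 hA2, hfA] at eA
  have eB := eval_expand f M.1 M.2 (1-s) (B.1-A.1) (B.2-A.2)
  rw [← prod_eq hB1 hB2, hfB] at eB
  have eC := eval_expand f M.1 M.2 (-s') (D.1-C.1) (D.2-C.2)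
  rw [← prod_eq hC1 hC2, hfC] at eC
  have eD := eval_expand f M.1 M.2 (1-s') (D.1-C.1) (D.2-C.2)
  rw [← prod_eq hD1 hD2, hfD] at eD
  have eP := eval_expand f M.1 M.2 (-1) (Q.1-M.1) (Q.2-M.2)
  rw [← prod_eq hP1 hP2, hfP] at eP
  have eQ := eval_expand f M.1 M.2 (1) (Q.1-M.1) (Q.2-M.2)
  rw [← prod_eq hQ1 hQ2, hfQ] at eQ
  have hBu : (2*f.a*M.1 + f.b*M.2 + f.d)*(Q.1-M.1) + (f.b*M.1 + 2*f.c*M.2 + f.e)*(Q.2-M.2) = 0 := by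
    linear_combination (eP - eQ)/2
  -- the line PQ is not contained in the conic, so f.eval M ≠ 0
  have hC0 : f.eval (M.1, M.2) ≠ 0 := by
    intro h0
    apply hline
    intro p hp
    obtain ⟨ρ, hρ⟩ := mem_span_pair' hp
    obtain ⟨hρ1, hρ2⟩ := coord_eq hρ
    have hp1 : p.1 = M.1 + (2*ρ-1)*(Q.1 - M.1) := by linear_combination hρ1 + (2*ρ-2)*hM1
    have hp2 : p.2 = M.2 + (2*ρ-1)*(Q.2 - M.2) := by linear_combination hρ2 + (2*ρ-2)*hM2
    show f.eval p = 0
    rw [prod_eq hp1 hp2, eval_expand]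
    linear_combination (-((2*ρ-1)^2/2 - (2*ρ-1)/2)) * eP + (-((2*ρ-1)^2/2 + (2*ρ-1)/2)) * eQ
      + (1 - (2*ρ-1)^2) * h0
  -- the directions of AB and CD are independent
  have hga : (B.1-A.1)*(D.2-C.2) - (B.2-A.2)*(D.1-C.1) ≠ 0 := by
    intro hg
    apply hgen.1
    rw [collinear_iff_exists_forall_eq_smul_vadd]
    refine ⟨M, B - A, ?_⟩
    intro p hp
    simp only [Set.mem_insert_iff, Set.mem_singleton_iff] at hp
    have hCv : (C.1 - M.1)*(B.2-A.2) - (C.2-M.2)*(B.1-A.1) = 0 := by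
      linear_combination (B.2-A.2)*hC1 - (B.1-A.1)*hC2 + s'*hg
    have hvne : B.1 - A.1 ≠ 0 ∨ B.2 - A.2 ≠ 0 := by
      by_contra h
      push_neg at h
      exact hAB (by apply prod_eq' <;> linarith [h.1, h.2])
    rcases hp with rfl | rfl | rfl
    · exact ⟨-s, vec_eq (by simpa using hA1) (by simpa using hA2)⟩
    · exact ⟨1-s, vec_eq (by simpa using hB1) (by simpa using hB2)⟩
    · rcases hvne with h | h
      · refine ⟨(p.1 - M.1)/(B.1 - A.1), vec_eq ?_ ?_⟩
        · simp only [Prod.fst_sub]; field_simp; ring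
        · simp only [Prod.snd_sub]; field_simp; linear_combination -hCv
      · refine ⟨(p.2 - M.2)/(B.2 - A.2), vec_eq ?_ ?_⟩
        · simp only [Prod.fst_sub]; field_simp; linear_combination hCv
        · simp only [Prod.snd_sub]; field_simp; ring
  -- the two cross-product equations
  have h1 : (2*r-1)*((1-s')*((Q.1-M.1)*(D.2-C.2) - (Q.2-M.2)*(D.1-C.1))
        - (-s)*((Q.1-M.1)*(B.2-A.2) - (Q.2-M.2)*(B.1-A.1)))
      = (-s)*(1-s')*((B.1-A.1)*(D.2-C.2) - (B.2-A.2)*(D.1-C.1)) := by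
    linear_combination
      ((1-s')*(D.2-C.2) - (-s)*(B.2-A.2)) * (-hX1 + htX1 + (1-t)*hA1 + t*hD1)
      - ((1-s')*(D.1-C.1) - (-s)*(B.1-A.1)) * (-hX2 + htX2 + (1-t)*hA2 + t*hD2)
  have h2 : (2*r'-1)*((-s')*((Q.1-M.1)*(D.2-C.2) - (Q.2-M.2)*(D.1-C.1))
        - (1-s)*((Q.1-M.1)*(B.2-A.2) - (Q.2-M.2)*(B.1-A.1)))
      = (1-s)*(-s')*((B.1-A.1)*(D.2-C.2) - (B.2-A.2)*(D.1-C.1)) := by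
    linear_combination
      ((-s')*(D.2-C.2) - (1-s)*(B.2-A.2)) * (-hY1 + htY1 + (1-t')*hB1 + t'*hC1)
      - ((-s')*(D.1-C.1) - (1-s)*(B.1-A.1)) * (-hY2 + htY2 + (1-t')*hB2 + t'*hC2)
  -- the key identity from Bu = 0
  have hid : ((2*f.a*M.1 + f.b*M.2 + f.d)*(D.1-C.1) + (f.b*M.1 + 2*f.c*M.2 + f.e)*(D.2-C.2))
        * ((Q.1-M.1)*(B.2-A.2) - (Q.2-M.2)*(B.1-A.1))
      = ((2*f.a*M.1 + f.b*M.2 + f.d)*(B.1-A.1) + (f.b*M.1 + 2*f.c*M.2 + f.e)*(B.2-A.2))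
        * ((Q.1-M.1)*(D.2-C.2) - (Q.2-M.2)*(D.1-C.1)) := by
    linear_combination (-( (B.1-A.1)*(D.2-C.2) - (B.2-A.2)*(D.1-C.1) )) * hBu
  have hab : (-s : ℝ) ≠ 1 - s := by intro h; linarith
  have hcd : (-s' : ℝ) ≠ 1 - s' := by intro h; linarith
  have hxy : (2*r-1) + (2*r'-1) = 0 :=
    butterfly_key _ _ _ _ _ _ _ _ _ _ _ _ _ _ hC0 hga hab hcd eA.symm eB.symm eC.symm eD.symm hid h1 h2
  have g1 : X.1 + Y.1 = 2*M.1 := by linear_combination hX1 + hY1 + (Q.1-M.1)*hxy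
  have g2 : X.2 + Y.2 = 2*M.2 := by linear_combination hX2 + hY2 + (Q.2-M.2)*hxy
  rw [midpoint_eq_smul_add]
  apply Prod.ext <;> simp <;> linarith
end
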